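/- arXiv:1910.01732 — 6 statements merged into one kernel-verified Lean document; each statement's English description precedes it below -/
import Mathlib

section
/- Define f₁(u) := ∫₀¹ u^{-p-1}(1-u)^{p-1} · sin(πp)/(πp) dp for u ∈ (0,1). Then f₁(u) ~ 1/(u²·(log u)²) as u → 0⁺; that is, lim_{u→0⁺} f₁(u)·u²·(log u)² = 1. -/
open Real Filter MeasureTheory Set


noncomputable def hh (t : ℝ) : ℝ := Real.sin (π * t) / (π * (1 - t))

lemma hasDerivAt_g (y : ℝ) :
    HasDerivAt (fun x : ℝ => Real.sin x - x + x ^ 3 / 6) (Real.cos y - 1 + y ^ 2 / 2) y := by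
  have h := ((Real.hasDerivAt_sin y).sub (hasDerivAt_id y)).add ((hasDerivAt_pow 3 y).div_const 6)
  refine h.congr_deriv ?_
  simp
  ring

lemma sin_ge_sub_cube {x : ℝ} (hx : 0 ≤ x) : x - x ^ 3 / 6 ≤ Real.sin x := by
  have hmono : Monotone (fun x : ℝ => Real.sin x - x + x ^ 3 / 6) :=
    monotone_of_deriv_nonneg (fun y => (hasDerivAt_g y).differentiableAt)
      (fun y => by
        rw [(hasDerivAt_g y).deriv]
        nlinarith [Real.one_sub_sq_div_two_le_cos (x := y)])
  have h0 := hmono hx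
  simp only [Real.sin_zero] at h0
  nlinarith [h0]

lemma key_lower_half {t : ℝ} (h0 : 0 ≤ t) (h1 : t ≤ 1 / 2) :
    π * t * (1 - t) ≤ Real.sin (π * t) := by
  have h2 := _root_.sin_ge_sub_cube (x := π * t) (by positivity)
  have hπ : π ≤ 3.15 := by linarith [Real.pi_lt_d2]
  have hπ0 : 0 < π := Real.pi_pos
  have h6 : π ^ 2 * t ≤ 6 := by nlinarith
  have h7 : π * t ^ 2 * (π ^ 2 * t) ≤ π * t ^ 2 * 6 :=
    mul_le_mul_of_nonneg_left h6 (by positivity)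
  nlinarith [h7]

lemma key_lower {t : ℝ} (h0 : 0 ≤ t) (h1 : t ≤ 1) :
    π * t * (1 - t) ≤ Real.sin (π * t) := by
  rcases le_total t (1 / 2) with hts | hts
  · exact key_lower_half h0 hts
  · have h2 := key_lower_half (t := 1 - t) (by linarith) (by linarith)
    have h3 : Real.sin (π * (1 - t)) = Real.sin (π * t) := by
      rw [mul_one_sub, Real.sin_pi_sub]
    rw [h3] at h2
    nlinarith [h2]
lemma hh_nonneg {t : ℝ} (h0 : 0 ≤ t) (h1 : t ≤ 1) : 0 ≤ hh t := by
  have hs : 0 ≤ Real.sin (π * t) := by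
    apply Real.sin_nonneg_of_nonneg_of_le_pi (by positivity)
    nlinarith [Real.pi_pos]
  have hd : 0 ≤ π * (1 - t) := by nlinarith [Real.pi_pos]
  exact div_nonneg hs hd

lemma hh_le_one {t : ℝ} (h0 : 0 ≤ t) (h1 : t ≤ 1) : hh t ≤ 1 := by
  rcases eq_or_lt_of_le h1 with rfl | h1
  · simp [hh]
  · rw [hh, div_le_one (by nlinarith [Real.pi_pos])]
    have h3 : Real.sin (π * t) = Real.sin (π * (1 - t)) := by
      rw [mul_one_sub, Real.sin_pi_sub]
    rw [h3]
    exact Real.sin_le (by nlinarith [Real.pi_pos])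

lemma hh_ge {t : ℝ} (h0 : 0 ≤ t) (h1 : t < 1) : t ≤ hh t := by
  rw [hh, le_div_iff₀ (by nlinarith [Real.pi_pos])]
  calc t * (π * (1 - t)) = π * t * (1 - t) := by ring
  _ ≤ Real.sin (π * t) := key_lower h0 h1.le

lemma hh_le {t : ℝ} (h0 : 0 ≤ t) (h1 : t ≤ 1) : hh t ≤ t + 2 * t ^ 2 := by
  rcases le_total t (1 / 2) with hts | hts
  · have h1' : t < 1 := by linarith
    have hd : 0 < π * (1 - t) := by nlinarith [Real.pi_pos]
    have hstep : hh t ≤ t / (1 - t) := by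
      rw [hh, div_le_div_iff₀ hd (by linarith)]
      have := Real.sin_le (x := π * t) (by positivity)
      nlinarith [Real.pi_pos]
    refine hstep.trans ?_
    rw [div_le_iff₀ (by linarith)]
    nlinarith [sq_nonneg t]
  · refine (hh_le_one h0 h1).trans ?_
    nlinarith [sq_nonneg t]

lemma hh_meas : Measurable hh := by
  apply Measurable.div
  · exact (measurable_id.const_mul π).sin
  · exact (measurable_const.sub measurable_id).const_mul π

lemma intInt {M : ℝ} (hM : 0 ≤ M) :
    IntervalIntegrable (fun t => Real.exp (-t * M) * hh t) volume 0 1 := by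
  rw [intervalIntegrable_iff, Set.uIoc_of_le (zero_le_one)]
  apply MeasureTheory.Measure.integrableOn_of_bounded (M := 1)
  · simp [Real.volume_Ioc]
  · exact ((measurable_id.neg.mul_const M).exp.mul hh_meas).aestronglyMeasurable
  · filter_upwards [MeasureTheory.ae_restrict_mem measurableSet_Ioc] with t ht
    have h1 : 0 ≤ hh t := hh_nonneg ht.1.le ht.2
    have h2 : hh t ≤ 1 := hh_le_one ht.1.le ht.2
    have h3 : Real.exp (-t * M) ≤ 1 := by
      rw [Real.exp_le_one_iff]
      nlinarith [ht.1, hM]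
    rw [Real.norm_eq_abs, abs_of_nonneg (by positivity)]
    nlinarith [Real.exp_pos (-t * M)]
lemma J1_eq {M : ℝ} (hM : 0 < M) :
    ∫ t in (0:ℝ)..1, Real.exp (-t * M) * t
      = 1 / M ^ 2 - (1 / M + 1 / M ^ 2) * Real.exp (-M) := by
  have key : ∀ t ∈ Set.uIcc (0:ℝ) 1,
      HasDerivAt (fun t : ℝ => -(t / M + 1 / M ^ 2) * Real.exp (-t * M))
        (Real.exp (-t * M) * t) t := by
    intro t _
    have h1 : HasDerivAt (fun t : ℝ => -(t / M + 1 / M ^ 2)) (-(1 / M)) t :=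
      (((hasDerivAt_id t).div_const M).add_const (1 / M ^ 2)).neg
    have h2 : HasDerivAt (fun t : ℝ => Real.exp (-t * M)) (Real.exp (-t * M) * (-1 * M)) t :=
      ((hasDerivAt_id t).neg.mul_const M).exp
    have h3 := h1.mul h2
    refine h3.congr_deriv ?_
    field_simp
    ring
  have hint : IntervalIntegrable (fun t => Real.exp (-t * M) * t) volume 0 1 := by
    apply Continuous.intervalIntegrable
    exact (Real.continuous_exp.comp (continuous_id.neg.mul continuous_const)).mul continuous_id
  rw [intervalIntegral.integral_eq_sub_of_hasDerivAt key hint]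
  simp only [neg_mul, one_mul, zero_div, zero_add, neg_zero, Real.exp_zero, mul_one, zero_mul]
  ring

lemma J2_eq {M : ℝ} (hM : 0 < M) :
    ∫ t in (0:ℝ)..1, Real.exp (-t * M) * t ^ 2
      = 2 / M ^ 3 - (1 / M + 2 / M ^ 2 + 2 / M ^ 3) * Real.exp (-M) := by
  have key : ∀ t ∈ Set.uIcc (0:ℝ) 1,
      HasDerivAt (fun t : ℝ => -(t ^ 2 / M + 2 * t / M ^ 2 + 2 / M ^ 3) * Real.exp (-t * M))
        (Real.exp (-t * M) * t ^ 2) t := by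
    intro t _
    have h1 : HasDerivAt (fun t : ℝ => -(t ^ 2 / M + 2 * t / M ^ 2 + 2 / M ^ 3))
        (-(2 * t / M + 2 / M ^ 2)) t := by
      have ha : HasDerivAt (fun t : ℝ => t ^ 2 / M) (2 * t / M) t := by
        simpa using (hasDerivAt_pow 2 t).div_const M
      have hb : HasDerivAt (fun t : ℝ => 2 * t / M ^ 2) (2 / M ^ 2) t := by
        simpa [mul_div_assoc] using (((hasDerivAt_id t).const_mul 2).div_const (M ^ 2))
      exact ((ha.add hb).add_const (2 / M ^ 3)).neg
    have h2 : HasDerivAt (fun t : ℝ => Real.exp (-t * M)) (Real.exp (-t * M) * (-1 * M)) t :=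
      ((hasDerivAt_id t).neg.mul_const M).exp
    have h3 := h1.mul h2
    refine h3.congr_deriv ?_
    field_simp
    ring
  have hint : IntervalIntegrable (fun t => Real.exp (-t * M) * t ^ 2) volume 0 1 := by
    apply Continuous.intervalIntegrable
    exact (Real.continuous_exp.comp (continuous_id.neg.mul continuous_const)).mul (continuous_pow 2)
  rw [intervalIntegral.integral_eq_sub_of_hasDerivAt key hint]
  simp only [neg_mul, one_mul, Real.exp_zero, mul_one, zero_mul, zero_div, zero_add, neg_zero,
    zero_pow, mul_zero]
  ring
lemma poly_int {M : ℝ} : IntervalIntegrable (fun t => Real.exp (-t * M) * (t + 2 * t ^ 2)) volume 0 1 := by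
  apply Continuous.intervalIntegrable
  exact (Real.continuous_exp.comp (continuous_id.neg.mul continuous_const)).mul
    (continuous_id.add (continuous_const.mul (continuous_pow 2)))

lemma lin_int {M : ℝ} : IntervalIntegrable (fun t => Real.exp (-t * M) * t) volume 0 1 := by
  apply Continuous.intervalIntegrable
  exact (Real.continuous_exp.comp (continuous_id.neg.mul continuous_const)).mul continuous_id

lemma sq_int {M : ℝ} : IntervalIntegrable (fun t => Real.exp (-t * M) * t ^ 2) volume 0 1 := by
  apply Continuous.intervalIntegrable
  exact (Real.continuous_exp.comp (continuous_id.neg.mul continuous_const)).mul (continuous_pow 2)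

lemma I_ge {M : ℝ} (hM : 0 < M) :
    (∫ t in (0:ℝ)..1, Real.exp (-t * M) * t)
      ≤ ∫ t in (0:ℝ)..1, Real.exp (-t * M) * hh t := by
  apply intervalIntegral.integral_mono_ae_restrict zero_le_one lin_int (intInt hM.le)
  have h1 : ∀ᵐ t : ℝ, t ≠ 1 := by
    rw [MeasureTheory.ae_iff]
    have : {t : ℝ | ¬ t ≠ 1} = {1} := by ext x; simp
    rw [this]
    exact Real.volume_singleton
  filter_upwards [MeasureTheory.ae_restrict_of_ae h1,
    MeasureTheory.ae_restrict_mem measurableSet_Icc] with t ht hmem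
  have := hh_ge hmem.1 (lt_of_le_of_ne hmem.2 ht)
  have he := Real.exp_pos (-t * M)
  nlinarith

lemma I_le {M : ℝ} (hM : 0 < M) :
    (∫ t in (0:ℝ)..1, Real.exp (-t * M) * hh t)
      ≤ (∫ t in (0:ℝ)..1, Real.exp (-t * M) * t) + 2 * ∫ t in (0:ℝ)..1, Real.exp (-t * M) * t ^ 2 := by
  have h1 : (∫ t in (0:ℝ)..1, Real.exp (-t * M) * hh t)
      ≤ ∫ t in (0:ℝ)..1, Real.exp (-t * M) * (t + 2 * t ^ 2) := by
    apply intervalIntegral.integral_mono_on zero_le_one (intInt hM.le) poly_int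
    intro t ht
    have := hh_le ht.1 ht.2
    have he := Real.exp_pos (-t * M)
    nlinarith
  refine h1.trans_eq ?_
  rw [← intervalIntegral.integral_const_mul, ← intervalIntegral.integral_add lin_int]
  · congr 1; ext t; ring
  · exact IntervalIntegrable.const_mul sq_int 2
lemma A_tendsto :
    Filter.Tendsto (fun M : ℝ => M ^ 2 * ∫ t in (0:ℝ)..1, Real.exp (-t * M) * hh t)
      Filter.atTop (nhds 1) := by
  have hlow : Filter.Tendsto (fun M : ℝ => 1 - (M + 1) * Real.exp (-M)) Filter.atTop (nhds 1) := by
    have h1 : Filter.Tendsto (fun M : ℝ => (M + 1) * Real.exp (-M)) Filter.atTop (nhds 0) := by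
      have ha := Real.tendsto_pow_mul_exp_neg_atTop_nhds_zero 1
      have hb := Real.tendsto_pow_mul_exp_neg_atTop_nhds_zero 0
      have := ha.add hb
      simp only [pow_one, pow_zero, one_mul, add_zero] at this
      refine this.congr (fun M => by ring)
    simpa using tendsto_const_nhds.sub h1
  have hup : Filter.Tendsto (fun M : ℝ => 1 - (M + 1) * Real.exp (-M) + 4 / M)
      Filter.atTop (nhds 1) := by
    have h2 : Filter.Tendsto (fun M : ℝ => 4 / M) Filter.atTop (nhds 0) :=
      Filter.Tendsto.const_div_atTop Filter.tendsto_id 4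
    simpa using hlow.add h2
  apply tendsto_of_tendsto_of_tendsto_of_le_of_le' hlow hup
  · filter_upwards [Filter.eventually_gt_atTop (0:ℝ)] with M hM
    have h1 := I_ge hM
    have h2 : M ^ 2 * (∫ t in (0:ℝ)..1, Real.exp (-t * M) * t)
        = 1 - (M + 1) * Real.exp (-M) := by
      rw [J1_eq hM]; field_simp
    nlinarith [sq_nonneg M, mul_le_mul_of_nonneg_left h1 (sq_nonneg M)]
  · filter_upwards [Filter.eventually_gt_atTop (0:ℝ)] with M hM
    have h1 := I_le hM
    have h2 : M ^ 2 * ((∫ t in (0:ℝ)..1, Real.exp (-t * M) * t)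
        + 2 * ∫ t in (0:ℝ)..1, Real.exp (-t * M) * t ^ 2)
        ≤ 1 - (M + 1) * Real.exp (-M) + 4 / M := by
      rw [J1_eq hM, J2_eq hM]
      have he : 0 < Real.exp (-M) := Real.exp_pos _
      have h3 : 0 < M ^ 2 := by positivity
      have h4 : 0 < M ^ 3 := by positivity
      have expand : M ^ 2 * (1 / M ^ 2 - (1 / M + 1 / M ^ 2) * Real.exp (-M)
            + 2 * (2 / M ^ 3 - (1 / M + 2 / M ^ 2 + 2 / M ^ 3) * Real.exp (-M)))
          = 1 - (M + 1) * Real.exp (-M) + 4 / M - (2 * M + 4 + 4 / M) * Real.exp (-M) := by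
        field_simp
        ring
      rw [expand]
      have hpos : 0 ≤ (2 * M + 4 + 4 / M) * Real.exp (-M) := by positivity
      linarith
    refine le_trans ?_ h2
    exact mul_le_mul_of_nonneg_left h1 (sq_nonneg M)
noncomputable def Mf (u : ℝ) : ℝ := Real.log (1 - u) - Real.log u

lemma log1u_tendsto : Filter.Tendsto (fun u : ℝ => Real.log (1 - u))
    (nhdsWithin 0 (Set.Ioi 0)) (nhds 0) := by
  have hc : Filter.Tendsto (fun u : ℝ => Real.log (1 - u)) (nhds 0) (nhds 0) := by
    have : Filter.Tendsto (fun u : ℝ => (1:ℝ) - u) (nhds 0) (nhds 1) := by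
      simpa using ((tendsto_const_nhds (x := (1:ℝ))).sub (tendsto_id (x := nhds (0:ℝ))))
    have hl := (Real.continuousAt_log (x := 1) one_ne_zero).tendsto
    simpa [Real.log_one, Function.comp_def] using hl.comp this
  exact hc.mono_left nhdsWithin_le_nhds

lemma Mf_tendsto : Filter.Tendsto Mf (nhdsWithin 0 (Set.Ioi 0)) Filter.atTop := by
  have h2 : Filter.Tendsto (fun u : ℝ => -Real.log u) (nhdsWithin 0 (Set.Ioi 0)) Filter.atTop :=
    tendsto_neg_atTop_iff.mpr Real.tendsto_log_nhdsGT_zero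
  exact log1u_tendsto.add_atTop h2

lemma ratio_tendsto : Filter.Tendsto (fun u : ℝ => (Real.log u / Mf u) ^ 2)
    (nhdsWithin 0 (Set.Ioi 0)) (nhds 1) := by
  have s1 : Filter.Tendsto (fun u : ℝ => Real.log (1 - u) / Real.log u)
      (nhdsWithin 0 (Set.Ioi 0)) (nhds 0) := by
    have h2 : Filter.Tendsto (fun u : ℝ => -Real.log u) (nhdsWithin 0 (Set.Ioi 0)) Filter.atTop :=
      tendsto_neg_atTop_iff.mpr Real.tendsto_log_nhdsGT_zero
    have h3 := log1u_tendsto.div_atTop h2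
    have h4 := h3.neg
    simp only [neg_zero] at h4
    refine h4.congr (fun u => by rw [div_neg, neg_neg])
  have s2 : Filter.Tendsto (fun u : ℝ => Mf u / Real.log u)
      (nhdsWithin 0 (Set.Ioi 0)) (nhds (-1)) := by
    have h5 := s1.sub (tendsto_const_nhds (x := (1:ℝ)))
    simp only [zero_sub] at h5
    apply h5.congr'
    filter_upwards [Ioo_mem_nhdsGT_of_mem (by norm_num : (0:ℝ) ∈ Set.Ico (0:ℝ) 1)] with u hu
    have hlu : Real.log u ≠ 0 := ne_of_lt (Real.log_neg hu.1 hu.2)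
    rw [Mf, sub_div, div_self hlu]
  have s3 := (s2.inv₀ (by norm_num)).pow 2
  norm_num at s3
  exact s3
/-- `f₁(u) = ∫₀¹ u^{-p-1}(1-u)^{p-1} sin(πp)/(πp) dp`. -/
noncomputable def f1 (u : ℝ) : ℝ :=
  ∫ p in (0:ℝ)..1, u ^ (-p - 1) * (1 - u) ^ (p - 1) * (Real.sin (π * p) / (π * p))

/-- `f₁(u) ~ 1/(u² log² u)` as `u → 0⁺`. -/
theorem stmt7 :
    Filter.Tendsto (fun u : ℝ => f1 u * u ^ 2 * (Real.log u) ^ 2)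
      (nhdsWithin 0 (Set.Ioi 0)) (nhds 1) := by
  have key := ratio_tendsto.mul (A_tendsto.comp Mf_tendsto)
  rw [mul_one] at key
  refine Filter.Tendsto.congr' ?_ key
  filter_upwards [Ioo_mem_nhdsGT_of_mem
    (by norm_num : (0:ℝ) ∈ Set.Ico (0:ℝ) (1/2))] with u hu
  obtain ⟨hu0, hu2⟩ := hu
  have hu1 : u < 1 := by linarith
  have h1u : (0:ℝ) < 1 - u := by linarith
  have hM : 0 < Mf u := by
    rw [Mf, sub_pos]; exact Real.log_lt_log hu0 (by linarith)
  have hpt : ∀ t : ℝ, u ^ (-(1 - t) - 1) * (1 - u) ^ ((1 - t) - 1)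
      * (Real.sin (π * (1 - t)) / (π * (1 - t)))
      = u ^ (-(2:ℝ)) * (Real.exp (-t * Mf u) * hh t) := by
    intro t
    have e1 : u ^ (-(1 - t) - 1 : ℝ) = u ^ (-(2:ℝ)) * Real.exp (Real.log u * t) := by
      rw [show (-(1 - t) - 1 : ℝ) = -2 + t by ring, Real.rpow_add hu0,
        Real.rpow_def_of_pos hu0 t]
    have e2 : (1 - u) ^ ((1 - t) - 1 : ℝ) = Real.exp (Real.log (1 - u) * -t) := by
      rw [show ((1 - t) - 1 : ℝ) = -t by ring, Real.rpow_def_of_pos h1u]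
    have e3 : Real.sin (π * (1 - t)) = Real.sin (π * t) := by
      rw [mul_one_sub, Real.sin_pi_sub]
    have e4 : Real.exp (Real.log u * t) * Real.exp (Real.log (1 - u) * -t)
        = Real.exp (-t * Mf u) := by
      rw [← Real.exp_add, Mf]; ring_nf
    rw [e1, e2, e3]
    simp only [hh]
    rw [← e4]
    ring
  have hsub := intervalIntegral.integral_comp_sub_left (a := 0) (b := 1)
    (fun p => u ^ (-p - 1) * (1 - u) ^ (p - 1) * (Real.sin (π * p) / (π * p))) 1
  simp only [sub_self, sub_zero] at hsub
  have hI : f1 u = u ^ (-(2:ℝ)) * ∫ t in (0:ℝ)..1, Real.exp (-t * Mf u) * hh t := by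
    rw [f1, ← hsub, ← intervalIntegral.integral_const_mul]
    apply intervalIntegral.integral_congr
    intro t _
    simpa using hpt t
  have hu2' : u ^ (-(2:ℝ)) = (u ^ 2)⁻¹ := by
    rw [Real.rpow_neg hu0.le, show ((2:ℝ) = ((2:ℕ):ℝ)) by norm_num, Real.rpow_natCast]
  simp only [Function.comp]
  rw [hI, hu2']
  have hu0' : u ≠ 0 := ne_of_gt hu0
  have hM' : Mf u ≠ 0 := ne_of_gt hM
  field_simp
end

section
/- Define f₁(u) := ∫₀¹ u^{-p-1}(1-u)^{p-1} · sin(πp)/(πp) dp for u ∈ (0,1). Then f₁(u) ~ -1/((1-u)·log(1-u)) as u → 1⁻; that is, lim_{u→1⁻} f₁(u)·(1-u)·log(1-u) = -1. -/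
set_option maxHeartbeats 1000000

open Real intervalIntegral MeasureTheory

lemma key_exp {L : ℝ} (hL : L ≠ 0) (b : ℝ) :
    ∫ p in (0:ℝ)..b, Real.exp (L * p) = (Real.exp (L * b) - 1) / L := by
  rw [integral_comp_mul_left (fun x => Real.exp x) hL]
  simp [integral_exp, smul_eq_mul]
  ring

lemma sq_div_four_le_exp {x : ℝ} (hx : 0 ≤ x) : x ^ 2 / 4 ≤ Real.exp x := by
  have h : x / 2 + 1 ≤ Real.exp (x / 2) := Real.add_one_le_exp (x / 2)
  have h2 : Real.exp (x/2) * Real.exp (x/2) = Real.exp x := by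
    rw [← Real.exp_add]; ring_nf
  nlinarith [mul_le_mul h h (by linarith) (Real.exp_nonneg (x/2))]

lemma ptw_bound {L p : ℝ} (hL : L < 0) (hp : 0 ≤ p) :
    p ^ 2 * Real.exp (L * p) ≤ 4 / L ^ 2 := by
  have hE : (0:ℝ) < Real.exp (L * p) := Real.exp_pos _
  have h := sq_div_four_le_exp (x := -(L * p)) (by nlinarith)
  have h1 : (L * p) ^ 2 / 4 * Real.exp (L * p) ≤ 1 := by
    have := mul_le_mul_of_nonneg_right h (Real.exp_nonneg (L * p))
    rwa [← Real.exp_add, neg_add_cancel, Real.exp_zero, neg_sq] at this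
  rw [le_div_iff₀ (by nlinarith : (0:ℝ) < L ^ 2)]
  nlinarith

lemma main_est {u : ℝ} (hu1 : 1/2 < u) (hu2 : u < 1) :
    u ^ (-2:ℝ) * (Real.exp (Real.log (1-u)) - 1) ≤
      (∫ p in (0:ℝ)..1, u ^ (-p - 1) * (1 - u) ^ (p - 1) * (Real.sin (π * p) / (π * p)))
        * (1 - u) * Real.log (1 - u) ∧
    (∫ p in (0:ℝ)..1, u ^ (-p - 1) * (1 - u) ^ (p - 1) * (Real.sin (π * p) / (π * p)))
        * (1 - u) * Real.log (1 - u) ≤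
      (Real.exp (Real.log (1-u)/4) - 1) + π^2/4 * (-(Real.log (1-u)))⁻¹ := by
  have hu0 : (0:ℝ) < u := by linarith
  have hε : (0:ℝ) < 1 - u := by linarith
  have hε1 : 1 - u < 1 := by linarith
  set L : ℝ := Real.log (1 - u) with hLdef
  have hL : L < 0 := Real.log_neg hε hε1
  have hLne : L ≠ 0 := ne_of_lt hL
  set G : ℝ → ℝ := fun p => u ^ (-p - 1) * Real.exp (L * p) * (Real.sin (π * p) / (π * p))
    with hGdef
  -- sinc bounds
  have hs0 : ∀ p : ℝ, 0 ≤ p → p ≤ 1 → 0 ≤ Real.sin (π * p) / (π * p) := by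
    intro p h0 h1
    exact div_nonneg (Real.sin_nonneg_of_nonneg_of_le_pi (by positivity)
      (by nlinarith [Real.pi_pos])) (by positivity)
  have hs1 : ∀ p : ℝ, 0 ≤ p → Real.sin (π * p) / (π * p) ≤ 1 := fun p h0 =>
    div_le_one_of_le₀ (Real.sin_le (by positivity)) (by positivity)
  have hGnn : ∀ p : ℝ, 0 ≤ p → p ≤ 1 → 0 ≤ G p := fun p h0 h1 =>
    mul_nonneg (mul_nonneg (Real.rpow_pos_of_pos hu0 _).le (Real.exp_nonneg _)) (hs0 p h0 h1)
  -- Step A : rewrite f1 u * (1-u)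
  have hA : (∫ p in (0:ℝ)..1, u ^ (-p - 1) * (1 - u) ^ (p - 1) * (Real.sin (π * p) / (π * p)))
      * (1 - u) = ∫ p in (0:ℝ)..1, G p := by
    rw [← intervalIntegral.integral_mul_const]
    refine integral_congr fun p _ => ?_
    have hrw : (1 - u) ^ (p - 1) * (1 - u) = Real.exp (L * p) := by
      rw [Real.rpow_sub hε, Real.rpow_one, div_mul_cancel₀ _ hε.ne', Real.rpow_def_of_pos hε]
    rw [hGdef]
    dsimp only
    rw [← hrw]; ring
  -- continuity facts
  have hcrpow : Continuous fun p : ℝ => u ^ (-p - 1) := by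
    have : (fun p : ℝ => u ^ (-p - 1)) = fun p => Real.exp (Real.log u * (-p - 1)) :=
      funext fun p => Real.rpow_def_of_pos hu0 _
    rw [this]
    exact Real.continuous_exp.comp (continuous_const.mul (continuous_id.neg.sub continuous_const))
  have hcexp : Continuous fun p : ℝ => Real.exp (L * p) :=
    Real.continuous_exp.comp (continuous_const.mul continuous_id)
  -- integrability of G on [0,1]
  have hGint : IntervalIntegrable G volume 0 1 := by
    rw [intervalIntegrable_iff, Set.uIoc_of_le (by norm_num : (0:ℝ) ≤ 1)]
    refine Integrable.mono' (g := fun _ => u ^ (-2:ℝ))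
      (integrableOn_const measure_Ioc_lt_top.ne) ?_ ?_
    · refine ContinuousOn.aestronglyMeasurable ?_ measurableSet_Ioc
      refine ((hcrpow.continuousOn.mul hcexp.continuousOn).mul
        (ContinuousOn.div (by fun_prop) (by fun_prop) fun p hp => ?_))
      exact ne_of_gt (by have := hp.1; positivity)
    · filter_upwards [ae_restrict_mem measurableSet_Ioc] with p hp
      have h0 : (0:ℝ) ≤ p := hp.1.le
      have h1 : p ≤ 1 := hp.2
      rw [Real.norm_eq_abs, abs_of_nonneg (hGnn p h0 h1)]
      have e1 : u ^ (-p - 1) ≤ u ^ (-2:ℝ) :=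
        Real.rpow_le_rpow_of_exponent_ge hu0 hu2.le (by linarith)
      have e2 : Real.exp (L * p) ≤ 1 := by
        rw [← Real.exp_zero]; exact Real.exp_le_exp.mpr (by nlinarith)
      have e3 := hs1 p h0
      have e4 := hs0 p h0 h1
      have e5 : (0:ℝ) < u ^ (-p - 1) := Real.rpow_pos_of_pos hu0 _
      have e6 : (0:ℝ) ≤ Real.exp (L * p) := Real.exp_nonneg _
      calc u ^ (-p-1) * Real.exp (L*p) * (Real.sin (π*p)/(π*p))
          ≤ u ^ (-p-1) * 1 * 1 := by
            apply mul_le_mul (mul_le_mul le_rfl e2 e6 e5.le) e3 e4 (by positivity)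
        _ ≤ u ^ (-2:ℝ) := by rw [mul_one, mul_one]; exact e1
  -- Step C : upper bound for the integral
  have hint2 : IntervalIntegrable (fun p => u ^ (-2:ℝ) * Real.exp (L * p)) volume 0 1 :=
    (continuous_const.mul hcexp).intervalIntegrable 0 1
  have hC : (∫ p in (0:ℝ)..1, G p) ≤ u ^ (-2:ℝ) * ((Real.exp L - 1)/L) := by
    have hmono : (∫ p in (0:ℝ)..1, G p) ≤ ∫ p in (0:ℝ)..1, u ^ (-2:ℝ) * Real.exp (L * p) := by
      refine integral_mono_on (by norm_num) hGint hint2 fun p hp => ?_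
      have e1 : u ^ (-p - 1) ≤ u ^ (-2:ℝ) :=
        Real.rpow_le_rpow_of_exponent_ge hu0 hu2.le (by linarith [hp.2])
      have e3 := hs1 p hp.1
      calc u ^ (-p-1) * Real.exp (L*p) * (Real.sin (π*p)/(π*p))
          ≤ u ^ (-p-1) * Real.exp (L*p) * 1 :=
            mul_le_mul_of_nonneg_left e3 (by positivity)
        _ = u ^ (-p-1) * Real.exp (L*p) := mul_one _
        _ ≤ u ^ (-2:ℝ) * Real.exp (L*p) :=
            mul_le_mul_of_nonneg_right e1 (Real.exp_nonneg _)
    rw [intervalIntegral.integral_const_mul, key_exp hLne, mul_one] at hmono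
    exact hmono
  -- Step D : lower bound for the integral
  have hsub1 : Set.uIcc (0:ℝ) (1/4) ⊆ Set.uIcc (0:ℝ) 1 := by
    rw [Set.uIcc_of_le (by norm_num : (0:ℝ) ≤ 1/4), Set.uIcc_of_le (by norm_num : (0:ℝ) ≤ 1)]
    exact Set.Icc_subset_Icc le_rfl (by norm_num)
  have hsub2 : Set.uIcc (1/4:ℝ) 1 ⊆ Set.uIcc (0:ℝ) 1 := by
    rw [Set.uIcc_of_le (by norm_num : (1/4:ℝ) ≤ 1), Set.uIcc_of_le (by norm_num : (0:ℝ) ≤ 1)]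
    exact Set.Icc_subset_Icc (by norm_num) le_rfl
  have hGint1 := hGint.mono_set hsub1
  have hGint2 := hGint.mono_set hsub2
  have hsplit : (∫ p in (0:ℝ)..1, G p)
      = (∫ p in (0:ℝ)..(1/4), G p) + ∫ p in (1/4:ℝ)..1, G p :=
    (integral_add_adjacent_intervals hGint1 hGint2).symm
  have htail : 0 ≤ ∫ p in (1/4:ℝ)..1, G p :=
    integral_nonneg (by norm_num) fun p hp => hGnn p (le_trans (by norm_num) hp.1) hp.2
  have hlowint : IntervalIntegrable (fun p => Real.exp (L*p) * (1 - π^2/4*p^2)) volume 0 (1/4) :=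
    (hcexp.mul (continuous_const.sub (continuous_const.mul (continuous_pow 2)))).intervalIntegrable 0 (1/4)
  have hhead : (∫ p in (0:ℝ)..(1/4), Real.exp (L*p)*(1 - π^2/4*p^2))
      ≤ ∫ p in (0:ℝ)..(1/4), G p := by
    refine integral_mono_ae_restrict (by norm_num) hlowint hGint1 ?_
    have h0 : ∀ᵐ (p : ℝ), p ≠ 0 := by
      rw [MeasureTheory.ae_iff]; simpa using MeasureTheory.measure_singleton (0:ℝ)
    filter_upwards [ae_restrict_mem measurableSet_Icc, ae_restrict_of_ae h0] with p hp hp0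
    have hppos : 0 < p := lt_of_le_of_ne hp.1 (Ne.symm hp0)
    have hππ : (0:ℝ) < π * p := by positivity
    have hπ1 : π * p ≤ 1 := by nlinarith [Real.pi_le_four, hp.2, hppos.le]
    have hsin := Real.sin_gt_sub_cube hππ
    have hs : 1 - π^2/4*p^2 ≤ Real.sin (π*p)/(π*p) := by
      rw [le_div_iff₀ hππ]; nlinarith [hsin, pow_pos hππ 3]
    have hu1' : 1 ≤ u ^ (-p-1) :=
      Real.one_le_rpow_of_pos_of_le_one_of_nonpos hu0 hu2.le (by linarith)
    have hsnn : 0 ≤ Real.sin (π*p)/(π*p) := hs0 p hppos.le (by linarith [hp.2])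
    show Real.exp (L*p) * (1 - π^2/4*p^2)
        ≤ u ^ (-p-1) * Real.exp (L*p) * (Real.sin (π*p)/(π*p))
    calc Real.exp (L*p) * (1 - π^2/4*p^2) ≤ Real.exp (L*p) * (Real.sin (π*p)/(π*p)) :=
          mul_le_mul_of_nonneg_left hs (Real.exp_nonneg _)
      _ ≤ u ^ (-p-1) * (Real.exp (L*p) * (Real.sin (π*p)/(π*p))) :=
          le_mul_of_one_le_left (mul_nonneg (Real.exp_nonneg _) hsnn) hu1'
      _ = u ^ (-p-1) * Real.exp (L*p) * (Real.sin (π*p)/(π*p)) := (mul_assoc _ _ _).symm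
  have hJ : (∫ p in (0:ℝ)..(1/4), p^2 * Real.exp (L*p)) ≤ 1/L^2 := by
    have hm := integral_mono_on (by norm_num : (0:ℝ) ≤ 1/4)
      (((continuous_pow 2).mul hcexp).intervalIntegrable 0 (1/4))
      (_root_.intervalIntegrable_const (μ := volume) (c := 4/L^2)) (fun p hp => ptw_bound hL hp.1)
    rw [intervalIntegral.integral_const, smul_eq_mul] at hm
    calc (∫ p in (0:ℝ)..(1/4), p^2 * Real.exp (L*p)) ≤ (1/4 - 0) * (4/L^2) := hm
      _ = 1/L^2 := by ring
  have hheadval : (∫ p in (0:ℝ)..(1/4), Real.exp (L*p)*(1 - π^2/4*p^2))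
      = (Real.exp (L*(1/4)) - 1)/L - π^2/4 * ∫ p in (0:ℝ)..(1/4), p^2 * Real.exp (L*p) := by
    have hc1 : IntervalIntegrable (fun p => Real.exp (L*p)) volume 0 (1/4) :=
      hcexp.intervalIntegrable 0 (1/4)
    have hc2 : IntervalIntegrable (fun p => π^2/4 * (p^2 * Real.exp (L*p))) volume 0 (1/4) :=
      (continuous_const.mul ((continuous_pow 2).mul hcexp)).intervalIntegrable 0 (1/4)
    rw [show (fun p => Real.exp (L*p)*(1 - π^2/4*p^2))
        = fun p => Real.exp (L*p) - π^2/4*(p^2*Real.exp (L*p)) from funext fun p => by ring]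
    rw [integral_sub hc1 hc2, key_exp hLne, intervalIntegral.integral_const_mul]
  have hD : (Real.exp (L*(1/4)) - 1)/L - π^2/(4*L^2) ≤ ∫ p in (0:ℝ)..1, G p := by
    have h5 : π^2/4 * (∫ p in (0:ℝ)..(1/4), p^2 * Real.exp (L*p)) ≤ π^2/4 * (1/L^2) :=
      mul_le_mul_of_nonneg_left hJ (by positivity)
    have heq : π^2/4*(1/L^2) = π^2/(4*L^2) := by ring
    rw [hsplit]
    rw [hheadval] at hhead
    linarith [hhead, htail, h5, heq]
  -- Step E : multiply by L < 0
  constructor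
  · have h6 : L * (u ^ (-2:ℝ) * ((Real.exp L - 1)/L)) ≤ L * (∫ p in (0:ℝ)..1, G p) :=
      mul_le_mul_of_nonpos_left hC hL.le
    calc u ^ (-2:ℝ) * (Real.exp L - 1)
        = L * (u ^ (-2:ℝ) * ((Real.exp L - 1)/L)) := by field_simp
      _ ≤ L * (∫ p in (0:ℝ)..1, G p) := h6
      _ = (∫ p in (0:ℝ)..1, u ^ (-p - 1) * (1 - u) ^ (p - 1) * (Real.sin (π * p) / (π * p)))
            * (1 - u) * L := by rw [hA]; ring
  · have h7 : L * (∫ p in (0:ℝ)..1, G p)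
        ≤ L * ((Real.exp (L*(1/4)) - 1)/L - π^2/(4*L^2)) :=
      mul_le_mul_of_nonpos_left hD hL.le
    have h8 : L * ((Real.exp (L*(1/4)) - 1)/L - π^2/(4*L^2))
        = (Real.exp (L/4) - 1) + π^2/4 * (-L)⁻¹ := by
      rw [show L*(1/4) = L/4 by ring]
      field_simp
      ring
    calc (∫ p in (0:ℝ)..1, u ^ (-p - 1) * (1 - u) ^ (p - 1) * (Real.sin (π * p) / (π * p)))
          * (1 - u) * L = L * (∫ p in (0:ℝ)..1, G p) := by rw [hA]; ring
      _ ≤ L * ((Real.exp (L*(1/4)) - 1)/L - π^2/(4*L^2)) := h7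
      _ = (Real.exp (L/4) - 1) + π^2/4 * (-L)⁻¹ := h8

/-- `f₁(u) ~ -1/((1-u) log(1-u))` as `u → 1⁻`. -/
theorem stmt8 :
    Filter.Tendsto (fun u : ℝ => f1 u * (1 - u) * Real.log (1 - u))
      (nhdsWithin 1 (Set.Iio 1)) (nhds (-1)) := by
  have hLtend : Filter.Tendsto (fun u : ℝ => Real.log (1-u))
      (nhdsWithin 1 (Set.Iio 1)) Filter.atBot := by
    apply Real.tendsto_log_nhdsGT_zero.comp
    apply tendsto_nhdsWithin_of_tendsto_nhds_of_eventually_within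
    · have h := Continuous.tendsto (show Continuous fun u:ℝ => 1-u by fun_prop) 1
      norm_num at h
      exact h.mono_left nhdsWithin_le_nhds
    · filter_upwards [self_mem_nhdsWithin] with u hu
      exact sub_pos.mpr (Set.mem_Iio.mp hu)
  have hlow : Filter.Tendsto (fun u:ℝ => u ^ (-2:ℝ) * (Real.exp (Real.log (1-u)) - 1))
      (nhdsWithin 1 (Set.Iio 1)) (nhds (-1)) := by
    have h1 : Filter.Tendsto (fun u:ℝ => u ^ (-2:ℝ)) (nhdsWithin 1 (Set.Iio 1)) (nhds 1) := by
      have h := (Real.continuousAt_rpow_const 1 (-2) (Or.inl one_ne_zero)).tendsto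
      rw [Real.one_rpow] at h
      exact h.mono_left nhdsWithin_le_nhds
    have h2 : Filter.Tendsto (fun u:ℝ => Real.exp (Real.log (1-u)) - 1)
        (nhdsWithin 1 (Set.Iio 1)) (nhds (0-1)) :=
      (Real.tendsto_exp_atBot.comp hLtend).sub tendsto_const_nhds
    have h3 := h1.mul h2
    rw [show (1:ℝ) * (0-1) = -1 by norm_num] at h3
    exact h3
  have hup : Filter.Tendsto
      (fun u:ℝ => (Real.exp (Real.log (1-u)/4) - 1) + π^2/4 * (-(Real.log (1-u)))⁻¹)
      (nhdsWithin 1 (Set.Iio 1)) (nhds (-1)) := by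
    have h1 : Filter.Tendsto (fun u:ℝ => Real.exp (Real.log (1-u)/4) - 1)
        (nhdsWithin 1 (Set.Iio 1)) (nhds (0-1)) :=
      (Real.tendsto_exp_atBot.comp (hLtend.atBot_div_const (by norm_num))).sub tendsto_const_nhds
    have h2 : Filter.Tendsto (fun u:ℝ => π^2/4 * (-(Real.log (1-u)))⁻¹)
        (nhdsWithin 1 (Set.Iio 1)) (nhds (π^2/4 * 0)) :=
      tendsto_const_nhds.mul
        (tendsto_inv_atTop_zero.comp (Filter.tendsto_neg_atBot_atTop.comp hLtend))
    have h3 := h1.add h2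
    rw [show ((0:ℝ)-1) + π^2/4*0 = -1 by ring] at h3
    exact h3
  simp only [f1]
  apply tendsto_of_tendsto_of_tendsto_of_le_of_le' hlow hup
  · filter_upwards [Ioo_mem_nhdsLT_of_mem (show (1:ℝ) ∈ Set.Ioc (1/2) 1 by norm_num)] with u hu
    exact (main_est hu.1 hu.2).1
  · filter_upwards [Ioo_mem_nhdsLT_of_mem (show (1:ℝ) ∈ Set.Ioc (1/2) 1 by norm_num)] with u hu
    exact (main_est hu.1 hu.2).2
end

section
/- Define L₁(n,b) := ∫₀¹ (Γ(b-p)/Γ(b+1)) · (Γ(n-b+p)/Γ(n-b+1)) · dp/(Γ(1-p)Γ(1+p)). Then lim_{n→∞} (log n)·L₁(n,1) = 1. Equivalently, the expected number of external mutations in the Bolthausen-Sznitman coalescent satisfies (log n/n)·E[SFS_{n,1}] → θ, since E[SFS_{n,1}] = θ·n·L₁(n,1). -/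
open Real

/-- `L₁(n,b) = ∫₀¹ (Γ(b-p)/Γ(b+1)) (Γ(n-b+p)/Γ(n-b+1)) dp/(Γ(1-p)Γ(1+p))`. -/
noncomputable def L1 (n b : ℕ) : ℝ :=
  ∫ p in (0:ℝ)..1, (Real.Gamma ((b : ℝ) - p) / Real.Gamma ((b : ℝ) + 1)) *
    (Real.Gamma ((n : ℝ) - (b : ℝ) + p) / Real.Gamma ((n : ℝ) - (b : ℝ) + 1)) /
    (Real.Gamma (1 - p) * Real.Gamma (1 + p))

namespace Stmt9Aux

open MeasureTheory Set Filter intervalIntegral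

lemma gamma_contAt {x : ℝ} (hx : 0 < x) : ContinuousAt Real.Gamma x :=
  (Real.differentiableAt_Gamma fun m =>
    ((neg_nonpos.mpr (Nat.cast_nonneg m)).trans_lt hx).ne').continuousAt

lemma logGamma_ineq {x y t : ℝ} (hx : 0 < x) (hy : 0 < y) (ht0 : 0 ≤ t) (ht1 : t ≤ 1) :
    Real.log (Real.Gamma (t * x + (1 - t) * y)) ≤
      t * Real.log (Real.Gamma x) + (1 - t) * Real.log (Real.Gamma y) := by
  have h := Real.convexOn_log_Gamma.2 (Set.mem_Ioi.mpr hx) (Set.mem_Ioi.mpr hy) ht0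
    (show (0:ℝ) ≤ 1 - t by linarith) (show t + (1 - t) = 1 by ring)
  simpa [Function.comp, smul_eq_mul] using h

lemma Gamma_two' : Real.Gamma 2 = 1 := Real.Gamma_two

lemma Gamma_three : Real.Gamma 3 = 2 := by
  have h := Real.Gamma_add_one (s := 2) two_ne_zero
  rw [show (2:ℝ) + 1 = 3 by norm_num, Real.Gamma_two, mul_one] at h
  exact h

lemma gamma_one_add_le {p : ℝ} (hp0 : 0 ≤ p) (hp1 : p ≤ 1) : Real.Gamma (1 + p) ≤ 1 := by
  have h := logGamma_ineq (x := 2) (y := 1) (t := p) two_pos one_pos hp0 hp1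
  have hpt : p * 2 + (1 - p) * 1 = 1 + p := by ring
  rw [hpt, Gamma_two', Real.Gamma_one, Real.log_one] at h
  have h' : Real.log (Real.Gamma (1 + p)) ≤ 0 := by linarith
  exact (Real.log_nonpos_iff (Real.Gamma_pos_of_pos (show (0:ℝ) < 1 + p by linarith)).le).mp h'

lemma gamma_one_add_ge {p : ℝ} (hp0 : 0 ≤ p) (hp1 : p ≤ 1) :
    Real.exp ((p - 1) * Real.log 2) ≤ Real.Gamma (1 + p) := by
  have h2p : (0:ℝ) < 2 - p := by linarith
  have h := logGamma_ineq (x := 1 + p) (y := 3) (t := 1 / (2 - p))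
    (by linarith) (by norm_num) (by positivity) ((div_le_one h2p).mpr (by linarith))
  have hpt : (1 / (2 - p)) * (1 + p) + (1 - 1 / (2 - p)) * 3 = 2 := by
    field_simp <;> ring
  rw [hpt, Gamma_two', Real.log_one, Gamma_three] at h
  have hsub : (1:ℝ) - 1 / (2 - p) = (1 - p) / (2 - p) := by
    field_simp <;> ring
  rw [hsub] at h
  have h2 : 0 ≤ Real.log (Real.Gamma (1 + p)) + (1 - p) * Real.log 2 := by
    have hmul := mul_le_mul_of_nonneg_left h h2p.le
    have he : (2 - p) * (1 / (2 - p) * Real.log (Real.Gamma (1 + p)) +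
        (1 - p) / (2 - p) * Real.log 2) =
        Real.log (Real.Gamma (1 + p)) + (1 - p) * Real.log 2 := by
      field_simp <;> ring
    rw [mul_zero, he] at hmul
    exact hmul
  calc Real.exp ((p - 1) * Real.log 2) ≤ Real.exp (Real.log (Real.Gamma (1 + p))) := by
        apply Real.exp_le_exp.mpr; linarith
    _ = Real.Gamma (1 + p) := Real.exp_log (Real.Gamma_pos_of_pos (by linarith))

lemma gamma_ratio_le {N p : ℝ} (hN : 2 ≤ N) (hp0 : 0 ≤ p) (hp1 : p ≤ 1) :
    Real.Gamma (N - 1 + p) ≤ Real.Gamma N * Real.exp ((p - 1) * Real.log (N - 1)) := by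
  have hN1 : (0:ℝ) < N - 1 := by linarith
  have hGN : 0 < Real.Gamma N := Real.Gamma_pos_of_pos (by linarith)
  have hGN1 : 0 < Real.Gamma (N - 1) := Real.Gamma_pos_of_pos hN1
  have h := logGamma_ineq (x := N) (y := N - 1) (t := p) (by linarith) hN1 hp0 hp1
  have hpt : p * N + (1 - p) * (N - 1) = N - 1 + p := by ring
  rw [hpt] at h
  have hrec : Real.Gamma N = (N - 1) * Real.Gamma (N - 1) := by
    conv_lhs => rw [show N = (N - 1) + 1 by ring]
    exact Real.Gamma_add_one hN1.ne'
  have hlog : Real.log (Real.Gamma N) = Real.log (N - 1) + Real.log (Real.Gamma (N - 1)) := by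
    rw [hrec, Real.log_mul hN1.ne' hGN1.ne']
  have h2 : Real.log (Real.Gamma (N - 1 + p)) ≤
      Real.log (Real.Gamma N) + (p - 1) * Real.log (N - 1) := by nlinarith [hlog, h]
  calc Real.Gamma (N - 1 + p) = Real.exp (Real.log (Real.Gamma (N - 1 + p))) :=
        (Real.exp_log (Real.Gamma_pos_of_pos (by linarith))).symm
    _ ≤ Real.exp (Real.log (Real.Gamma N) + (p - 1) * Real.log (N - 1)) :=
        Real.exp_le_exp.mpr h2
    _ = Real.Gamma N * Real.exp ((p - 1) * Real.log (N - 1)) := by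
        rw [Real.exp_add, Real.exp_log hGN]

lemma gamma_ratio_ge {N p : ℝ} (hN : 2 ≤ N) (hp0 : 0 ≤ p) (hp1 : p ≤ 1) :
    Real.Gamma N * Real.exp ((p - 1) * Real.log N) ≤ Real.Gamma (N - 1 + p) := by
  have hNp : (0:ℝ) < N - 1 + p := by linarith
  have hGN : 0 < Real.Gamma N := Real.Gamma_pos_of_pos (by linarith)
  have hGNp : 0 < Real.Gamma (N - 1 + p) := Real.Gamma_pos_of_pos hNp
  have h := logGamma_ineq (x := N - 1 + p) (y := N + p) (t := p) hNp (by linarith) hp0 hp1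
  have hpt : p * (N - 1 + p) + (1 - p) * (N + p) = N := by ring
  rw [hpt] at h
  have hrec : Real.Gamma (N + p) = (N - 1 + p) * Real.Gamma (N - 1 + p) := by
    conv_lhs => rw [show N + p = (N - 1 + p) + 1 by ring]
    exact Real.Gamma_add_one hNp.ne'
  have hlog : Real.log (Real.Gamma (N + p)) =
      Real.log (N - 1 + p) + Real.log (Real.Gamma (N - 1 + p)) := by
    rw [hrec, Real.log_mul hNp.ne' hGNp.ne']
  have hmono : Real.log (N - 1 + p) ≤ Real.log N := Real.log_le_log hNp (by linarith)
  have h2 : Real.log (Real.Gamma N) + (p - 1) * Real.log N ≤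
      Real.log (Real.Gamma (N - 1 + p)) := by nlinarith [h, hlog, hmono]
  calc Real.Gamma N * Real.exp ((p - 1) * Real.log N)
      = Real.exp (Real.log (Real.Gamma N) + (p - 1) * Real.log N) := by
        rw [Real.exp_add, Real.exp_log hGN]
    _ ≤ Real.exp (Real.log (Real.Gamma (N - 1 + p))) := Real.exp_le_exp.mpr h2
    _ = Real.Gamma (N - 1 + p) := Real.exp_log hGNp

lemma bound_low {N p : ℝ} (hN : 2 ≤ N) (hp0 : 0 ≤ p) (hp1 : p ≤ 1) :
    Real.exp ((p - 1) * Real.log N) ≤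
      Real.Gamma (N - 1 + p) / (Real.Gamma N * Real.Gamma (1 + p)) := by
  have hGN : 0 < Real.Gamma N := Real.Gamma_pos_of_pos (by linarith)
  have hG1 : 0 < Real.Gamma (1 + p) := Real.Gamma_pos_of_pos (by linarith)
  rw [le_div_iff₀ (by positivity)]
  have h1 := gamma_one_add_le hp0 hp1
  have h2 := gamma_ratio_ge hN hp0 hp1
  have hh := mul_le_mul_of_nonneg_left h1
    (mul_nonneg (Real.exp_pos ((p - 1) * Real.log N)).le hGN.le)
  nlinarith [hh, h2]

lemma bound_high {N p : ℝ} (hN : 2 ≤ N) (hp0 : 0 ≤ p) (hp1 : p ≤ 1) :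
    Real.Gamma (N - 1 + p) / (Real.Gamma N * Real.Gamma (1 + p)) ≤
      Real.exp ((p - 1) * (Real.log (N - 1) - Real.log 2)) := by
  have hGN : 0 < Real.Gamma N := Real.Gamma_pos_of_pos (by linarith)
  have hG1 : 0 < Real.Gamma (1 + p) := Real.Gamma_pos_of_pos (by linarith)
  have hE : Real.exp ((p - 1) * (Real.log (N - 1) - Real.log 2)) =
      Real.exp ((p - 1) * Real.log (N - 1)) / Real.exp ((p - 1) * Real.log 2) := by
    rw [← Real.exp_sub]; ring_nf
  rw [hE, div_le_div_iff₀ (by positivity) (Real.exp_pos _)]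
  have h1 := gamma_one_add_ge hp0 hp1
  have h2 := gamma_ratio_le hN hp0 hp1
  have a1 := mul_le_mul_of_nonneg_right h2 (Real.exp_pos ((p - 1) * Real.log 2)).le
  have a2 := mul_le_mul_of_nonneg_left h1
    (mul_nonneg hGN.le (Real.exp_pos ((p - 1) * Real.log (N - 1))).le)
  nlinarith [a1, a2]

lemma integral_exp_shift (c : ℝ) (hc : c ≠ 0) :
    ∫ p in (0:ℝ)..1, Real.exp ((p - 1) * c) = (1 - Real.exp (-c)) / c := by
  have h : ∀ x ∈ Set.uIcc (0:ℝ) 1,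
      HasDerivAt (fun p : ℝ => Real.exp ((p - 1) * c) / c) (Real.exp ((x - 1) * c)) x := by
    intro x _
    have h1 : HasDerivAt (fun p : ℝ => (p - 1) * c) c x := by
      simpa using ((hasDerivAt_id x).sub_const 1).mul_const c
    have h2 := h1.exp.div_const c
    simpa [mul_div_cancel_right₀ _ hc] using h2
  rw [intervalIntegral.integral_eq_sub_of_hasDerivAt h
    (Continuous.intervalIntegrable (by continuity) _ _)]
  rw [div_sub_div_same]
  norm_num

lemma exp_integrable (c : ℝ) :
    IntervalIntegrable (fun p : ℝ => Real.exp ((p - 1) * c)) volume 0 1 :=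
  Continuous.intervalIntegrable (by continuity) _ _

lemma R_integrable (n : ℕ) (hn : 2 ≤ n) :
    IntervalIntegrable
      (fun p : ℝ => Real.Gamma ((n:ℝ) - 1 + p) / (Real.Gamma n * Real.Gamma (1 + p)))
      volume 0 1 := by
  have hN : (2:ℝ) ≤ (n:ℝ) := by exact_mod_cast hn
  apply ContinuousOn.intervalIntegrable
  rw [Set.uIcc_of_le zero_le_one]
  intro p hp
  obtain ⟨hp0, hp1⟩ := hp
  have hc1 : ContinuousAt (fun q : ℝ => Real.Gamma ((n:ℝ) - 1 + q)) p :=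
    (gamma_contAt (show (0:ℝ) < (n:ℝ) - 1 + p by linarith)).comp
      ((continuous_const.add continuous_id).continuousAt)
  have hc2 : ContinuousAt (fun q : ℝ => Real.Gamma (1 + q)) p :=
    (gamma_contAt (show (0:ℝ) < 1 + p by linarith)).comp
      ((continuous_const.add continuous_id).continuousAt)
  have hne : Real.Gamma (n:ℝ) * Real.Gamma (1 + p) ≠ 0 := by
    have h1 : 0 < Real.Gamma (n:ℝ) := Real.Gamma_pos_of_pos (by linarith)
    have h2 : 0 < Real.Gamma (1 + p) := Real.Gamma_pos_of_pos (by linarith)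
    positivity
  exact (hc1.div (continuousAt_const.mul hc2) hne).continuousWithinAt

lemma L1_eq (n : ℕ) (hn : 2 ≤ n) :
    L1 n 1 = ∫ p in (0:ℝ)..1,
      Real.Gamma ((n:ℝ) - 1 + p) / (Real.Gamma (n:ℝ) * Real.Gamma (1 + p)) := by
  unfold L1
  refine intervalIntegral.integral_congr_ae ?_
  have h1 : ∀ᵐ x : ℝ, x ≠ (1:ℝ) := by
    rw [MeasureTheory.ae_iff]
    simp only [ne_eq, not_not, Set.setOf_eq_eq_singleton]
    exact MeasureTheory.measure_singleton 1
  filter_upwards [h1] with x hx hmem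
  rw [Set.uIoc_of_le (zero_le_one)] at hmem
  have hx1 : x < 1 := lt_of_le_of_ne hmem.2 hx
  have hx0 : 0 < x := hmem.1
  have hg : Real.Gamma (1 - x) ≠ 0 := (Real.Gamma_pos_of_pos (by linarith)).ne'
  have hg2 : Real.Gamma (1 + x) ≠ 0 := (Real.Gamma_pos_of_pos (by linarith)).ne'
  have hGN : Real.Gamma (n:ℝ) ≠ 0 := by
    have h2 : (2:ℝ) ≤ (n:ℝ) := by exact_mod_cast hn
    exact (Real.Gamma_pos_of_pos (by linarith)).ne'
  have e1 : ((1:ℕ):ℝ) = (1:ℝ) := Nat.cast_one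
  rw [e1]
  have e2 : (1:ℝ) + 1 = 2 := by norm_num
  have e3 : (n:ℝ) - 1 + 1 = (n:ℝ) := by ring
  rw [e2, e3, Gamma_two']
  field_simp

lemma sandwich (n : ℕ) (hn : 5 ≤ n) :
    (1 - ((n:ℝ))⁻¹ ≤ Real.log n * L1 n 1) ∧
      Real.log n * L1 n 1 ≤ Real.log n / (Real.log n - Real.log 4) := by
  have hN : (5:ℝ) ≤ (n:ℝ) := by exact_mod_cast hn
  have hN2 : (2:ℝ) ≤ (n:ℝ) := by linarith
  set L := Real.log (n:ℝ) with hLdef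
  set K := Real.log ((n:ℝ) - 1) - Real.log 2 with hKdef
  have hL : 0 < L := Real.log_pos (by linarith)
  have hlog4 : Real.log 4 = Real.log 2 + Real.log 2 := by
    rw [show (4:ℝ) = 2 * 2 by norm_num, Real.log_mul two_ne_zero two_ne_zero]
  have hKgood : L - Real.log 4 ≤ K := by
    have h1 : Real.log (n:ℝ) ≤ Real.log (2 * ((n:ℝ) - 1)) :=
      Real.log_le_log (by linarith) (by linarith)
    rw [Real.log_mul two_ne_zero (by linarith : (n:ℝ) - 1 ≠ 0)] at h1
    rw [hKdef, hlog4]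
    linarith
  have hlog4pos : Real.log 4 < L := by
    have : Real.log 4 < Real.log 5 := Real.log_lt_log (by norm_num) (by norm_num)
    have h5 : Real.log 5 ≤ L := Real.log_le_log (by norm_num) hN
    linarith
  have hK : 0 < K := by linarith
  -- integral bounds
  rw [L1_eq n (by omega)]
  have hlow := intervalIntegral.integral_mono_on (μ := volume) zero_le_one
    (exp_integrable L) (R_integrable n (by omega))
    (fun p hp => bound_low hN2 hp.1 hp.2)
  have hhigh := intervalIntegral.integral_mono_on (μ := volume) zero_le_one
    (R_integrable n (by omega)) (exp_integrable K)
    (fun p hp => bound_high hN2 hp.1 hp.2)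
  rw [integral_exp_shift L hL.ne'] at hlow
  rw [integral_exp_shift K hK.ne'] at hhigh
  constructor
  · have hexp : Real.exp (-L) = ((n:ℝ))⁻¹ := by
      rw [Real.exp_neg, hLdef, Real.exp_log (by linarith)]
    have h1 : (1 - Real.exp (-L)) / L * L = 1 - ((n:ℝ))⁻¹ := by
      rw [hexp]; field_simp <;> ring
    calc 1 - ((n:ℝ))⁻¹ = L * ((1 - Real.exp (-L)) / L) := by
          rw [mul_comm, h1]
      _ ≤ L * ∫ p in (0:ℝ)..1,
            Real.Gamma ((n:ℝ) - 1 + p) / (Real.Gamma (n:ℝ) * Real.Gamma (1 + p)) :=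
          mul_le_mul_of_nonneg_left hlow hL.le
  · calc L * ∫ p in (0:ℝ)..1,
          Real.Gamma ((n:ℝ) - 1 + p) / (Real.Gamma (n:ℝ) * Real.Gamma (1 + p))
        ≤ L * ((1 - Real.exp (-K)) / K) := mul_le_mul_of_nonneg_left hhigh hL.le
      _ ≤ L * (1 / K) := by
          apply mul_le_mul_of_nonneg_left _ hL.le
          exact (div_le_div_iff_of_pos_right hK).mpr (by linarith [Real.exp_pos (-K)])
      _ = L / K := by ring
      _ ≤ L / (L - Real.log 4) := by
          apply div_le_div_of_nonneg_left hL.le (by linarith) hKgood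

end Stmt9Aux

open Stmt9Aux Filter MeasureTheory Set in
/-- `log n · L₁(n,1) → 1`; equivalently, with `E[SFS_{n,1}] = θ n L₁(n,1)`,
`(log n / n) · E[SFS_{n,1}] → θ`. -/
theorem stmt9 (θ : ℝ) :
    Filter.Tendsto (fun n : ℕ => Real.log n * L1 n 1) Filter.atTop (nhds 1) ∧
    Filter.Tendsto (fun n : ℕ => (Real.log n / (n : ℝ)) * (θ * (n : ℝ) * L1 n 1))
      Filter.atTop (nhds θ) := by
  have main : Filter.Tendsto (fun n : ℕ => Real.log n * L1 n 1) Filter.atTop (nhds 1) := by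
    have hlow : Filter.Tendsto (fun n : ℕ => 1 - ((n:ℝ))⁻¹) Filter.atTop (nhds 1) := by
      have h := tendsto_inv_atTop_zero.comp (tendsto_natCast_atTop_atTop (R := ℝ))
      simpa using tendsto_const_nhds.sub h
    have hup : Filter.Tendsto (fun n : ℕ => Real.log n / (Real.log n - Real.log 4))
        Filter.atTop (nhds 1) := by
      have hgen : Filter.Tendsto (fun x : ℝ => x / (x - Real.log 4)) Filter.atTop (nhds 1) := by
        have h1 : Filter.Tendsto (fun x : ℝ => 1 - Real.log 4 / x) Filter.atTop (nhds 1) := by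
          have h := Filter.Tendsto.div_atTop (tendsto_const_nhds (x := Real.log 4)) tendsto_id
          simpa using tendsto_const_nhds.sub h
        have h2 : Filter.Tendsto (fun x : ℝ => (1 - Real.log 4 / x)⁻¹)
            Filter.atTop (nhds 1) := by
          have h := h1.inv₀ (by norm_num)
          norm_num at h
          exact h
        refine h2.congr' ?_
        filter_upwards [Filter.eventually_gt_atTop (0:ℝ)] with x hx
        have hxne : x ≠ 0 := hx.ne'
        rw [show (1:ℝ) - Real.log 4 / x = (x - Real.log 4) / x by field_simp, inv_div]
      exact hgen.comp (Real.tendsto_log_atTop.comp (tendsto_natCast_atTop_atTop (R := ℝ)))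
    refine tendsto_of_tendsto_of_tendsto_of_le_of_le' hlow hup ?_ ?_
    · filter_upwards [Filter.eventually_ge_atTop 5] with n hn
      exact (sandwich n hn).1
    · filter_upwards [Filter.eventually_ge_atTop 5] with n hn
      exact (sandwich n hn).2
  refine ⟨main, ?_⟩
  have h := tendsto_const_nhds (x := θ) |>.mul main
  rw [mul_one] at h
  refine h.congr' ?_
  filter_upwards [Filter.eventually_ge_atTop 1] with n hn
  have hne : ((n:ℝ)) ≠ 0 := by
    have : (1:ℝ) ≤ (n:ℝ) := by exact_mod_cast hn
    linarith
  field_simp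
end

section
/- Define L₁(n,b) := ∫₀¹ (Γ(b-p)/Γ(b+1)) · (Γ(n-b+p)/Γ(n-b+1)) · dp/(Γ(1-p)Γ(1+p)). Let (b_n) be a sequence of integers with 2 ≤ b_n ≤ n-1 and b_n/n → 0. Then lim_{n→∞} b_n·(b_n-1)·(log(n/b_n))²·L₁(n,b_n) = 1. Equivalently, (b(b-1)/n)·log²(n/b)·E[SFS_{n,b}] → θ, since E[SFS_{n,b}] = θ·n·L₁(n,b). -/
open Real

set_option maxHeartbeats 1000000

open Filter Finset

noncomputable def Af (b : ℕ) (p : ℝ) : ℝ := ∏ j ∈ Finset.range (b-2), ((j:ℝ) + 2 - p)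
noncomputable def Bf (m : ℕ) (p : ℝ) : ℝ := ∏ j ∈ Finset.range (m-1), ((j:ℝ) + 1 + p)

lemma gamma_A {b : ℕ} (hb : 2 ≤ b) {p : ℝ} (hp : p ≤ 1) :
    Real.Gamma ((b:ℝ) - p) = Real.Gamma (2 - p) * Af b p := by
  induction b, hb using Nat.le_induction with
  | base => simp [Af]
  | succ b hb ih =>
    have h1 : ((b:ℝ)) - p ≠ 0 := by
      have : (2:ℝ) ≤ (b:ℝ) := by exact_mod_cast hb
      nlinarith
    have h2 : ((b+1:ℕ):ℝ) - p = ((b:ℝ) - p) + 1 := by push_cast; ring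
    rw [h2, Real.Gamma_add_one h1, ih]
    have h3 : b + 1 - 2 = (b - 2) + 1 := by omega
    simp only [Af]
    rw [h3, Finset.prod_range_succ]
    have h4 : ((b - 2 : ℕ):ℝ) = (b:ℝ) - 2 := by
      have : (2:ℕ) ≤ b := hb
      push_cast [this]; ring
    rw [h4]; ring

lemma gamma_B {m : ℕ} (hm : 1 ≤ m) {p : ℝ} (hp : 0 ≤ p) :
    Real.Gamma ((m:ℝ) + p) = Real.Gamma (1 + p) * Bf m p := by
  induction m, hm using Nat.le_induction with
  | base => simp [Bf]
  | succ m hm ih =>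
    have h1 : ((m:ℝ)) + p ≠ 0 := by
      have : (1:ℝ) ≤ (m:ℝ) := by exact_mod_cast hm
      nlinarith
    have h2 : ((m+1:ℕ):ℝ) + p = ((m:ℝ) + p) + 1 := by push_cast; ring
    rw [h2, Real.Gamma_add_one h1, ih]
    have h3 : m + 1 - 1 = (m - 1) + 1 := by omega
    simp only [Bf]
    rw [h3, Finset.prod_range_succ]
    have h4 : ((m - 1 : ℕ):ℝ) = (m:ℝ) - 1 := by
      push_cast [hm]; ring
    rw [h4]; ring

lemma integrand_eq {b m : ℕ} (hb : 2 ≤ b) (hm : 1 ≤ m) {p : ℝ} (hp0 : 0 ≤ p) (hp1 : p ≤ 1) :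
    (Real.Gamma ((b : ℝ) - p) / Real.Gamma ((b : ℝ) + 1)) *
      (Real.Gamma ((m : ℝ) + p) / Real.Gamma ((m : ℝ) + 1)) /
      (Real.Gamma (1 - p) * Real.Gamma (1 + p))
    = (1 - p) * Af b p * Bf m p / ((b.factorial : ℝ) * (m.factorial : ℝ)) := by
  have hGb : Real.Gamma ((b:ℝ) + 1) = (b.factorial : ℝ) := Real.Gamma_nat_eq_factorial b
  have hGm : Real.Gamma ((m:ℝ) + 1) = (m.factorial : ℝ) := Real.Gamma_nat_eq_factorial m
  rcases eq_or_lt_of_le hp1 with h1 | h1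
  · subst h1
    rw [show (1:ℝ) - 1 = 0 by ring, Real.Gamma_zero]
    simp
  · have hq : 0 < 1 - p := by linarith
    have hq1 : Real.Gamma (1 - p) ≠ 0 := ne_of_gt (Real.Gamma_pos_of_pos hq)
    have hq2 : Real.Gamma (1 + p) ≠ 0 := ne_of_gt (Real.Gamma_pos_of_pos (by linarith))
    have h2p : Real.Gamma (2 - p) = (1 - p) * Real.Gamma (1 - p) := by
      rw [show (2:ℝ) - p = (1 - p) + 1 by ring, Real.Gamma_add_one (ne_of_gt hq)]
    have hfb : (b.factorial : ℝ) ≠ 0 := by positivity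
    have hfm : (m.factorial : ℝ) ≠ 0 := by positivity
    rw [gamma_A hb hp1, gamma_B hm hp0, hGb, hGm, h2p]
    field_simp

lemma L1_eq {n b : ℕ} (hb : 2 ≤ b) (hbn : b + 1 ≤ n) :
    L1 n b = (1 / ((b.factorial : ℝ) * ((n-b).factorial : ℝ))) *
      ∫ p in (0:ℝ)..1, (1 - p) * Af b p * Bf (n-b) p := by
  have hm : 1 ≤ n - b := by omega
  have hcast : (n:ℝ) - (b:ℝ) = ((n-b : ℕ) : ℝ) := by
    have : b ≤ n := by omega
    push_cast [this]; ring
  rw [L1, ← intervalIntegral.integral_const_mul]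
  apply intervalIntegral.integral_congr
  intro p hp
  simp only [hcast]
  rw [Set.uIcc_of_le (by norm_num : (0:ℝ) ≤ 1)] at hp
  obtain ⟨hp0, hp1⟩ := hp
  show Real.Gamma ((b : ℝ) - p) / Real.Gamma ((b : ℝ) + 1) *
      (Real.Gamma (((n-b:ℕ) : ℝ) + p) / Real.Gamma (((n-b:ℕ) : ℝ) + 1)) /
      (Real.Gamma (1 - p) * Real.Gamma (1 + p)) = _
  rw [integrand_eq hb hm hp0 hp1]
  show _ = 1 / ((b.factorial : ℝ) * ((n-b).factorial : ℝ)) * ((1 - p) * Af b p * Bf (n-b) p)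
  ring

noncomputable def SA (b : ℕ) : ℝ := ∑ j ∈ Finset.range (b-2), 1/((j:ℝ)+1)
noncomputable def SB (m : ℕ) : ℝ := ∑ j ∈ Finset.range (m-1), 1/((j:ℝ)+2)

lemma prodc1 (r : ℕ) : ∏ j ∈ Finset.range r, ((j:ℝ)+1) = (r.factorial : ℝ) := by
  induction r with
  | zero => simp
  | succ r ih => rw [Finset.prod_range_succ, ih, Nat.factorial_succ]; push_cast; ring

lemma prodc2 (r : ℕ) : ∏ j ∈ Finset.range r, ((j:ℝ)+2) = ((r+1).factorial : ℝ) := by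
  induction r with
  | zero => simp
  | succ r ih =>
    rw [Finset.prod_range_succ, ih, Nat.factorial_succ (r+1)]
    push_cast; ring

lemma lowA {b : ℕ} (hb : 2 ≤ b) {p : ℝ} (hp0 : 0 ≤ p) (hp1 : p ≤ 1) :
    (((b-1).factorial:ℝ))^(1-p) * (((b-2).factorial:ℝ))^p ≤ Af b p := by
  have h1 : ((b-1).factorial:ℝ) = ∏ j ∈ Finset.range (b-2), ((j:ℝ)+2) := by
    rw [prodc2, show b-2+1 = b-1 by omega]
  have h2 : ((b-2).factorial:ℝ) = ∏ j ∈ Finset.range (b-2), ((j:ℝ)+1) := (prodc1 _).symm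
  rw [h1, h2, ← Real.finset_prod_rpow _ _ (fun i _ => by positivity) _,
    ← Real.finset_prod_rpow _ _ (fun i _ => by positivity) _, ← Finset.prod_mul_distrib]
  apply Finset.prod_le_prod
  · intro i _; positivity
  · intro i _
    have := Real.geom_mean_le_arith_mean2_weighted (by linarith : (0:ℝ) ≤ 1-p) hp0
      (by positivity : (0:ℝ) ≤ (i:ℝ)+2) (by positivity : (0:ℝ) ≤ (i:ℝ)+1) (by ring)
    calc ((i:ℝ)+2)^(1-p) * ((i:ℝ)+1)^p ≤ (1-p)*((i:ℝ)+2) + p*((i:ℝ)+1) := this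
    _ = (i:ℝ) + 2 - p := by ring

lemma lowB {m : ℕ} (hm : 1 ≤ m) {p : ℝ} (hp0 : 0 ≤ p) (hp1 : p ≤ 1) :
    (((m-1).factorial:ℝ))^(1-p) * ((m.factorial:ℝ))^p ≤ Bf m p := by
  have h1 : ((m-1).factorial:ℝ) = ∏ j ∈ Finset.range (m-1), ((j:ℝ)+1) := (prodc1 _).symm
  have h2 : (m.factorial:ℝ) = ∏ j ∈ Finset.range (m-1), ((j:ℝ)+2) := by
    rw [prodc2, show m-1+1 = m by omega]
  rw [h1, h2, ← Real.finset_prod_rpow _ _ (fun i _ => by positivity) _,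
    ← Real.finset_prod_rpow _ _ (fun i _ => by positivity) _, ← Finset.prod_mul_distrib]
  apply Finset.prod_le_prod
  · intro i _; positivity
  · intro i _
    have := Real.geom_mean_le_arith_mean2_weighted (by linarith : (0:ℝ) ≤ 1-p) hp0
      (by positivity : (0:ℝ) ≤ (i:ℝ)+1) (by positivity : (0:ℝ) ≤ (i:ℝ)+2) (by ring)
    calc ((i:ℝ)+1)^(1-p) * ((i:ℝ)+2)^p ≤ (1-p)*((i:ℝ)+1) + p*((i:ℝ)+2) := this
    _ = (i:ℝ) + 1 + p := by ring

lemma hiA {b : ℕ} (hb : 2 ≤ b) {p : ℝ} (hp0 : 0 ≤ p) (hp1 : p ≤ 1) :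
    Af b p ≤ ((b-2).factorial:ℝ) * Real.exp ((1-p) * SA b) := by
  rw [show ((b-2).factorial:ℝ) = ∏ j ∈ Finset.range (b-2), ((j:ℝ)+1) from (prodc1 _).symm,
    SA, Finset.mul_sum, Real.exp_sum, ← Finset.prod_mul_distrib]
  apply Finset.prod_le_prod
  · intro i _; have : (i:ℝ) + 2 - p ≥ 1 := by linarith [Nat.cast_nonneg (α := ℝ) i]
    linarith
  · intro i _
    have he : 1 + (1-p)/((i:ℝ)+1) ≤ Real.exp ((1-p)*(1/((i:ℝ)+1))) := by
      rw [mul_one_div]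
      linarith [Real.add_one_le_exp ((1-p)/((i:ℝ)+1))]
    have hpos : (0:ℝ) < (i:ℝ)+1 := by positivity
    calc (i:ℝ) + 2 - p = ((i:ℝ)+1) * (1 + (1-p)/((i:ℝ)+1)) := by field_simp; ring
    _ ≤ ((i:ℝ)+1) * Real.exp ((1-p)*(1/((i:ℝ)+1))) := by
        apply mul_le_mul_of_nonneg_left he (le_of_lt hpos)

lemma hiB {m : ℕ} (hm : 1 ≤ m) {p : ℝ} (hp0 : 0 ≤ p) (hp1 : p ≤ 1) :
    Bf m p ≤ (m.factorial:ℝ) * Real.exp (-(1-p) * SB m) := by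
  rw [show (m.factorial:ℝ) = ∏ j ∈ Finset.range (m-1), ((j:ℝ)+2) from by
      rw [prodc2, show m-1+1 = m by omega],
    SB, Finset.mul_sum, Real.exp_sum, ← Finset.prod_mul_distrib]
  apply Finset.prod_le_prod
  · intro i _; positivity
  · intro i _
    have hpos : (0:ℝ) < (i:ℝ)+2 := by positivity
    have he : 1 + (-(1-p)/((i:ℝ)+2)) ≤ Real.exp (-(1-p)*(1/((i:ℝ)+2))) := by
      have := Real.add_one_le_exp (-(1-p)/((i:ℝ)+2))
      rw [mul_one_div]
      linarith
    calc (i:ℝ) + 1 + p = ((i:ℝ)+2) * (1 + (-(1-p)/((i:ℝ)+2))) := by field_simp; ring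
    _ ≤ ((i:ℝ)+2) * Real.exp (-(1-p)*(1/((i:ℝ)+2))) := by
        apply mul_le_mul_of_nonneg_left he (le_of_lt hpos)

lemma int_exp {c : ℝ} (hc : c ≠ 0) :
    ∫ p in (0:ℝ)..1, (1-p)*Real.exp (c*p) = (Real.exp c - 1 - c)/c^2 := by
  have key : ∀ p ∈ Set.uIcc (0:ℝ) 1, HasDerivAt
      (fun q => Real.exp (c*q) * ((1-q)/c + 1/c^2)) ((1-p)*Real.exp (c*p)) p := by
    intro p _
    have h1 : HasDerivAt (fun q : ℝ => c*q) c p := by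
      simpa using (hasDerivAt_id p).const_mul c
    have h2 : HasDerivAt (fun q : ℝ => Real.exp (c*q)) (Real.exp (c*p) * c) p :=
      (Real.hasDerivAt_exp (c*p)).comp p h1
    have h3 : HasDerivAt (fun q : ℝ => (1-q)/c + 1/c^2) (-1/c) p := by
      have : HasDerivAt (fun q : ℝ => 1-q) (-1) p := by
        simpa using (hasDerivAt_id p).const_sub 1
      exact (this.div_const c).add_const (1/c^2)
    have := h2.mul h3
    refine this.congr_deriv ?_
    field_simp
    ring
  rw [intervalIntegral.integral_eq_sub_of_hasDerivAt key
    (Continuous.intervalIntegrable (by continuity) _ _)]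
  field_simp
  simp only [mul_zero, mul_one, Real.exp_zero]
  ring

lemma Af_cont (b : ℕ) : Continuous fun p => Af b p := by
  unfold Af; exact continuous_finset_prod _ (fun i _ => by continuity)

lemma Bf_cont (m : ℕ) : Continuous fun p => Bf m p := by
  unfold Bf; exact continuous_finset_prod _ (fun i _ => by continuity)


lemma cancel_mul_div {F C Y : ℝ} (hF : F ≠ 0) : (1/F) * (F/C * Y) = Y/C := by
  have h : (1/F) * (F/C * Y) = (F/F) * (Y/C) := by ring
  rw [h, div_self hF, one_mul]

lemma L1_bounds {n b : ℕ} (hb : 2 ≤ b) (hbn : b + 1 ≤ n)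
    (hx1 : 0 < Real.log (((n-b:ℕ):ℝ)/((b:ℝ)-1)))
    (hmu : 0 < SB (n-b) - SA b) :
    ((((n-b:ℕ):ℝ)/((b:ℝ)-1)) - 1 - Real.log (((n-b:ℕ):ℝ)/((b:ℝ)-1)))
        / ((Real.log (((n-b:ℕ):ℝ)/((b:ℝ)-1)))^2 * (b:ℝ) * ((n-b:ℕ):ℝ)) ≤ L1 n b ∧
      L1 n b ≤ (1 - (1 + (SB (n-b) - SA b)) * Real.exp (-(SB (n-b) - SA b)))
        / ((SB (n-b) - SA b)^2 * (b:ℝ) * ((b:ℝ)-1)) := by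
  set m : ℕ := n - b with hmdef
  have hm : 1 ≤ m := by omega
  set lam : ℝ := ((m:ℕ):ℝ)/((b:ℝ)-1) with hlamdef
  set x1 : ℝ := Real.log lam with hx1def
  set mu : ℝ := SB m - SA b with hmudef
  have hbR : (2:ℝ) ≤ (b:ℝ) := by exact_mod_cast hb
  have hmR : (1:ℝ) ≤ (m:ℝ) := by exact_mod_cast hm
  have hb1 : (0:ℝ) < (b:ℝ)-1 := by linarith
  have hlam : 0 < lam := by positivity
  have hexplam : Real.exp x1 = lam := Real.exp_log hlam
  -- factorial facts
  have hfb : (0:ℝ) < (b.factorial : ℝ) := by positivity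
  have hfm : (0:ℝ) < (m.factorial : ℝ) := by positivity
  have hfb1 : ((b-1).factorial : ℝ) * (b:ℝ) = (b.factorial : ℝ) := by
    have : b = (b-1) + 1 := by omega
    rw [this, Nat.factorial_succ]
    push_cast [show (1:ℕ) ≤ b by omega]
    ring
  have hfb2 : ((b-2).factorial : ℝ) * ((b:ℝ)-1) = ((b-1).factorial : ℝ) := by
    have h : b - 1 = (b-2) + 1 := by omega
    rw [h, Nat.factorial_succ]
    push_cast [show (2:ℕ) ≤ b from hb]
    ring
  have hfm1 : ((m-1).factorial : ℝ) * (m:ℝ) = (m.factorial : ℝ) := by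
    have : m = (m-1) + 1 := by omega
    rw [this, Nat.factorial_succ]
    push_cast [show (1:ℕ) ≤ m from hm]
    ring
  clear_value lam x1 mu
  -- pointwise bounds
  have hlow : ∀ p ∈ Set.Icc (0:ℝ) 1,
      ((b.factorial : ℝ) * (m.factorial : ℝ))/((b:ℝ)*(m:ℝ)) * ((1-p)*Real.exp (x1*p))
        ≤ (1-p) * Af b p * Bf m p := by
    intro p hp
    obtain ⟨hp0, hp1⟩ := hp
    have hA := lowA hb hp0 hp1
    have hB := lowB hm hp0 hp1
    have hprod : (((b-1).factorial:ℝ) * ((m-1).factorial:ℝ))^(1-p) *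
        (((b-2).factorial:ℝ) * (m.factorial:ℝ))^p ≤ Af b p * Bf m p := by
      rw [Real.mul_rpow (by positivity) (by positivity),
        Real.mul_rpow (by positivity) (by positivity)]
      calc ((b-1).factorial:ℝ)^(1-p) * ((m-1).factorial:ℝ)^(1-p) *
            (((b-2).factorial:ℝ)^p * (m.factorial:ℝ)^p)
          = (((b-1).factorial:ℝ)^(1-p) * ((b-2).factorial:ℝ)^p) *
            (((m-1).factorial:ℝ)^(1-p) * (m.factorial:ℝ)^p) := by ring
        _ ≤ Af b p * Bf m p := by
            apply mul_le_mul hA hB (by positivity)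
            have : (0:ℝ) < Af b p := by
              calc (0:ℝ) < ((b-1).factorial:ℝ)^(1-p) * ((b-2).factorial:ℝ)^p := by positivity
              _ ≤ Af b p := hA
            linarith
    set a : ℝ := ((b-1).factorial:ℝ) * ((m-1).factorial:ℝ) with hadef
    set c : ℝ := ((b-2).factorial:ℝ) * (m.factorial:ℝ) with hcdef
    have ha : 0 < a := by positivity
    have hc : 0 < c := by positivity
    have hca : c / a = lam := by
      rw [hlamdef, hadef, hcdef]
      rw [div_eq_div_iff (by positivity) (by positivity)]
      nlinarith [hfb2, hfm1]
    have hrw : a^(1-p) * c^p = a * Real.exp (x1 * p) := by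
      have h5 : Real.exp (x1 * p) = lam ^ p := by
        rw [hx1def]; exact (Real.rpow_def_of_pos hlam p).symm
      have hap : (0:ℝ) < a ^ p := Real.rpow_pos_of_pos ha p
      rw [h5, ← hca, Real.div_rpow hc.le ha.le, Real.rpow_sub ha, Real.rpow_one,
        div_mul_eq_mul_div, mul_div_assoc]
    calc ((b.factorial : ℝ) * (m.factorial : ℝ))/((b:ℝ)*(m:ℝ)) * ((1-p)*Real.exp (x1*p))
        = (1-p) * (a * Real.exp (x1*p)) := by
          rw [hadef]
          have : ((b.factorial : ℝ) * (m.factorial : ℝ))/((b:ℝ)*(m:ℝ))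
              = ((b-1).factorial:ℝ) * ((m-1).factorial:ℝ) := by
            rw [div_eq_iff (by positivity)]
            nlinarith [hfb1, hfm1]
          rw [this]; ring
      _ = (1-p) * (a^(1-p) * c^p) := by rw [hrw]
      _ ≤ (1-p) * (Af b p * Bf m p) := by
          apply mul_le_mul_of_nonneg_left hprod (by linarith)
      _ = (1-p) * Af b p * Bf m p := by ring
  -- upper pointwise bound
  have hhi : ∀ p ∈ Set.Icc (0:ℝ) 1,
      (1-p) * Af b p * Bf m p ≤
      (((b.factorial : ℝ) * (m.factorial : ℝ))/((b:ℝ)*((b:ℝ)-1)) * Real.exp (-mu)) *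
        ((1-p)*Real.exp (mu*p)) := by
    intro p hp
    obtain ⟨hp0, hp1⟩ := hp
    have hA := hiA hb hp0 hp1
    have hB := hiB hm hp0 hp1
    have hBpos : (0:ℝ) ≤ Bf m p :=
      le_trans (by positivity) (lowB hm hp0 hp1)
    have hfacts : ((b-2).factorial:ℝ) = (b.factorial : ℝ)/((b:ℝ)*((b:ℝ)-1)) := by
      rw [eq_div_iff (by positivity)]
      nlinarith [hfb1, hfb2]
    calc (1-p) * Af b p * Bf m p
        ≤ (1-p) * (((b-2).factorial:ℝ) * Real.exp ((1-p) * SA b)) *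
            ((m.factorial:ℝ) * Real.exp (-(1-p) * SB m)) := by
          apply mul_le_mul (mul_le_mul_of_nonneg_left hA (by linarith)) hB hBpos
            (mul_nonneg (by linarith : (0:ℝ) ≤ 1-p) (by positivity))
      _ = (((b.factorial : ℝ) * (m.factorial : ℝ))/((b:ℝ)*((b:ℝ)-1)) * Real.exp (-mu)) *
            ((1-p)*Real.exp (mu*p)) := by
          rw [hfacts]
          have hexp : Real.exp ((1-p) * SA b) * Real.exp (-(1-p) * SB m)
              = Real.exp (-mu) * Real.exp (mu*p) := by
            rw [← Real.exp_add, ← Real.exp_add]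
            congr 1
            rw [hmudef]; ring
          linear_combination ((1-p) * (((b.factorial : ℝ) * (m.factorial : ℝ))/((b:ℝ)*((b:ℝ)-1)))) * hexp
  -- integrability
  have hcmid : Continuous fun p : ℝ => (1-p) * Af b p * Bf m p :=
    (((continuous_const.sub continuous_id).mul (Af_cont b)).mul (Bf_cont m))
  have hclow : Continuous fun p : ℝ =>
      ((b.factorial : ℝ) * (m.factorial : ℝ))/((b:ℝ)*(m:ℝ)) * ((1-p)*Real.exp (x1*p)) :=
    continuous_const.mul ((continuous_const.sub continuous_id).mul
      (Real.continuous_exp.comp (continuous_const.mul continuous_id)))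
  have hchi : Continuous fun p : ℝ =>
      (((b.factorial : ℝ) * (m.factorial : ℝ))/((b:ℝ)*((b:ℝ)-1)) * Real.exp (-mu)) *
        ((1-p)*Real.exp (mu*p)) :=
    continuous_const.mul ((continuous_const.sub continuous_id).mul
      (Real.continuous_exp.comp (continuous_const.mul continuous_id)))
  -- integral bounds
  have hJlow : ∫ p in (0:ℝ)..1,
      ((b.factorial : ℝ) * (m.factorial : ℝ))/((b:ℝ)*(m:ℝ)) * ((1-p)*Real.exp (x1*p))
      ≤ ∫ p in (0:ℝ)..1, (1-p) * Af b p * Bf m p :=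
    intervalIntegral.integral_mono_on (by norm_num)
      (hclow.intervalIntegrable 0 1) (hcmid.intervalIntegrable 0 1) hlow
  have hJhi : ∫ p in (0:ℝ)..1, (1-p) * Af b p * Bf m p
      ≤ ∫ p in (0:ℝ)..1,
        (((b.factorial : ℝ) * (m.factorial : ℝ))/((b:ℝ)*((b:ℝ)-1)) * Real.exp (-mu)) *
          ((1-p)*Real.exp (mu*p)) :=
    intervalIntegral.integral_mono_on (by norm_num)
      (hcmid.intervalIntegrable 0 1) (hchi.intervalIntegrable 0 1) hhi
  rw [intervalIntegral.integral_const_mul, int_exp (ne_of_gt hx1)] at hJlow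
  rw [intervalIntegral.integral_const_mul, int_exp (ne_of_gt hmu)] at hJhi
  have hL1 : L1 n b = (1 / ((b.factorial : ℝ) * (m.factorial : ℝ))) *
      ∫ p in (0:ℝ)..1, (1 - p) * Af b p * Bf m p := by
    rw [L1_eq hb hbn, ← hmdef]
  rw [hL1]
  have hfbm : (0:ℝ) < (b.factorial : ℝ) * (m.factorial : ℝ) := by positivity
  constructor
  · have h6 : (lam - 1 - x1) / (x1^2 * (b:ℝ) * (m:ℝ)) =
        (1 / ((b.factorial : ℝ) * (m.factorial : ℝ))) *
        (((b.factorial : ℝ) * (m.factorial : ℝ))/((b:ℝ)*(m:ℝ)) *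
          ((Real.exp x1 - 1 - x1)/x1^2)) := by
      rw [hexplam, cancel_mul_div (ne_of_gt hfbm), div_div, ← mul_assoc]
    rw [h6]
    apply mul_le_mul_of_nonneg_left hJlow (by positivity)
  · have h7 : Real.exp (-mu) * Real.exp mu = 1 := by
      rw [← Real.exp_add]; simp
    have h8 : (1 / ((b.factorial : ℝ) * (m.factorial : ℝ))) *
        (((b.factorial : ℝ) * (m.factorial : ℝ))/((b:ℝ)*((b:ℝ)-1)) * Real.exp (-mu) *
          ((Real.exp mu - 1 - mu)/mu^2)) =
        (1 - (1 + mu) * Real.exp (-mu)) / (mu^2 * (b:ℝ) * ((b:ℝ)-1)) := by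
      have h9 : Real.exp (-mu) * (Real.exp mu - 1 - mu) = 1 - (1+mu)*Real.exp (-mu) := by
        linear_combination h7
      rw [mul_assoc ((b.factorial : ℝ) * (m.factorial : ℝ) / ((b:ℝ)*((b:ℝ)-1))),
        ← mul_div_assoc (Real.exp (-mu)), h9, cancel_mul_div (ne_of_gt hfbm),
        div_div, ← mul_assoc]
    rw [← h8]
    apply mul_le_mul_of_nonneg_left hJhi (by positivity)

lemma log_le_inv_succ (r : ℕ) : Real.log ((r:ℝ)+2) - Real.log ((r:ℝ)+1) ≤ 1/((r:ℝ)+1) := by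
  have h1 : (0:ℝ) < (r:ℝ)+1 := by positivity
  have h2 : (0:ℝ) < ((r:ℝ)+2)/((r:ℝ)+1) := by positivity
  have h3 := Real.log_le_sub_one_of_pos h2
  rw [Real.log_div (by positivity) (by positivity)] at h3
  have h4 : ((r:ℝ)+2)/((r:ℝ)+1) - 1 = 1/((r:ℝ)+1) := by
    field_simp
    norm_num
  linarith

lemma inv_succ2_le_log (r : ℕ) : 1/((r:ℝ)+2) ≤ Real.log ((r:ℝ)+2) - Real.log ((r:ℝ)+1) := by
  have h2 : (0:ℝ) < ((r:ℝ)+1)/((r:ℝ)+2) := by positivity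
  have h3 := Real.log_le_sub_one_of_pos h2
  rw [Real.log_div (by positivity) (by positivity)] at h3
  have h4 : ((r:ℝ)+1)/((r:ℝ)+2) - 1 = -(1/((r:ℝ)+2)) := by field_simp; ring
  linarith

lemma sum_inv_ge_log (r : ℕ) : Real.log ((r:ℝ)+1) ≤ ∑ j ∈ Finset.range r, 1/((j:ℝ)+1) := by
  induction r with
  | zero => simp
  | succ r ih =>
    rw [Finset.sum_range_succ]
    have := log_le_inv_succ r
    have hc : ((r+1:ℕ):ℝ) + 1 = (r:ℝ)+2 := by push_cast; ring
    rw [hc]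
    linarith

lemma sum_inv2_le_log (r : ℕ) : ∑ j ∈ Finset.range r, 1/((j:ℝ)+2) ≤ Real.log ((r:ℝ)+1) := by
  induction r with
  | zero => simp
  | succ r ih =>
    rw [Finset.sum_range_succ]
    have := inv_succ2_le_log r
    have hc : ((r+1:ℕ):ℝ) + 1 = (r:ℝ)+2 := by push_cast; ring
    rw [hc]
    linarith

lemma sum_inv_le_log_add_one (r : ℕ) :
    ∑ j ∈ Finset.range r, 1/((j:ℝ)+1) ≤ Real.log (r:ℝ) + 1 := by
  cases r with
  | zero => simp
  | succ r =>
    rw [Finset.sum_range_succ']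
    have h1 := sum_inv2_le_log r
    have h2 : ∑ j ∈ Finset.range r, 1/(((j+1:ℕ):ℝ)+1) = ∑ j ∈ Finset.range r, 1/((j:ℝ)+2) := by
      apply Finset.sum_congr rfl
      intro j _
      push_cast
      ring_nf
    have h3 : ((r+1:ℕ):ℝ) = (r:ℝ)+1 := by push_cast; ring
    rw [h3]
    have h4 : (0:ℕ) + 1 = 1 := rfl
    simp only [Nat.cast_add, Nat.cast_one, Nat.cast_zero] at *
    calc (∑ j ∈ Finset.range r, 1/(((j:ℝ)+1)+1)) + 1/((0:ℝ)+1)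
        = (∑ j ∈ Finset.range r, 1/((j:ℝ)+2)) + 1 := by
          norm_num
          apply Finset.sum_congr rfl
          intro j _
          ring_nf
      _ ≤ Real.log ((r:ℝ)+1) + 1 := by linarith

lemma ratio_tendsto_one {u v : ℕ → ℝ} (hu : Tendsto u atTop atTop) (C : ℝ)
    (h : ∀ᶠ n in atTop, |v n - u n| ≤ C) :
    Tendsto (fun n => v n / u n) atTop (nhds 1) := by
  have hC : Tendsto (fun n => C / u n) atTop (nhds 0) :=
    Tendsto.div_atTop tendsto_const_nhds hu
  have h1 : Tendsto (fun n => 1 - C / u n) atTop (nhds 1) := by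
    simpa using tendsto_const_nhds.sub hC
  have h2 : Tendsto (fun n => 1 + C / u n) atTop (nhds 1) := by
    simpa using tendsto_const_nhds.add hC
  apply tendsto_of_tendsto_of_tendsto_of_le_of_le' h1 h2
  · filter_upwards [h, hu.eventually_gt_atTop 0] with n hn hupos
    obtain ⟨ha, hb⟩ := abs_le.mp hn
    have e1 : 1 - C/u n = (u n - C)/u n := by
      rw [sub_div, div_self (ne_of_gt hupos)]
    rw [e1]
    exact (div_le_div_iff_of_pos_right hupos).mpr (by linarith)
  · filter_upwards [h, hu.eventually_gt_atTop 0] with n hn hupos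
    obtain ⟨ha, hb⟩ := abs_le.mp hn
    have e1 : 1 + C/u n = (u n + C)/u n := by
      rw [add_div, div_self (ne_of_gt hupos)]
    rw [e1]
    exact (div_le_div_iff_of_pos_right hupos).mpr (by linarith)

lemma exp_decay_one : Tendsto (fun t : ℝ => (1+t)*Real.exp (-t)) atTop (nhds 0) := by
  have h1 := Real.tendsto_exp_neg_atTop_nhds_zero
  have h2 := Real.tendsto_pow_mul_exp_neg_atTop_nhds_zero 1
  have h3 := h1.add h2
  simp only [add_zero] at h3
  apply h3.congr
  intro t
  simp [pow_one]
  ring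


lemma sandwich_step {n bn : ℕ} (h1 : 2 ≤ bn) (h2 : bn + 1 ≤ n) (X : ℝ)
    (hx1p : 0 < Real.log (((n - bn:ℕ):ℝ)/((bn:ℝ)-1)))
    (hmup : 0 < SB (n - bn) - SA bn) :
    (X / Real.log (((n - bn:ℕ):ℝ)/((bn:ℝ)-1)))^2 *
      (1 - (1 + Real.log (((n - bn:ℕ):ℝ)/((bn:ℝ)-1))) *
        Real.exp (-(Real.log (((n - bn:ℕ):ℝ)/((bn:ℝ)-1))))) ≤
      (bn:ℝ)*((bn:ℝ)-1)*X^2 * L1 n bn ∧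
    (bn:ℝ)*((bn:ℝ)-1)*X^2 * L1 n bn ≤
      (X / (SB (n - bn) - SA bn))^2 *
        (1 - (1 + (SB (n - bn) - SA bn)) * Real.exp (-(SB (n - bn) - SA bn))) := by
  have hL := L1_bounds h1 h2 hx1p hmup
  have hB : (2:ℝ) ≤ (bn:ℝ) := by exact_mod_cast h1
  have hB0 : (0:ℝ) < (bn:ℝ) := by linarith
  have hB1 : (0:ℝ) < (bn:ℝ) - 1 := by linarith
  have hM0 : (0:ℝ) < ((n - bn:ℕ):ℝ) := by
    have : 1 ≤ n - bn := by omega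
    have : (1:ℝ) ≤ ((n - bn:ℕ):ℝ) := by exact_mod_cast this
    linarith
  set lam : ℝ := ((n - bn:ℕ):ℝ)/((bn:ℝ)-1) with hlamd
  set x1 : ℝ := Real.log lam with hx1d
  set mu : ℝ := SB (n - bn) - SA bn with hmud
  have hlampos : 0 < lam := by rw [hlamd]; positivity
  have e1 : Real.exp (-x1) = lam⁻¹ := by
    rw [hx1d, Real.exp_neg, Real.exp_log hlampos]
  have e2 : ((n - bn:ℕ):ℝ) = ((bn:ℝ)-1) * lam := by
    rw [hlamd]
    field_simp
  have hpos : (0:ℝ) ≤ (bn:ℝ)*((bn:ℝ)-1)*X^2 :=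
    mul_nonneg (mul_nonneg (by linarith) (by linarith)) (sq_nonneg X)
  clear_value lam x1 mu
  constructor
  · calc (X/x1)^2 * (1 - (1+x1)*Real.exp (-x1))
        = (bn:ℝ)*((bn:ℝ)-1)*X^2 *
          ((lam - 1 - x1)/(x1^2*(bn:ℝ)*((n - bn:ℕ):ℝ))) := by
          rw [e1, e2]
          field_simp
          ring
      _ ≤ (bn:ℝ)*((bn:ℝ)-1)*X^2 * L1 n bn := mul_le_mul_of_nonneg_left hL.1 hpos
  · calc (bn:ℝ)*((bn:ℝ)-1)*X^2 * L1 n bn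
        ≤ (bn:ℝ)*((bn:ℝ)-1)*X^2 *
          ((1 - (1 + mu) * Real.exp (-mu)) / (mu^2 * (bn:ℝ) * ((bn:ℝ)-1))) :=
          mul_le_mul_of_nonneg_left hL.2 hpos
      _ = (X/mu)^2 * (1 - (1+mu)*Real.exp (-mu)) := by
          field_simp

/-- If `2 ≤ b_n ≤ n-1` and `b_n/n → 0`, then
`b_n (b_n - 1) log²(n/b_n) · L₁(n, b_n) → 1`; equivalently, with
`E[SFS_{n,b}] = θ n L₁(n,b)`, `(b(b-1)/n) log²(n/b) · E[SFS_{n,b}] → θ`. -/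
theorem stmt10 (θ : ℝ) (b : ℕ → ℕ)
    (hb : ∀ᶠ n : ℕ in Filter.atTop, 2 ≤ b n ∧ b n ≤ n - 1)
    (h0 : Filter.Tendsto (fun n : ℕ => (b n : ℝ) / (n : ℝ)) Filter.atTop (nhds 0)) :
    Filter.Tendsto (fun n : ℕ =>
        (b n : ℝ) * ((b n : ℝ) - 1) * (Real.log ((n : ℝ) / (b n : ℝ))) ^ 2 * L1 n (b n))
      Filter.atTop (nhds 1) ∧
    Filter.Tendsto (fun n : ℕ =>
        ((b n : ℝ) * ((b n : ℝ) - 1) / (n : ℝ)) * (Real.log ((n : ℝ) / (b n : ℝ))) ^ 2 *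
          (θ * (n : ℝ) * L1 n (b n)))
      Filter.atTop (nhds θ) := by
  set x : ℕ → ℝ := fun n => Real.log ((n : ℝ) / (b n : ℝ)) with hxdef
  set lam : ℕ → ℝ := fun n => ((n - b n : ℕ):ℝ)/((b n : ℝ)-1) with hlamdef
  set x1 : ℕ → ℝ := fun n => Real.log (lam n) with hx1def
  set mu : ℕ → ℝ := fun n => SB (n - b n) - SA (b n) with hmudef
  -- basic eventual facts
  have hev : ∀ᶠ n : ℕ in atTop, 2 ≤ b n ∧ b n + 1 ≤ n ∧ (b n : ℝ)/(n:ℝ) < 1/2 ∧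
      2*(b n : ℝ) < (n : ℝ) := by
    filter_upwards [hb, h0.eventually_lt_const (by norm_num : (0:ℝ) < 1/2),
      eventually_ge_atTop 1] with n h1 h2 h3
    have hn1 : 1 ≤ n := h3
    have hbn : b n + 1 ≤ n := by omega
    refine ⟨h1.1, hbn, h2, ?_⟩
    have hN : (0:ℝ) < (n:ℝ) := by
      have : 0 < n := by omega
      exact_mod_cast this
    have := (div_lt_iff₀ hN).mp h2
    linarith
  -- n / b n → ∞
  have hnb : Tendsto (fun n : ℕ => (n:ℝ)/(b n : ℝ)) atTop atTop := by
    have h0' : Tendsto (fun n : ℕ => (b n : ℝ)/(n:ℝ)) atTop (nhdsWithin 0 (Set.Ioi 0)) := by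
      apply tendsto_nhdsWithin_of_tendsto_nhds_of_eventually_within _ h0
      filter_upwards [hev, eventually_ge_atTop 1] with n h1 h2
      have hb2 : (0:ℝ) < (b n : ℝ) := by
        have : 2 ≤ b n := h1.1
        positivity
      have : (0:ℝ) < (n:ℝ) := by positivity
      exact div_pos hb2 this
    have := h0'.inv_tendsto_nhdsGT_zero
    apply this.congr
    intro n
    simp [inv_div]
  have hx : Tendsto x atTop atTop := Real.tendsto_log_atTop.comp hnb
  -- lam → ∞
  have hlam : Tendsto lam atTop atTop := by
    apply tendsto_atTop_mono' atTop
      (show ∀ᶠ n : ℕ in atTop, (1/2) * ((n:ℝ)/(b n : ℝ)) ≤ lam n from ?_)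
      (hnb.const_mul_atTop (by norm_num : (0:ℝ) < 1/2))
    filter_upwards [hev] with n ⟨h1, h2, h3, h4⟩
    have hB : (2:ℝ) ≤ (b n : ℝ) := by exact_mod_cast h1
    have hN : (0:ℝ) < (n:ℝ) := by
      have : 0 < n := by omega
      exact_mod_cast this
    have hM : ((n - b n : ℕ):ℝ) = (n:ℝ) - (b n:ℝ) := by
      have : b n ≤ n := by omega
      push_cast [this]; ring
    show (1/2) * ((n:ℝ)/(b n : ℝ)) ≤ ((n - b n : ℕ):ℝ)/((b n : ℝ)-1)
    rw [hM]
    have hB1 : (0:ℝ) < (b n:ℝ) - 1 := by linarith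
    have hB0 : (0:ℝ) < (b n:ℝ) := by linarith
    rw [show (1:ℝ)/2 * ((n:ℝ)/(b n:ℝ)) = (n:ℝ)/(2*(b n:ℝ)) by ring]
    rw [div_le_div_iff₀ (by positivity) hB1]
    nlinarith
  have hx1 : Tendsto x1 atTop atTop := Real.tendsto_log_atTop.comp hlam
  -- |x1 - x| ≤ 2 eventually
  have hlog2 : Real.log 2 ≤ 1 := by
    have := Real.log_le_sub_one_of_pos (by norm_num : (0:ℝ) < 2)
    linarith
  have hx1x : ∀ᶠ n : ℕ in atTop, |x1 n - x n| ≤ 2 := by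
    filter_upwards [hev] with n ⟨h1, h2, h3, h4⟩
    have hB : (2:ℝ) ≤ (b n : ℝ) := by exact_mod_cast h1
    have hN : (0:ℝ) < (n:ℝ) := by
      have : 0 < n := by omega
      exact_mod_cast this
    have hB0 : (0:ℝ) < (b n : ℝ) := by linarith
    have hB1 : (0:ℝ) < (b n:ℝ) - 1 := by linarith
    have hM : ((n - b n : ℕ):ℝ) = (n:ℝ) - (b n:ℝ) := by
      have : b n ≤ n := by omega
      push_cast [this]; ring
    have hM0 : (0:ℝ) < ((n - b n : ℕ):ℝ) := by rw [hM]; linarith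
    have hx1e : x1 n = Real.log ((n - b n : ℕ):ℝ) - Real.log ((b n:ℝ)-1) :=
      Real.log_div (ne_of_gt hM0) (ne_of_gt hB1)
    have hxe : x n = Real.log (n:ℝ) - Real.log (b n:ℝ) :=
      Real.log_div (ne_of_gt hN) (ne_of_gt hB0)
    have l1 : Real.log ((n - b n : ℕ):ℝ) ≤ Real.log (n:ℝ) := by
      apply Real.log_le_log hM0
      rw [hM]; linarith
    have l2 : Real.log (n:ℝ) - Real.log 2 ≤ Real.log ((n - b n : ℕ):ℝ) := by
      rw [← Real.log_div (ne_of_gt hN) (by norm_num : (2:ℝ) ≠ 0)]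
      apply Real.log_le_log (by positivity)
      rw [hM]; linarith
    have l3 : Real.log ((b n:ℝ)-1) ≤ Real.log (b n:ℝ) := by
      apply Real.log_le_log hB1; linarith
    have l4 : Real.log (b n:ℝ) - Real.log 2 ≤ Real.log ((b n:ℝ)-1) := by
      rw [← Real.log_div (ne_of_gt hB0) (by norm_num : (2:ℝ) ≠ 0)]
      apply Real.log_le_log (by positivity)
      linarith
    have hlog2' : (0:ℝ) ≤ Real.log 2 := Real.log_nonneg (by norm_num)
    rw [abs_le, hx1e, hxe]
    constructor <;> nlinarith
  -- |mu - x| ≤ 3 eventually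
  have hmux : ∀ᶠ n : ℕ in atTop, |mu n - x n| ≤ 3 := by
    filter_upwards [hev] with n ⟨h1, h2, h3, h4⟩
    have hB : (2:ℝ) ≤ (b n : ℝ) := by exact_mod_cast h1
    have hN : (0:ℝ) < (n:ℝ) := by
      have : 0 < n := by omega
      exact_mod_cast this
    have hB0 : (0:ℝ) < (b n : ℝ) := by linarith
    have hB1 : (0:ℝ) < (b n:ℝ) - 1 := by linarith
    have hm1 : 1 ≤ n - b n := by omega
    have hM : ((n - b n : ℕ):ℝ) = (n:ℝ) - (b n:ℝ) := by
      have : b n ≤ n := by omega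
      push_cast [this]; ring
    have hM0 : (0:ℝ) < ((n - b n : ℕ):ℝ) := by rw [hM]; linarith
    have hxe : x n = Real.log (n:ℝ) - Real.log (b n:ℝ) :=
      Real.log_div (ne_of_gt hN) (ne_of_gt hB0)
    -- SA bounds
    have hSAcast : ((b n - 2 : ℕ):ℝ) = (b n:ℝ) - 2 := by
      push_cast [h1]; ring
    have hSAlow : Real.log ((b n:ℝ)-1) ≤ SA (b n) := by
      have := sum_inv_ge_log (b n - 2)
      rw [hSAcast] at this
      rw [SA]
      convert this using 2
      ring
    have hSAhigh : SA (b n) ≤ Real.log (b n:ℝ) + 1 := by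
      have := sum_inv_le_log_add_one (b n - 2)
      rw [hSAcast] at this
      rw [SA]
      rcases eq_or_lt_of_le h1 with he | hgt
      · rw [← he] at *
        norm_num
        positivity
      · have hB3 : (3:ℝ) ≤ (b n:ℝ) := by exact_mod_cast hgt
        have : Real.log ((b n:ℝ)-2) ≤ Real.log (b n:ℝ) :=
          Real.log_le_log (by linarith) (by linarith)
        linarith [sum_inv_le_log_add_one (b n - 2), this]
    -- SB bounds
    have hSBcast : ((n - b n - 1 : ℕ):ℝ) = ((n - b n:ℕ):ℝ) - 1 := by
      push_cast [hm1]; ring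
    have hSBhigh : SB (n - b n) ≤ Real.log ((n - b n:ℕ):ℝ) := by
      have := sum_inv2_le_log (n - b n - 1)
      rw [hSBcast] at this
      rw [SB]
      convert this using 2
      ring
    have hSBlow : Real.log ((n - b n:ℕ):ℝ) - 1 ≤ SB (n - b n) := by
      have hshift : ∑ j ∈ Finset.range (n - b n), 1/((j:ℝ)+1) =
          (∑ j ∈ Finset.range (n - b n - 1), 1/((j:ℝ)+2)) + 1 := by
        rw [show n - b n = (n - b n - 1) + 1 by omega, Finset.sum_range_succ']
        norm_num
        apply Finset.sum_congr rfl
        intro j _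
        push_cast
        ring_nf
      have h5 := sum_inv_ge_log (n - b n)
      have h6 : Real.log ((n - b n:ℕ):ℝ) ≤ Real.log (((n - b n:ℕ):ℝ) + 1) :=
        Real.log_le_log hM0 (by linarith)
      rw [SB]
      rw [hshift] at h5
      linarith
    -- log M bounds vs log N
    have l1 : Real.log ((n - b n : ℕ):ℝ) ≤ Real.log (n:ℝ) :=
      Real.log_le_log hM0 (by rw [hM]; linarith)
    have l2 : Real.log (n:ℝ) - Real.log 2 ≤ Real.log ((n - b n : ℕ):ℝ) := by
      rw [← Real.log_div (ne_of_gt hN) (by norm_num : (2:ℝ) ≠ 0)]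
      apply Real.log_le_log (by positivity)
      rw [hM]; linarith
    have l4 : Real.log (b n:ℝ) - Real.log 2 ≤ Real.log ((b n:ℝ)-1) := by
      rw [← Real.log_div (ne_of_gt hB0) (by norm_num : (2:ℝ) ≠ 0)]
      apply Real.log_le_log (by positivity)
      linarith
    have l3 : Real.log ((b n:ℝ)-1) ≤ Real.log (b n:ℝ) :=
      Real.log_le_log hB1 (by linarith)
    have hlog2' : (0:ℝ) ≤ Real.log 2 := Real.log_nonneg (by norm_num)
    rw [abs_le]
    show -3 ≤ (SB (n - b n) - SA (b n)) - x n ∧ (SB (n - b n) - SA (b n)) - x n ≤ 3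
    rw [hxe]
    constructor <;> nlinarith
  -- mu tends to infinity
  have hmut : Tendsto mu atTop atTop := by
    apply tendsto_atTop_mono' atTop
      (show ∀ᶠ n : ℕ in atTop, x n - 3 ≤ mu n from ?_)
      (tendsto_atTop_add_const_right atTop (-3) hx)
    filter_upwards [hmux] with n hn
    obtain ⟨ha, hbq⟩ := abs_le.mp hn
    linarith
  -- ratio limits
  have hr1 : Tendsto (fun n => x n / x1 n) atTop (nhds 1) := by
    apply ratio_tendsto_one hx1 2
    filter_upwards [hx1x] with n hn
    rw [abs_sub_comm]
    exact hn
  have hr2 : Tendsto (fun n => x n / mu n) atTop (nhds 1) := by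
    apply ratio_tendsto_one hmut 3
    filter_upwards [hmux] with n hn
    rw [abs_sub_comm]
    exact hn
  have hd1 : Tendsto (fun n => (1 + x1 n) * Real.exp (-(x1 n))) atTop (nhds 0) :=
    exp_decay_one.comp hx1
  have hd2 : Tendsto (fun n => (1 + mu n) * Real.exp (-(mu n))) atTop (nhds 0) :=
    exp_decay_one.comp hmut
  have hlo : Tendsto (fun n => (x n / x1 n)^2 * (1 - (1 + x1 n) * Real.exp (-(x1 n))))
      atTop (nhds 1) := by
    have h := Tendsto.mul (Tendsto.pow hr1 2)
      ((tendsto_const_nhds : Tendsto (fun _ : ℕ => (1:ℝ)) atTop (nhds 1)).sub hd1)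
    norm_num at h
    exact h
  have hhi : Tendsto (fun n => (x n / mu n)^2 * (1 - (1 + mu n) * Real.exp (-(mu n))))
      atTop (nhds 1) := by
    have h := Tendsto.mul (Tendsto.pow hr2 2)
      ((tendsto_const_nhds : Tendsto (fun _ : ℕ => (1:ℝ)) atTop (nhds 1)).sub hd2)
    norm_num at h
    exact h
  have part1 : Tendsto (fun n : ℕ =>
      (b n : ℝ) * ((b n : ℝ) - 1) * (Real.log ((n : ℝ) / (b n : ℝ))) ^ 2 * L1 n (b n))
      atTop (nhds 1) := by
    apply tendsto_of_tendsto_of_tendsto_of_le_of_le' hlo hhi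
    · filter_upwards [hev, hx1.eventually_gt_atTop 0, hmut.eventually_gt_atTop 0]
        with n h hx1p hmup
      obtain ⟨h1, h2, h3, h4⟩ := h
      simp only [hx1def, hlamdef, hmudef] at hx1p hmup ⊢
      exact (sandwich_step h1 h2 (x n) hx1p hmup).1
    · filter_upwards [hev, hx1.eventually_gt_atTop 0, hmut.eventually_gt_atTop 0]
        with n h hx1p hmup
      obtain ⟨h1, h2, h3, h4⟩ := h
      simp only [hx1def, hlamdef, hmudef] at hx1p hmup ⊢
      exact (sandwich_step h1 h2 (x n) hx1p hmup).2
  refine ⟨part1, ?_⟩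
  have part2' : Tendsto (fun n : ℕ => θ *
      ((b n : ℝ) * ((b n : ℝ) - 1) * (Real.log ((n : ℝ) / (b n : ℝ))) ^ 2 * L1 n (b n)))
      atTop (nhds θ) := by
    have := part1.const_mul θ
    simpa using this
  apply part2'.congr'
  filter_upwards [eventually_ge_atTop 1] with n hn
  have hN : ((n:ℝ)) ≠ 0 := by
    have : 0 < n := hn
    positivity
  field_simp
end

section
/- Define L₁(n,b) := ∫₀¹ (Γ(b-p)/Γ(b+1)) · (Γ(n-b+p)/Γ(n-b+1)) · dp/(Γ(1-p)Γ(1+p)) and f₁(u) := ∫₀¹ u^{-p-1}(1-u)^{p-1} · sin(πp)/(πp) dp for u ∈ (0,1). Let (b_n) be a sequence of integers with 1 ≤ b_n ≤ n-1 and b_n/n → u for some u ∈ (0,1). Then lim_{n→∞} n²·L₁(n,b_n) = f₁(u). Equivalently, n·E[SFS_{n,b_n}] → θ·f₁(u), since E[SFS_{n,b}] = θ·n·L₁(n,b). -/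
open Real

section Aux
open Filter MeasureTheory

set_option maxHeartbeats 1000000

lemma prod_eq_Gamma (x : ℝ) (hx : 0 < x) (n : ℕ) :
    ∏ j ∈ Finset.range n, (x + j) = Real.Gamma (x + n) / Real.Gamma x := by
  induction n with
  | zero => simp [div_self (Real.Gamma_pos_of_pos hx).ne']
  | succ n ih =>
      rw [Finset.prod_range_succ, ih]
      have h1 : x + (n + 1 : ℕ) = (x + n) + 1 := by push_cast; ring
      rw [h1, Real.Gamma_add_one (by positivity)]
      field_simp

lemma gautschi {x s : ℝ} (hx : 0 < x) (hs0 : 0 ≤ s) (hs1 : s ≤ 1) :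
    Real.Gamma (x + s) ≤ Real.Gamma x * x ^ s := by
  have hc := Real.convexOn_log_Gamma.2 (Set.mem_Ioi.2 hx)
    (Set.mem_Ioi.2 (by linarith : (0:ℝ) < x + 1)) (by linarith : 0 ≤ 1 - s) hs0 (by ring)
  simp only [Function.comp_apply, smul_eq_mul] at hc
  have he : (1 - s) * x + s * (x + 1) = x + s := by ring
  rw [he] at hc
  have hG1 : Real.Gamma (x + 1) = x * Real.Gamma x := Real.Gamma_add_one hx.ne'
  have hGx : 0 < Real.Gamma x := Real.Gamma_pos_of_pos hx
  have hrhs : (1 - s) * Real.log (Real.Gamma x) + s * Real.log (Real.Gamma (x + 1))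
      = Real.log (Real.Gamma x * x ^ s) := by
    rw [hG1, Real.log_mul hx.ne' hGx.ne', Real.log_mul hGx.ne' (by positivity),
      Real.log_rpow hx]
    ring
  have := hc.trans_eq hrhs
  calc Real.Gamma (x + s) = Real.exp (Real.log (Real.Gamma (x + s))) :=
        (Real.exp_log (Real.Gamma_pos_of_pos (by linarith))).symm
    _ ≤ Real.exp (Real.log (Real.Gamma x * x ^ s)) := Real.exp_le_exp.2 this
    _ = Real.Gamma x * x ^ s := Real.exp_log (by positivity)

lemma tend_div_add (c : ℝ) : Tendsto (fun n : ℕ => ((n:ℝ)) / ((n:ℝ) + c)) atTop (nhds 1) :=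
  tendsto_natCast_div_add_atTop c

lemma gammaRatio {s : ℝ} (hs : -1 < s) :
    Tendsto (fun k : ℕ => Real.Gamma ((k:ℝ) + s) / Real.Gamma ((k:ℝ) + 1) * (k:ℝ) ^ (1 - s))
      atTop (nhds 1) := by
  have hs1 : (0:ℝ) < s + 1 := by linarith
  have h0 : Real.Gamma (s+1) ≠ 0 := (Real.Gamma_pos_of_pos hs1).ne'
  have hq : Tendsto (fun n : ℕ => Real.Gamma ((n:ℝ) + 2 + s) / ((n:ℝ)^(s+1) * (n.factorial : ℝ)))
      atTop (nhds 1) := by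
    have h1 : Tendsto (fun n => Real.Gamma (s+1) / Real.GammaSeq (s+1) n) atTop
        (nhds (Real.Gamma (s+1) / Real.Gamma (s+1))) :=
      tendsto_const_nhds.div (Real.GammaSeq_tendsto_Gamma (s+1)) h0
    rw [div_self h0] at h1
    refine h1.congr' ?_
    filter_upwards [eventually_ge_atTop 1] with n hn
    have hnpos : (0:ℝ) < n := by exact_mod_cast hn
    have hfac : (0:ℝ) < (n.factorial : ℝ) := by exact_mod_cast n.factorial_pos
    rw [Real.GammaSeq, prod_eq_Gamma (s+1) hs1 (n+1)]
    have harg : s + 1 + ((n+1 : ℕ):ℝ) = (n:ℝ) + 2 + s := by push_cast; ring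
    rw [harg]
    have hΓpos : 0 < Real.Gamma ((n:ℝ) + 2 + s) := Real.Gamma_pos_of_pos (by nlinarith)
    have hrp : (0:ℝ) < (n:ℝ) ^ (s+1) := Real.rpow_pos_of_pos hnpos _
    field_simp
  have he : Tendsto (fun n : ℕ => ((n:ℝ)/((n:ℝ)+2)) ^ (s+1) * (((n:ℝ)+2)/((n:ℝ)+1)))
      atTop (nhds 1) := by
    have h2 : Tendsto (fun n : ℕ => ((n:ℝ)/((n:ℝ)+2)) ^ (s+1)) atTop (nhds 1) := by
      have := (Real.continuousAt_rpow_const 1 (s+1) (Or.inl one_ne_zero)).tendsto.comp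
        (tend_div_add 2)
      simpa [Function.comp_def] using this
    have h3 : Tendsto (fun n : ℕ => ((n:ℝ)+2)/((n:ℝ)+1)) atTop (nhds 1) := by
      have hnum : (fun n : ℕ => ((n:ℝ)+2)/((n:ℝ)+1)) = fun n : ℕ => 1 + 1/((n:ℝ)+1) := by
        funext n
        have : ((n:ℝ)+1) ≠ 0 := by positivity
        field_simp
        ring
      rw [hnum]
      have := (tendsto_const_nhds : Tendsto (fun _ : ℕ => (1:ℝ)) atTop (nhds 1)).add
        tendsto_one_div_add_atTop_nhds_zero_nat
      simpa using this
    simpa using h2.mul h3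
  have key : Tendsto (fun n : ℕ => Real.Gamma (((n+2:ℕ):ℝ) + s) / Real.Gamma (((n+2:ℕ):ℝ) + 1)
      * ((n+2:ℕ):ℝ) ^ (1 - s)) atTop (nhds 1) := by
    have := hq.mul he
    rw [mul_one] at this
    refine this.congr' ?_
    filter_upwards [eventually_ge_atTop 1] with n hn
    have hnpos : (0:ℝ) < n := by exact_mod_cast hn
    have hfac : (0:ℝ) < (n.factorial : ℝ) := by exact_mod_cast n.factorial_pos
    have h23 : Real.Gamma (((n+2:ℕ):ℝ) + 1) = ((n:ℝ)+2) * (((n:ℝ)+1) * (n.factorial : ℝ)) := by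
      push_cast
      rw [show (n:ℝ) + 2 + 1 = ((n:ℝ)+2) + 1 by ring, Real.Gamma_add_one (by positivity),
        show (n:ℝ) + 2 = ((n:ℝ)+1) + 1 by ring, Real.Gamma_add_one (by positivity)]
      rw [show (n:ℝ) + 1 = ((n:ℕ):ℝ) + 1 by norm_num, Real.Gamma_nat_eq_factorial]
    have harg2 : ((n+2:ℕ):ℝ) + s = (n:ℝ) + 2 + s := by push_cast; ring
    rw [harg2, h23]
    have hr1 : ((n:ℝ)/((n:ℝ)+2)) ^ (s+1) = (n:ℝ)^(s+1) / ((n:ℝ)+2)^(s+1) :=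
      Real.div_rpow hnpos.le (by positivity : (0:ℝ) ≤ (n:ℝ)+2) (s+1)
    have hr2 : ((n+2:ℕ):ℝ) ^ (1 - s) = ((n:ℝ)+2) ^ (1-s) := by push_cast; ring_nf
    have hp2 : (0:ℝ) < ((n:ℝ)+2)^(s+1) := Real.rpow_pos_of_pos (by positivity) _
    have hK : ((n:ℝ)+2)^(1-s) = ((n:ℝ)+2)*((n:ℝ)+2)/((n:ℝ)+2)^(s+1) := by
      rw [eq_div_iff hp2.ne', ← Real.rpow_add (by positivity : (0:ℝ) < (n:ℝ)+2),
        show (1-s)+(s+1) = ((2:ℕ):ℝ) by push_cast; ring, Real.rpow_natCast]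
      ring
    have hΓpos : 0 < Real.Gamma ((n:ℝ) + 2 + s) := Real.Gamma_pos_of_pos (by nlinarith)
    have hrpn : (0:ℝ) < (n:ℝ) ^ (s+1) := Real.rpow_pos_of_pos hnpos _
    rw [hr2, hr1, hK]
    field_simp
  exact (tendsto_add_atTop_iff_nat 2).mp key

lemma contAt_Gamma {x : ℝ} (hx : 0 < x) : ContinuousAt Real.Gamma x :=
  (Real.differentiableAt_Gamma fun m => by
    have : (0:ℝ) ≤ m := Nat.cast_nonneg m
    intro h; rw [h] at hx; linarith).continuousAt

lemma refl1 {p : ℝ} (hp0 : 0 < p) (hp1 : p < 1) :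
    Real.Gamma (1 - p) * Real.Gamma (1 + p) = π * p / Real.sin (π * p) := by
  have h1 : Real.Gamma (1 + p) = p * Real.Gamma p := by
    rw [add_comm, Real.Gamma_add_one hp0.ne']
  rw [h1, show Real.Gamma (1-p) * (p * Real.Gamma p) = p * (Real.Gamma p * Real.Gamma (1-p)) by
    ring, Real.Gamma_mul_Gamma_one_sub p]
  rw [mul_div_assoc]
  ring

lemma sinpi_pos {p : ℝ} (hp0 : 0 < p) (hp1 : p < 1) : 0 < Real.sin (π * p) :=
  Real.sin_pos_of_pos_of_lt_pi (by positivity) (by nlinarith [Real.pi_pos])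

lemma refl2 {p : ℝ} (hp0 : 0 < p) (hp1 : p < 1) :
    1 / (Real.Gamma (1 - p) * Real.Gamma (1 + p)) = Real.sin (π * p) / (π * p) := by
  rw [refl1 hp0 hp1, one_div_div]

noncomputable def Ffun (n bn : ℕ) (p : ℝ) : ℝ :=
  (n:ℝ)^2 * ((Real.Gamma ((bn:ℝ) - p) / Real.Gamma ((bn:ℝ) + 1)) *
    (Real.Gamma ((n:ℝ) - (bn:ℝ) + p) / Real.Gamma ((n:ℝ) - (bn:ℝ) + 1)) /
    (Real.Gamma (1 - p) * Real.Gamma (1 + p)))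

noncomputable def gfun (u p : ℝ) : ℝ :=
  u ^ (-p - 1) * (1 - u) ^ (p - 1) * (Real.sin (π * p) / (π * p))

lemma stepA (n bn : ℕ) : (n:ℝ)^2 * L1 n bn = ∫ p in Set.Ioo (0:ℝ) 1, Ffun n bn p := by
  rw [L1, intervalIntegral.integral_of_le zero_le_one, MeasureTheory.integral_Ioc_eq_integral_Ioo,
    ← MeasureTheory.integral_const_mul]
  rfl

lemma stepB (u : ℝ) : f1 u = ∫ p in Set.Ioo (0:ℝ) 1, gfun u p := by
  rw [f1, intervalIntegral.integral_of_le zero_le_one, MeasureTheory.integral_Ioc_eq_integral_Ioo]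
  rfl

theorem main1 (u : ℝ) (hu : u ∈ Set.Ioo (0 : ℝ) 1) (b : ℕ → ℕ)
    (hb : ∀ᶠ n : ℕ in Filter.atTop, 1 ≤ b n ∧ b n ≤ n - 1)
    (hlim : Filter.Tendsto (fun n : ℕ => (b n : ℝ) / (n : ℝ)) Filter.atTop (nhds u)) :
    Filter.Tendsto (fun n : ℕ => (n : ℝ) ^ 2 * L1 n (b n)) Filter.atTop (nhds (f1 u)) := by
  obtain ⟨hu0, hu1⟩ := hu
  set α : ℝ := u/2 with hαdef
  set β : ℝ := (1-u)/2 with hβdef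
  have hα0 : 0 < α := half_pos hu0
  have hβ0 : 0 < β := half_pos (by linarith)
  have hα1 : α ≤ 1 := by rw [hαdef]; linarith
  have hβ1 : β ≤ 1 := by rw [hβdef]; linarith
  -- eventual lower bounds
  have hNlarge : ∀ C : ℝ, ∀ᶠ n : ℕ in Filter.atTop, C ≤ (n:ℝ) :=
    fun C => tendsto_natCast_atTop_atTop.eventually_ge_atTop C
  have hαev : ∀ᶠ n : ℕ in Filter.atTop, α * n ≤ (b n : ℝ) - 1 := by
    filter_upwards [hlim.eventually (eventually_ge_nhds (show 3*u/4 < u by linarith)),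
      hNlarge (4/u), hNlarge 1] with n h1 h2 h3
    have hn0 : (0:ℝ) < n := by linarith
    have hb1 : 3*u/4 * n ≤ (b n : ℝ) := by
      have := (le_div_iff₀ hn0).mp h1
      linarith
    have : (1:ℝ) ≤ u/4 * n := by
      rw [show u/4 * n = u * n / 4 by ring]
      rw [le_div_iff₀ (by norm_num)]
      calc (1:ℝ) * 4 = u * (4/u) := by field_simp
        _ ≤ u * n := by nlinarith
    simp only [hαdef]; nlinarith
  have hβev : ∀ᶠ n : ℕ in Filter.atTop, β * n ≤ (n:ℝ) - b n := by
    filter_upwards [hlim.eventually (eventually_le_nhds (show u < (1+u)/2 by linarith)),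
      hNlarge 1] with n h1 h2
    have hn0 : (0:ℝ) < n := by linarith
    have hb1 : (b n : ℝ) ≤ (1+u)/2 * n := by
      rw [div_le_iff₀ hn0] at h1; nlinarith
    simp only [hβdef]; nlinarith
  have hbcast : ∀ᶠ n : ℕ in Filter.atTop, ((n - b n : ℕ) : ℝ) = (n:ℝ) - b n := by
    filter_upwards [hb, hNlarge 1] with n h1 h2
    have : b n ≤ n := le_trans h1.2 (Nat.sub_le n 1)
    exact Nat.cast_sub this
  -- tendsto atTop facts
  have hbR : Filter.Tendsto (fun n : ℕ => ((b n : ℕ) : ℝ)) Filter.atTop Filter.atTop := by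
    refine Filter.Tendsto.congr' ?_ ((hlim.pos_mul_atTop hu0) tendsto_natCast_atTop_atTop)
    filter_upwards [hNlarge 1] with n h2
    have hn0 : ((n:ℕ):ℝ) ≠ 0 := by positivity
    field_simp
  have hbtop : Filter.Tendsto b Filter.atTop Filter.atTop := tendsto_natCast_atTop_iff.mp hbR
  have hmlim0 : Filter.Tendsto (fun n : ℕ => 1 - (b n : ℝ) / n) Filter.atTop (nhds (1 - u)) :=
    tendsto_const_nhds.sub hlim
  have hmR : Filter.Tendsto (fun n : ℕ => ((n - b n : ℕ) : ℝ)) Filter.atTop Filter.atTop := by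
    refine Filter.Tendsto.congr' ?_ ((hmlim0.pos_mul_atTop (by linarith)) tendsto_natCast_atTop_atTop)
    filter_upwards [hbcast, hNlarge 1] with n h1 h2
    have hn0 : ((n:ℕ):ℝ) ≠ 0 := by positivity
    rw [h1]; field_simp
  have hmtop : Filter.Tendsto (fun n => n - b n) Filter.atTop Filter.atTop :=
    tendsto_natCast_atTop_iff.mp hmR
  have hmdiv : Filter.Tendsto (fun n : ℕ => ((n:ℝ) - b n) / n) Filter.atTop (nhds (1 - u)) := by
    refine Filter.Tendsto.congr' ?_ hmlim0
    filter_upwards [hNlarge 1] with n h2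
    have hn0 : ((n:ℕ):ℝ) ≠ 0 := by positivity
    field_simp
  rw [show f1 u = ∫ p in Set.Ioo (0:ℝ) 1, gfun u p from stepB u]
  have hrw : ∀ᶠ n : ℕ in Filter.atTop,
      (n:ℝ)^2 * L1 n (b n) = ∫ p in Set.Ioo (0:ℝ) 1, Ffun n (b n) p :=
    Filter.Eventually.of_forall fun n => stepA n (b n)
  refine Filter.Tendsto.congr' (Filter.EventuallyEq.symm hrw) ?_
  refine MeasureTheory.tendsto_integral_filter_of_dominated_convergence
    (fun _ => α^(-(2:ℝ)) * β^(-(1:ℝ))) ?_ ?_ ?_ ?_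
  · -- measurability
    filter_upwards [hb, hNlarge 1] with n hn hN
    refine (ContinuousOn.aestronglyMeasurable ?_ measurableSet_Ioo)
    intro p hp
    obtain ⟨hp0, hp1⟩ := hp
    have hBN : (b n : ℝ) ≤ (n:ℝ) - 1 := by
      have h2 : (b n : ℕ) ≤ n - 1 := hn.2
      have h3 : ((n-1:ℕ):ℝ) = (n:ℝ) - 1 := by
        have : (1:ℕ) ≤ n := by exact_mod_cast hN
        rw [Nat.cast_sub this]; norm_num
      calc (b n : ℝ) ≤ ((n-1:ℕ):ℝ) := by exact_mod_cast h2
        _ = (n:ℝ) - 1 := h3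
    have hB1 : (1:ℝ) ≤ (b n : ℝ) := by exact_mod_cast hn.1
    apply ContinuousAt.continuousWithinAt
    apply ContinuousAt.mul continuousAt_const
    apply ContinuousAt.div
    · apply ContinuousAt.mul
      · exact ((contAt_Gamma (show (0:ℝ) < (b n:ℝ) - p by linarith)).comp
          ((continuous_const.sub continuous_id).continuousAt)).div continuousAt_const
          (Real.Gamma_pos_of_pos (by linarith : (0:ℝ) < (b n:ℝ) + 1)).ne'
      · exact ((contAt_Gamma (show (0:ℝ) < (n:ℝ) - (b n:ℝ) + p by linarith)).comp
          ((continuous_const.add continuous_id).continuousAt)).div continuousAt_const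
          (Real.Gamma_pos_of_pos (by linarith : (0:ℝ) < (n:ℝ) - (b n:ℝ) + 1)).ne'
    · exact ((contAt_Gamma (show (0:ℝ) < 1 - p by linarith)).comp
        ((continuous_const.sub continuous_id).continuousAt)).mul
        ((contAt_Gamma (show (0:ℝ) < 1 + p by linarith)).comp
          ((continuous_const.add continuous_id).continuousAt))
    · exact (mul_pos (Real.Gamma_pos_of_pos (by linarith : (0:ℝ) < 1 - p))
        (Real.Gamma_pos_of_pos (by linarith : (0:ℝ) < 1 + p))).ne'
  · -- bound
    filter_upwards [hαev, hβev, hNlarge 1] with n h1 h2 h3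
    rw [MeasureTheory.ae_restrict_iff' measurableSet_Ioo]
    refine MeasureTheory.ae_of_all _ fun p hp => ?_
    obtain ⟨hp0, hp1⟩ := hp
    have hN0 : (0:ℝ) < (n:ℝ) := by linarith
    have hBpos : (0:ℝ) < (b n:ℝ) - 1 := by nlinarith
    have hM0 : (0:ℝ) < (n:ℝ) - (b n:ℝ) := by nlinarith
    have hDpos : 0 < Real.Gamma (1-p) * Real.Gamma (1+p) :=
      mul_pos (Real.Gamma_pos_of_pos (by linarith)) (Real.Gamma_pos_of_pos (by linarith))
    have hT1 : Real.Gamma ((b n:ℝ) - p) / Real.Gamma ((b n:ℝ) + 1) ≤ ((b n:ℝ)-1) ^ (-(1+p)) := by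
      have key1 : Real.Gamma ((b n:ℝ) - p) ≤ Real.Gamma ((b n:ℝ) - 1) * ((b n:ℝ)-1) ^ (1-p) := by
        have h := gautschi hBpos (by linarith : (0:ℝ) ≤ 1 - p) (by linarith)
        rwa [show (b n:ℝ) - 1 + (1 - p) = (b n:ℝ) - p by ring] at h
      have hΓB : Real.Gamma ((b n:ℝ) + 1) = (b n:ℝ) * (((b n:ℝ) - 1) * Real.Gamma ((b n:ℝ)-1)) := by
        rw [Real.Gamma_add_one (by linarith : (b n:ℝ) ≠ 0)]
        congr 1
        conv_lhs => rw [show (b n:ℝ) = ((b n:ℝ) - 1) + 1 by ring]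
        rw [Real.Gamma_add_one hBpos.ne']
      have hΓpos : 0 < Real.Gamma ((b n:ℝ) - 1) := Real.Gamma_pos_of_pos hBpos
      rw [hΓB]
      have step : Real.Gamma ((b n:ℝ) - p) / ((b n:ℝ) * (((b n:ℝ)-1) * Real.Gamma ((b n:ℝ)-1)))
          ≤ (Real.Gamma ((b n:ℝ)-1) * ((b n:ℝ)-1) ^ (1-p)) /
            (((b n:ℝ)-1) * (((b n:ℝ)-1) * Real.Gamma ((b n:ℝ)-1))) := by
        apply div_le_div₀ (by positivity) key1 (by positivity)
        nlinarith [hΓpos, hBpos]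
      refine step.trans_eq ?_
      rw [show -(1+p) = (1-p) - ((2:ℕ):ℝ) by push_cast; ring,
        Real.rpow_sub hBpos (1-p) ((2:ℕ):ℝ), Real.rpow_natCast]
      field_simp
    have hT2 : Real.Gamma ((n:ℝ) - (b n:ℝ) + p) / Real.Gamma ((n:ℝ) - (b n:ℝ) + 1)
        ≤ ((n:ℝ)-(b n:ℝ)) ^ (-(1-p)) := by
      have key2 := gautschi hM0 hp0.le hp1.le
      have hΓM : Real.Gamma ((n:ℝ) - (b n:ℝ) + 1) = ((n:ℝ)-(b n:ℝ)) * Real.Gamma ((n:ℝ)-(b n:ℝ)) :=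
        Real.Gamma_add_one hM0.ne'
      have hΓpos : 0 < Real.Gamma ((n:ℝ) - (b n:ℝ)) := Real.Gamma_pos_of_pos hM0
      rw [hΓM]
      have step : Real.Gamma ((n:ℝ) - (b n:ℝ) + p) / (((n:ℝ)-(b n:ℝ)) * Real.Gamma ((n:ℝ)-(b n:ℝ)))
          ≤ (Real.Gamma ((n:ℝ)-(b n:ℝ)) * ((n:ℝ)-(b n:ℝ)) ^ p) /
            (((n:ℝ)-(b n:ℝ)) * Real.Gamma ((n:ℝ)-(b n:ℝ))) := by
        exact (div_le_div_iff_of_pos_right (mul_pos hM0 hΓpos)).mpr key2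
      refine step.trans_eq ?_
      rw [show -(1-p) = p - (1:ℝ) by ring, Real.rpow_sub hM0, Real.rpow_one]
      field_simp
    have hT3 : 1/(Real.Gamma (1-p) * Real.Gamma (1+p)) ≤ 1 := by
      rw [refl2 hp0 hp1]
      have hπ : 0 < π * p := by positivity
      rw [div_le_one hπ]
      exact (Real.sin_lt hπ).le
    have hT3nn : 0 ≤ 1/(Real.Gamma (1-p) * Real.Gamma (1+p)) := by positivity
    have hT1nn : 0 ≤ Real.Gamma ((b n:ℝ) - p) / Real.Gamma ((b n:ℝ) + 1) :=
      div_nonneg (Real.Gamma_pos_of_pos (show (0:ℝ) < (b n:ℝ) - p by linarith)).le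
        (Real.Gamma_pos_of_pos (show (0:ℝ) < (b n:ℝ) + 1 by linarith)).le
    have hT2nn : 0 ≤ Real.Gamma ((n:ℝ) - (b n:ℝ) + p) / Real.Gamma ((n:ℝ) - (b n:ℝ) + 1) :=
      div_nonneg (Real.Gamma_pos_of_pos (show (0:ℝ) < (n:ℝ) - (b n:ℝ) + p by linarith)).le
        (Real.Gamma_pos_of_pos (show (0:ℝ) < (n:ℝ) - (b n:ℝ) + 1 by linarith)).le
    have hFnn : 0 ≤ Ffun n (b n) p := by
      unfold Ffun
      exact mul_nonneg (by positivity)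
        (div_nonneg (mul_nonneg hT1nn hT2nn) hDpos.le)
    rw [Real.norm_eq_abs, abs_of_nonneg hFnn]
    calc Ffun n (b n) p
        = (n:ℝ)^2 * (Real.Gamma ((b n:ℝ) - p) / Real.Gamma ((b n:ℝ) + 1)) *
          (Real.Gamma ((n:ℝ) - (b n:ℝ) + p) / Real.Gamma ((n:ℝ) - (b n:ℝ) + 1)) *
          (1/(Real.Gamma (1-p) * Real.Gamma (1+p))) := by unfold Ffun; ring
      _ ≤ (n:ℝ)^2 * (((b n:ℝ)-1) ^ (-(1+p))) * (((n:ℝ)-(b n:ℝ)) ^ (-(1-p))) * 1 := by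
          gcongr
      _ ≤ (n:ℝ)^2 * ((α*(n:ℝ)) ^ (-(1+p))) * ((β*(n:ℝ)) ^ (-(1-p))) * 1 := by
          gcongr (n:ℝ)^2 * ?_ * ?_ * 1
          · exact Real.rpow_le_rpow_of_nonpos (by positivity) h1 (by linarith)
          · exact Real.rpow_le_rpow_of_nonpos (by positivity) h2 (by linarith)
      _ = (α ^ (-(1+p)) * β ^ (-(1-p))) *
          ((n:ℝ) ^ ((2:ℕ):ℝ) * ((n:ℝ) ^ (-(1+p)) * (n:ℝ) ^ (-(1-p)))) := by
          rw [Real.mul_rpow hα0.le hN0.le, Real.mul_rpow hβ0.le hN0.le, Real.rpow_natCast]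
          ring
      _ = α ^ (-(1+p)) * β ^ (-(1-p)) := by
          rw [← Real.rpow_add hN0, ← Real.rpow_add hN0,
            show ((2:ℕ):ℝ) + (-(1+p) + -(1-p)) = 0 by push_cast; ring, Real.rpow_zero, mul_one]
      _ ≤ α^(-(2:ℝ)) * β^(-(1:ℝ)) := by
          exact mul_le_mul (Real.rpow_le_rpow_of_exponent_ge hα0 hα1 (by linarith))
            (Real.rpow_le_rpow_of_exponent_ge hβ0 hβ1 (by linarith))
            (Real.rpow_pos_of_pos hβ0 _).le (Real.rpow_pos_of_pos hα0 _).le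

  · exact MeasureTheory.integrable_const _
  · -- a.e. pointwise limit
    rw [MeasureTheory.ae_restrict_iff' measurableSet_Ioo]
    refine MeasureTheory.ae_of_all _ fun p hp => ?_
    obtain ⟨hp0, hp1⟩ := hp
    have hA := (gammaRatio (show (-1:ℝ) < -p by linarith)).comp hbtop
    have hB := (gammaRatio (show (-1:ℝ) < p by linarith)).comp hmtop
    have hC1 := ((Real.continuousAt_rpow_const u (-(1+p)) (Or.inl hu0.ne')).tendsto).comp hlim
    have hC2 := ((Real.continuousAt_rpow_const (1-u) (-(1-p))
      (Or.inl (show (1:ℝ)-u ≠ 0 by intro h; nlinarith))).tendsto).comp hmdiv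
    have hall := (((hA.mul hB).mul (hC1.mul hC2)).mul
      (tendsto_const_nhds :
        Tendsto (fun _ : ℕ => 1/(Real.Gamma (1-p) * Real.Gamma (1+p))) atTop _))
    have hval : ((1:ℝ)*1 * (u ^ (-(1+p)) * (1-u) ^ (-(1-p)))) *
        (1/(Real.Gamma (1-p)*Real.Gamma (1+p))) = gfun u p := by
      unfold gfun
      rw [refl2 hp0 hp1, show (-p - 1 : ℝ) = -(1+p) by ring, show (p - 1 : ℝ) = -(1-p) by ring]
      ring
    rw [hval] at hall
    refine Filter.Tendsto.congr' ?_ hall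
    filter_upwards [hNlarge 1, hαev, hβev, hbcast] with n hN h1 h2 hcast
    simp only [Function.comp_apply]
    have hN0 : (0:ℝ) < n := by linarith
    have hB1 : (0:ℝ) < (b n:ℝ) - 1 := by nlinarith [hα0]
    have hB0 : (0:ℝ) < (b n:ℝ) := by linarith
    have hM0 : (0:ℝ) < (n:ℝ) - (b n:ℝ) := by nlinarith [hβ0]
    have hDpos : 0 < Real.Gamma (1-p) * Real.Gamma (1+p) :=
      mul_pos (Real.Gamma_pos_of_pos (by linarith)) (Real.Gamma_pos_of_pos (by linarith))
    rw [hcast]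
    have e0 : (b n:ℝ) + -p = (b n:ℝ) - p := by ring
    have hBe : (b n:ℝ) ^ (1 - -p) = (b n:ℝ) ^ (1+p) := by rw [show (1 - -p) = 1+p by ring]
    have e1 : ((b n:ℝ)/(n:ℝ)) ^ (-(1+p)) = (n:ℝ) ^ (1+p) / (b n:ℝ) ^ (1+p) := by
      rw [Real.rpow_neg (by positivity), Real.div_rpow hB0.le hN0.le, inv_div]
    have e2 : (((n:ℝ)-(b n:ℝ))/(n:ℝ)) ^ (-(1-p)) = (n:ℝ) ^ (1-p) / ((n:ℝ)-(b n:ℝ)) ^ (1-p) := by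
      rw [Real.rpow_neg (by positivity), Real.div_rpow hM0.le hN0.le, inv_div]
    have e3 : (n:ℝ) ^ ((1:ℝ)+p) * (n:ℝ) ^ ((1:ℝ)-p) = (n:ℝ)^(2:ℕ) := by
      rw [← Real.rpow_add hN0, ← Real.rpow_natCast (n:ℝ) 2]; norm_num
    rw [e0, hBe, e1, e2]
    unfold Ffun
    rw [div_mul_div_comm, e3]
    have hb1 : (b n:ℝ) ^ ((1:ℝ)+p) ≠ 0 := (Real.rpow_pos_of_pos hB0 _).ne'
    have hm1 : ((n:ℝ)-(b n:ℝ)) ^ ((1:ℝ)-p) ≠ 0 := (Real.rpow_pos_of_pos hM0 _).ne'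
    have hΓ1 : Real.Gamma ((b n:ℝ)+1) ≠ 0 := (Real.Gamma_pos_of_pos (by linarith)).ne'
    have hΓ2 : Real.Gamma ((n:ℝ)-(b n:ℝ)+1) ≠ 0 := (Real.Gamma_pos_of_pos (by linarith)).ne'
    field_simp


end Aux

/-- If `1 ≤ b_n ≤ n-1` and `b_n/n → u ∈ (0,1)`, then `n² L₁(n, b_n) → f₁(u)`;
equivalently, with `E[SFS_{n,b}] = θ n L₁(n,b)`, `n · E[SFS_{n,b_n}] → θ f₁(u)`. -/
theorem stmt11 (θ : ℝ) (u : ℝ) (hu : u ∈ Set.Ioo (0 : ℝ) 1) (b : ℕ → ℕ)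
    (hb : ∀ᶠ n : ℕ in Filter.atTop, 1 ≤ b n ∧ b n ≤ n - 1)
    (hlim : Filter.Tendsto (fun n : ℕ => (b n : ℝ) / (n : ℝ)) Filter.atTop (nhds u)) :
    Filter.Tendsto (fun n : ℕ => (n : ℝ) ^ 2 * L1 n (b n)) Filter.atTop (nhds (f1 u)) ∧
    Filter.Tendsto (fun n : ℕ => (n : ℝ) * (θ * (n : ℝ) * L1 n (b n)))
      Filter.atTop (nhds (θ * f1 u)) := by
  have h1 := main1 u hu b hb hlim
  exact ⟨h1, ((tendsto_const_nhds (x := θ)).mul h1).congr (fun n => by ring)⟩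
end

section
/- Define L₁(n,b) := ∫₀¹ (Γ(b-p)/Γ(b+1)) · (Γ(n-b+p)/Γ(n-b+1)) · dp/(Γ(1-p)Γ(1+p)). Let (b_n) be a sequence of integers with 1 ≤ b_n ≤ n-1 and (n-b_n)/n → 0. Then lim_{n→∞} (n-b_n)·log(n/(n-b_n))·n·L₁(n,b_n) = 1. Equivalently, (n-b)·log(n/(n-b))·E[SFS_{n,b}] → θ, since E[SFS_{n,b}] = θ·n·L₁(n,b). -/
open Real Filter Set


lemma Gamma_interp {x y t : ℝ} (hx : 0 < x) (hy : 0 < y) (ht : 0 ≤ t) (ht1 : t ≤ 1) :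
    Real.Gamma (t*x + (1-t)*y) ≤ Real.Gamma x ^ t * Real.Gamma y ^ (1-t) := by
  have h := Real.convexOn_log_Gamma.2 (Set.mem_Ioi.2 hx) (Set.mem_Ioi.2 hy) ht (sub_nonneg.2 ht1) (by ring)
  simp only [Function.comp_apply, smul_eq_mul] at h
  have hpos : 0 < t*x + (1-t)*y := by
    rcases ht.lt_or_eq with h' | h'
    · have : 0 < t*x := mul_pos h' hx
      nlinarith [mul_nonneg (sub_nonneg.2 ht1) hy.le]
    · simp [← h', hy]
  have h1 : Real.Gamma (t*x+(1-t)*y) = Real.exp (Real.log (Real.Gamma (t*x+(1-t)*y))) :=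
    (Real.exp_log (Real.Gamma_pos_of_pos hpos)).symm
  rw [h1]
  calc Real.exp (Real.log (Real.Gamma (t*x+(1-t)*y)))
      ≤ Real.exp (t * Real.log (Real.Gamma x) + (1-t) * Real.log (Real.Gamma y)) :=
        Real.exp_le_exp.2 h
    _ = Real.Gamma x ^ t * Real.Gamma y ^ (1-t) := by
        rw [Real.exp_add, Real.rpow_def_of_pos (Real.Gamma_pos_of_pos hx),
          Real.rpow_def_of_pos (Real.Gamma_pos_of_pos hy), mul_comm t, mul_comm (1-t)]

lemma gB1 {x p : ℝ} (hx : 0 < x) (hp : 0 ≤ p) (hp1 : p ≤ 1) :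
    Real.Gamma (x + p) ≤ Real.Gamma x * x ^ p := by
  have h := Gamma_interp (x := x) (y := x+1) (t := 1-p) hx (by linarith) (by linarith) (by linarith)
  have e1 : (1-p)*x + (1-(1-p))*(x+1) = x + p := by ring
  rw [e1, sub_sub_cancel] at h
  have e2 : Real.Gamma (x+1) = x * Real.Gamma x := Real.Gamma_add_one hx.ne'
  rw [e2, Real.mul_rpow hx.le (Real.Gamma_pos_of_pos hx).le] at h
  calc Real.Gamma (x+p) ≤ Real.Gamma x ^ (1-p) * (x ^ p * Real.Gamma x ^ p) := h
    _ = Real.Gamma x * x ^ p := by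
        rw [mul_comm (x ^ p), ← mul_assoc, ← Real.rpow_add (Real.Gamma_pos_of_pos hx)]
        norm_num

lemma gB2 {x p : ℝ} (hx : 0 < x) (hp : 0 ≤ p) (hp1 : p ≤ 1) :
    Real.Gamma (x + 1) ≤ Real.Gamma (x + p) * (x + p) ^ (1 - p) := by
  have hxp : 0 < x + p := by linarith
  have h := Gamma_interp (x := x+p) (y := x+p+1) (t := p) hxp (by linarith) hp hp1
  have e1 : p*(x+p) + (1-p)*(x+p+1) = x + 1 := by ring
  rw [e1] at h
  have e2 : Real.Gamma (x+p+1) = (x+p) * Real.Gamma (x+p) := Real.Gamma_add_one hxp.ne'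
  rw [e2, Real.mul_rpow hxp.le (Real.Gamma_pos_of_pos hxp).le] at h
  calc Real.Gamma (x+1) ≤ Real.Gamma (x+p) ^ p * ((x+p) ^ (1-p) * Real.Gamma (x+p) ^ (1-p)) := h
    _ = Real.Gamma (x+p) * (x+p) ^ (1-p) := by
        rw [mul_comm ((x+p) ^ (1-p)), ← mul_assoc, ← Real.rpow_add (Real.Gamma_pos_of_pos hxp)]
        norm_num

-- B3 : Γ(c-p) ≤ Γ(c) (c-1)^(-p)  for c > 1
lemma gB3 {c p : ℝ} (hc : 1 < c) (hp : 0 ≤ p) (hp1 : p ≤ 1) :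
    Real.Gamma (c - p) ≤ Real.Gamma c * (c - 1) ^ (-p) := by
  have hc1 : 0 < c - 1 := by linarith
  have h := Gamma_interp (x := c-1) (y := c) (t := p) hc1 (by linarith) hp hp1
  have e1 : p*(c-1) + (1-p)*c = c - p := by ring
  rw [e1] at h
  have e2 : Real.Gamma c = (c-1) * Real.Gamma (c-1) := by
    have := Real.Gamma_add_one hc1.ne'
    rw [sub_add_cancel] at this; exact this
  have e3 : Real.Gamma (c-1) = Real.Gamma c * (c-1)⁻¹ := by
    field_simp [e2]
    linarith [e2]
  rw [e3, Real.mul_rpow (by positivity) (by positivity)] at h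
  calc Real.Gamma (c-p) ≤ Real.Gamma c ^ p * ((c-1)⁻¹) ^ p * Real.Gamma c ^ (1-p) := h
    _ = Real.Gamma c * (c-1) ^ (-p) := by
        rw [Real.inv_rpow hc1.le, ← Real.rpow_neg hc1.le, mul_comm (Real.Gamma c ^ p),
          mul_assoc, ← Real.rpow_add (Real.Gamma_pos_of_pos (by linarith))]
        norm_num
        ring

-- B4 : Γ(c) ≤ Γ(c-p) (c-p)^p for c > 1
lemma gB4 {c p : ℝ} (hc : 1 < c) (hp : 0 ≤ p) (hp1 : p ≤ 1) :
    Real.Gamma c ≤ Real.Gamma (c - p) * (c - p) ^ p := by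
  have hcp : 0 < c - p := by linarith
  have h := Gamma_interp (x := c-p) (y := c-p+1) (t := 1-p) hcp (by linarith) (by linarith) (by linarith)
  have e1 : (1-p)*(c-p) + (1-(1-p))*(c-p+1) = c := by ring
  rw [e1, sub_sub_cancel] at h
  have e2 : Real.Gamma (c-p+1) = (c-p) * Real.Gamma (c-p) := Real.Gamma_add_one hcp.ne'
  rw [e2, Real.mul_rpow hcp.le (Real.Gamma_pos_of_pos hcp).le] at h
  calc Real.Gamma c ≤ Real.Gamma (c-p) ^ (1-p) * ((c-p) ^ p * Real.Gamma (c-p) ^ p) := h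
    _ = Real.Gamma (c-p) * (c-p) ^ p := by
        rw [mul_comm ((c-p) ^ p), ← mul_assoc, ← Real.rpow_add (Real.Gamma_pos_of_pos hcp)]
        norm_num

noncomputable def phi (p : ℝ) : ℝ := (Real.Gamma (1 - p) * Real.Gamma (1 + p))⁻¹

lemma continuousAt_Gamma' {s : ℝ} (hs : 0 < s) : ContinuousAt Real.Gamma s := by
  refine (Real.differentiableAt_Gamma ?_).continuousAt
  intro m hc; have hm := Nat.cast_nonneg (α := ℝ) m; rw [hc] at hs; linarith

lemma phi_nonneg {p : ℝ} (hp : 0 ≤ p) (hp1 : p ≤ 1) : 0 ≤ phi p := by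
  unfold phi
  have h1 : 0 ≤ Real.Gamma (1 - p) := Real.Gamma_nonneg_of_nonneg (by linarith)
  have h2 : 0 < Real.Gamma (1 + p) := Real.Gamma_pos_of_pos (by linarith)
  positivity

lemma phi_le_one {p : ℝ} (hp : 0 ≤ p) (hp1 : p ≤ 1) : phi p ≤ 1 := by
  rcases eq_or_lt_of_le hp1 with h | h
  · subst h; unfold phi; norm_num [Real.Gamma_zero]
  · have h1 : 0 < Real.Gamma (1 - p) := Real.Gamma_pos_of_pos (by linarith)
    have h2 : 0 < Real.Gamma (1 + p) := Real.Gamma_pos_of_pos (by linarith)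
    have hconv := Real.convexOn_log_Gamma.2 (Set.mem_Ioi.2 (by linarith : (0:ℝ) < 1 - p))
      (Set.mem_Ioi.2 (by linarith : (0:ℝ) < 1 + p)) (by norm_num : (0:ℝ) ≤ 1/2)
      (by norm_num : (0:ℝ) ≤ 1/2) (by norm_num)
    simp only [Function.comp_apply, smul_eq_mul] at hconv
    have e : (1/2 : ℝ) * (1 - p) + (1/2 : ℝ) * (1 + p) = 1 := by ring
    rw [e, Real.Gamma_one, Real.log_one] at hconv
    have hlog : 0 ≤ Real.log (Real.Gamma (1-p) * Real.Gamma (1+p)) := by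
      rw [Real.log_mul h1.ne' h2.ne']; linarith
    have hge : (1:ℝ) ≤ Real.Gamma (1-p) * Real.Gamma (1+p) := by
      have := Real.exp_le_exp.2 hlog
      rwa [Real.exp_zero, Real.exp_log (by positivity)] at this
    unfold phi
    rw [inv_le_one_iff₀]; right; exact hge

lemma phi_zero : phi 0 = 1 := by unfold phi; norm_num [Real.Gamma_one]

lemma Gamma_tendsto_atTop_zero : Tendsto Real.Gamma (nhdsWithin 0 (Set.Ioi 0)) atTop := by
  have hadd : Tendsto (fun x : ℝ => x + 1) (nhdsWithin (0:ℝ) (Set.Ioi 0)) (nhds 1) := by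
    have h : Continuous (fun x : ℝ => x + 1) := by continuity
    have := (h.tendsto (0:ℝ)).mono_left (nhdsWithin_le_nhds (s := Set.Ioi (0:ℝ)))
    simpa using this
  have h1 : Tendsto (fun x : ℝ => Real.Gamma (x + 1)) (nhdsWithin 0 (Set.Ioi 0)) (nhds 1) := by
    have hc := (continuousAt_Gamma' one_pos).tendsto
    rw [Real.Gamma_one] at hc
    exact hc.comp hadd
  have h2 : Tendsto (fun x : ℝ => x⁻¹) (nhdsWithin 0 (Set.Ioi 0)) atTop := tendsto_inv_nhdsGT_zero
  refine (Filter.Tendsto.pos_mul_atTop one_pos h1 h2).congr' ?_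
  filter_upwards [self_mem_nhdsWithin] with x hx
  have hx' : (0:ℝ) < x := hx
  rw [Real.Gamma_add_one hx'.ne']
  field_simp

lemma phi_one : phi 1 = 0 := by unfold phi; norm_num [Real.Gamma_zero]

lemma continuousOn_phi : ContinuousOn phi (Set.Icc 0 1) := by
  intro p hp
  rcases eq_or_lt_of_le hp.2 with h | h
  · subst h
    rw [← continuousWithinAt_diff_self]
    have hG1 : Tendsto (fun q : ℝ => Real.Gamma (1 - q))
        (nhdsWithin 1 (Set.Icc 0 1 \ {1})) atTop := by
      refine Gamma_tendsto_atTop_zero.comp ?_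
      rw [tendsto_nhdsWithin_iff]
      constructor
      · have h : Continuous (fun q : ℝ => 1 - q) := by continuity
        have := (h.tendsto (1:ℝ)).mono_left
          (nhdsWithin_le_nhds (s := Set.Icc 0 1 \ {1}))
        simpa using this
      · filter_upwards [self_mem_nhdsWithin] with q hq
        have : q < 1 := lt_of_le_of_ne hq.1.2 (by simpa using hq.2)
        simpa using this
    have hG2 : Tendsto (fun q : ℝ => Real.Gamma (1 + q))
        (nhdsWithin 1 (Set.Icc 0 1 \ {1})) (nhds 1) := by
      have hc := (continuousAt_Gamma' (by norm_num : (0:ℝ) < 2)).tendsto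
      rw [Real.Gamma_two] at hc
      refine hc.comp ?_
      have h : Continuous (fun q : ℝ => 1 + q) := by continuity
      have := (h.tendsto (1:ℝ)).mono_left
        (nhdsWithin_le_nhds (s := Set.Icc 0 1 \ {1}))
      simpa [one_add_one_eq_two] using this
    have hmul : Tendsto (fun q : ℝ => Real.Gamma (1 - q) * Real.Gamma (1 + q))
        (nhdsWithin 1 (Set.Icc 0 1 \ {1})) atTop := hG1.atTop_mul_pos one_pos hG2
    have := hmul.inv_tendsto_atTop
    rw [ContinuousWithinAt, phi_one]
    exact this
  · have h1 : ContinuousAt phi p := by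
      have hg1 : ContinuousAt Real.Gamma (1 - p) := continuousAt_Gamma' (by linarith)
      have hg2 : ContinuousAt Real.Gamma (1 + p) := continuousAt_Gamma' (by linarith [hp.1])
      have hprod : ContinuousAt (fun q => Real.Gamma (1-q) * Real.Gamma (1+q)) p :=
        ((hg1.comp ((continuous_const.sub continuous_id).continuousAt)).mul
          (hg2.comp ((continuous_const.add continuous_id).continuousAt)))
      refine hprod.inv₀ ?_
      have := Real.Gamma_pos_of_pos (by linarith : (0:ℝ) < 1 - p)
      have := Real.Gamma_pos_of_pos (by linarith [hp.1] : (0:ℝ) < 1 + p)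
      positivity
    exact h1.continuousWithinAt

lemma integral_exp_mul' (c : ℝ) (hc : c ≠ 0) (a b : ℝ) :
    ∫ p in a..b, Real.exp (c * p) = c⁻¹ * (Real.exp (c * b) - Real.exp (c * a)) := by
  rw [intervalIntegral.integral_comp_mul_left Real.exp hc, integral_exp, smul_eq_mul]

lemma key_limit (g : ℝ → ℝ) (hc : ContinuousOn g (Set.Icc 0 1))
    (hge : ∀ p ∈ Set.Icc (0:ℝ) 1, 0 ≤ g p) (hle : ∀ p ∈ Set.Icc (0:ℝ) 1, g p ≤ 1)
    (hg0 : g 0 = 1) :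
    Tendsto (fun x : ℝ => Real.log x⁻¹ * ∫ p in (0:ℝ)..1, g p * x ^ p)
      (nhdsWithin 0 (Set.Ioi 0)) (nhds 1) := by
  rw [Metric.tendsto_nhds]
  intro ε hε
  set ε' : ℝ := min (ε/3) (1/2) with hε'def
  have hε'pos : 0 < ε' := lt_min (by linarith) (by norm_num)
  have hε'le : ε' ≤ ε/3 := min_le_left _ _
  have hε'half : ε' ≤ 1/2 := min_le_right _ _
  have hcw : ContinuousWithinAt g (Set.Icc 0 1) 0 := hc 0 ⟨le_rfl, zero_le_one⟩
  rw [Metric.continuousWithinAt_iff] at hcw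
  obtain ⟨δ, hδpos, hδ⟩ := hcw ε' hε'pos
  set d : ℝ := min (δ/2) 1 with hddef
  have hdpos : 0 < d := lt_min (by linarith) one_pos
  have hd1 : d ≤ 1 := min_le_right _ _
  have hglb : ∀ p ∈ Set.Icc (0:ℝ) d, 1 - ε' ≤ g p := by
    intro p hp
    have hp1 : p ∈ Set.Icc (0:ℝ) 1 := ⟨hp.1, hp.2.trans hd1⟩
    have hdist : dist p 0 < δ := by
      rw [Real.dist_eq, sub_zero, abs_of_nonneg hp.1]
      have : p ≤ δ/2 := hp.2.trans (min_le_left _ _)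
      linarith
    have h2 := hδ hp1 hdist
    rw [hg0, Real.dist_eq] at h2
    have h3 := abs_lt.1 h2
    linarith [h3.1]
  set cθ : ℝ := min (1/2) (ε' ^ d⁻¹) with hcθ
  have hcθpos : 0 < cθ := lt_min (by norm_num) (Real.rpow_pos_of_pos hε'pos _)
  filter_upwards [Ioo_mem_nhdsGT_of_mem (by exact ⟨le_rfl, hcθpos⟩ : (0:ℝ) ∈ Set.Ico 0 cθ)]
    with x hx
  obtain ⟨hx0, hxc⟩ := hx
  have hxhalf : x < 1/2 := lt_of_lt_of_le hxc (min_le_left _ _)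
  have hx1 : x < 1 := by linarith
  have hxd : x ^ d < ε' := by
    have h1 : x ^ d < (ε' ^ d⁻¹) ^ d :=
      Real.rpow_lt_rpow hx0.le (lt_of_lt_of_le hxc (min_le_right _ _)) hdpos
    rwa [← Real.rpow_mul hε'pos.le, inv_mul_cancel₀ hdpos.ne', Real.rpow_one] at h1
  have hxdpos : 0 < x ^ d := Real.rpow_pos_of_pos hx0 _
  set c0 : ℝ := Real.log x with hc0
  have hc0neg : c0 < 0 := Real.log_neg hx0 hx1
  have hloginv : Real.log x⁻¹ = -c0 := by rw [Real.log_inv]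
  have hxp : ∀ p : ℝ, x ^ p = Real.exp (c0 * p) := fun p => by
    rw [Real.rpow_def_of_pos hx0]
  have hcont_rpow : ContinuousOn (fun p : ℝ => x ^ p) (Set.Icc 0 1) := by
    have he : (fun p : ℝ => x ^ p) = fun p => Real.exp (c0 * p) := funext hxp
    rw [he]
    exact (Real.continuous_exp.comp (continuous_const.mul continuous_id)).continuousOn
  have hint1 : IntervalIntegrable (fun p => g p * x ^ p) MeasureTheory.volume 0 1 := by
    apply ContinuousOn.intervalIntegrable
    rw [Set.uIcc_of_le zero_le_one]
    exact hc.mul hcont_rpow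
  have hint2 : IntervalIntegrable (fun p : ℝ => x ^ p) MeasureTheory.volume 0 1 := by
    apply ContinuousOn.intervalIntegrable
    rw [Set.uIcc_of_le zero_le_one]
    exact hcont_rpow
  have hsub1 : Set.uIcc (0:ℝ) d ⊆ Set.uIcc (0:ℝ) 1 := by
    rw [Set.uIcc_of_le hdpos.le, Set.uIcc_of_le zero_le_one]
    exact Set.Icc_subset_Icc le_rfl hd1
  have hsub2 : Set.uIcc d (1:ℝ) ⊆ Set.uIcc (0:ℝ) 1 := by
    rw [Set.uIcc_of_le hd1, Set.uIcc_of_le zero_le_one]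
    exact Set.Icc_subset_Icc hdpos.le le_rfl
  have hint1d : IntervalIntegrable (fun p => g p * x ^ p) MeasureTheory.volume 0 d :=
    hint1.mono_set hsub1
  have hint1d2 : IntervalIntegrable (fun p => g p * x ^ p) MeasureTheory.volume d 1 :=
    hint1.mono_set hsub2
  have hintc : IntervalIntegrable (fun p : ℝ => (1-ε') * x ^ p) MeasureTheory.volume 0 d := by
    apply ContinuousOn.intervalIntegrable
    have he : (fun p : ℝ => (1-ε') * x ^ p) = fun p => (1-ε') * Real.exp (c0 * p) := by
      funext p; rw [hxp]
    rw [he]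
    exact (continuous_const.mul
      (Real.continuous_exp.comp (continuous_const.mul continuous_id))).continuousOn
  have hI : ∀ a b : ℝ, (∫ p in a..b, x ^ p) = c0⁻¹ * (Real.exp (c0*b) - Real.exp (c0*a)) := by
    intro a b
    simp_rw [hxp]
    exact integral_exp_mul' c0 hc0neg.ne a b
  -- upper bound
  have hub : (∫ p in (0:ℝ)..1, g p * x ^ p) ≤ ∫ p in (0:ℝ)..1, x ^ p := by
    apply intervalIntegral.integral_mono_on zero_le_one hint1 hint2
    intro p hp
    have hxppos : 0 ≤ x ^ p := (Real.rpow_pos_of_pos hx0 p).le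
    calc g p * x^p ≤ 1 * x^p := mul_le_mul_of_nonneg_right (hle p hp) hxppos
    _ = x^p := one_mul _
  have hubval : (∫ p in (0:ℝ)..1, x ^ p) = (x - 1)/c0 := by
    rw [hI 0 1, mul_one, mul_zero, Real.exp_zero, Real.exp_log hx0]; ring
  -- lower bound
  have hsplit : (∫ p in (0:ℝ)..1, g p * x^p)
      = (∫ p in (0:ℝ)..d, g p * x^p) + ∫ p in d..1, g p * x^p :=
    (intervalIntegral.integral_add_adjacent_intervals hint1d hint1d2).symm
  have htail : 0 ≤ ∫ p in d..1, g p * x^p := by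
    apply intervalIntegral.integral_nonneg hd1
    intro u hu
    exact mul_nonneg (hge u ⟨hdpos.le.trans hu.1, hu.2⟩) (Real.rpow_pos_of_pos hx0 u).le
  have hlow1 : (∫ p in (0:ℝ)..d, (1-ε') * x^p) ≤ ∫ p in (0:ℝ)..d, g p * x^p := by
    apply intervalIntegral.integral_mono_on hdpos.le hintc hint1d
    intro p hp
    exact mul_le_mul_of_nonneg_right (hglb p hp) (Real.rpow_pos_of_pos hx0 p).le
  have hlowval : (∫ p in (0:ℝ)..d, (1-ε') * x ^ p) = (1-ε') * ((x^d - 1)/c0) := by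
    rw [intervalIntegral.integral_const_mul, hI 0 d, mul_zero, Real.exp_zero, hxp d]
    ring
  set L : ℝ := Real.log x⁻¹ * ∫ p in (0:ℝ)..1, g p * x ^ p with hLdef
  have hLup : L ≤ 1 - x := by
    rw [hLdef, hloginv]
    have h1 : (∫ p in (0:ℝ)..1, g p * x ^ p) ≤ (x-1)/c0 := hub.trans_eq hubval
    have h2 : (-c0) * (∫ p in (0:ℝ)..1, g p * x ^ p) ≤ (-c0) * ((x-1)/c0) :=
      mul_le_mul_of_nonneg_left h1 (by linarith)
    calc (-c0) * (∫ p in (0:ℝ)..1, g p * x ^ p) ≤ (-c0) * ((x-1)/c0) := h2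
      _ = 1 - x := by
        have hne : c0 ≠ 0 := hc0neg.ne
        field_simp
        ring
  have hLlow : (1-ε') * (1 - x^d) ≤ L := by
    rw [hLdef, hloginv]
    have h1 : (1-ε') * ((x^d - 1)/c0) ≤ ∫ p in (0:ℝ)..1, g p * x ^ p := by
      rw [hsplit]
      have := hlow1.trans_eq' hlowval
      linarith
    have h2 : (-c0) * ((1-ε') * ((x^d - 1)/c0)) ≤ (-c0) * ∫ p in (0:ℝ)..1, g p * x ^ p :=
      mul_le_mul_of_nonneg_left h1 (by linarith)
    have heq : (1-ε') * (1 - x^d) = (-c0) * ((1-ε') * ((x^d - 1)/c0)) := by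
      have hne : c0 ≠ 0 := hc0neg.ne
      field_simp
      ring
    rw [heq]
    exact h2
  rw [Real.dist_eq, abs_lt]
  have hd2 : 1 - x^d ≥ 1 - ε' := by linarith
  have hL1 : 1 - 2*ε' ≤ L := by nlinarith
  constructor
  · nlinarith
  · nlinarith


lemma integrand_bounds {m c p : ℝ} (hm : 1 ≤ m) (hc : 2 ≤ c) (hp : 0 ≤ p) (hp1 : p ≤ 1) :
    (c*m)⁻¹ * (phi p / (1+p) * (m/c)^p)
      ≤ Real.Gamma (c - p) / Real.Gamma (c+1) * (Real.Gamma (m+p) / Real.Gamma (m+1))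
        / (Real.Gamma (1-p) * Real.Gamma (1+p))
    ∧ Real.Gamma (c - p) / Real.Gamma (c+1) * (Real.Gamma (m+p) / Real.Gamma (m+1))
        / (Real.Gamma (1-p) * Real.Gamma (1+p))
      ≤ (c*m)⁻¹ * (phi p * (m/(c-1))^p) := by
  have hm0 : (0:ℝ) < m := by linarith
  have hc0 : (0:ℝ) < c := by linarith
  have hc1 : (1:ℝ) < c := by linarith
  have hcp : 0 < c - p := by linarith
  have hmp0 : 0 < m + p := by linarith
  have h1p : 0 < 1 + p := by linarith
  have hGc : 0 < Real.Gamma c := Real.Gamma_pos_of_pos hc0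
  have hGc1 : Real.Gamma (c+1) = c * Real.Gamma c := Real.Gamma_add_one hc0.ne'
  have hGcp : 0 < Real.Gamma (c-p) := Real.Gamma_pos_of_pos hcp
  have hGm : 0 < Real.Gamma m := Real.Gamma_pos_of_pos hm0
  have hGm1 : Real.Gamma (m+1) = m * Real.Gamma m := Real.Gamma_add_one hm0.ne'
  have hGmp : 0 < Real.Gamma (m+p) := Real.Gamma_pos_of_pos hmp0
  have hphi : 0 ≤ phi p := phi_nonneg hp hp1
  set A : ℝ := Real.Gamma (c - p) / Real.Gamma (c+1) with hA
  set B : ℝ := Real.Gamma (m+p) / Real.Gamma (m+1) with hB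
  have hApos : 0 < A := by rw [hA, hGc1]; positivity
  have hBpos : 0 < B := by rw [hB, hGm1]; positivity
  -- A upper bound
  have hAup : A ≤ (c-1)^(-p) / c := by
    rw [hA, hGc1, div_le_div_iff₀ (by positivity) hc0]
    calc Real.Gamma (c-p) * c ≤ Real.Gamma c * (c-1)^(-p) * c :=
          mul_le_mul_of_nonneg_right (gB3 hc1 hp hp1) hc0.le
      _ = (c-1)^(-p) * (c * Real.Gamma c) := by ring
  -- A lower bound
  have h4 : Real.Gamma c ≤ Real.Gamma (c-p) * c^p := by
    calc Real.Gamma c ≤ Real.Gamma (c-p) * (c-p)^p := gB4 hc1 hp hp1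
      _ ≤ Real.Gamma (c-p) * c^p :=
          mul_le_mul_of_nonneg_left (Real.rpow_le_rpow hcp.le (by linarith) hp) hGcp.le
  have h5 : Real.Gamma c * c^(-p) ≤ Real.Gamma (c-p) := by
    calc Real.Gamma c * c^(-p) ≤ Real.Gamma (c-p) * c^p * c^(-p) :=
          mul_le_mul_of_nonneg_right h4 (Real.rpow_nonneg hc0.le (-p))
      _ = Real.Gamma (c-p) * (c^p * c^(-p)) := by ring
      _ = Real.Gamma (c-p) := by
          rw [← Real.rpow_add hc0, add_neg_cancel, Real.rpow_zero, mul_one]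
  have hAlo : c^(-p)/c ≤ A := by
    rw [hA, hGc1, div_le_div_iff₀ hc0 (by positivity)]
    calc c^(-p) * (c * Real.Gamma c) = Real.Gamma c * c^(-p) * c := by ring
      _ ≤ Real.Gamma (c-p) * c := mul_le_mul_of_nonneg_right h5 hc0.le
  -- B upper bound
  have hBup : B ≤ m^p / m := by
    rw [hB, hGm1, div_le_div_iff₀ (by positivity) hm0]
    calc Real.Gamma (m+p) * m ≤ Real.Gamma m * m^p * m :=
          mul_le_mul_of_nonneg_right (gB1 hm0 hp hp1) hm0.le
      _ = m^p * (m * Real.Gamma m) := by ring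
  -- B lower bound
  have hBlo1 : ((m+p)^(1-p))⁻¹ ≤ B := by
    rw [hB, inv_eq_one_div, div_le_div_iff₀ (by positivity) (by rw [hGm1]; positivity)]
    calc 1 * Real.Gamma (m+1) = Real.Gamma (m+1) := one_mul _
      _ ≤ Real.Gamma (m+p) * (m+p)^(1-p) := gB2 hm0 hp hp1
  have hBlo2 : m^p/(m*(1+p)) ≤ ((m+p)^(1-p))⁻¹ := by
    rw [inv_eq_one_div, div_le_div_iff₀ (by positivity) (by positivity)]
    calc m^p * (m+p)^(1-p) = m^p * ((m+p) * (m+p)^(-p)) := by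
          rw [show (1:ℝ)-p = 1 + (-p) by ring, Real.rpow_add hmp0, Real.rpow_one]
      _ ≤ m^p * ((m+p) * m^(-p)) := by
          apply mul_le_mul_of_nonneg_left _ (Real.rpow_nonneg hm0.le p)
          exact mul_le_mul_of_nonneg_left
            (Real.rpow_le_rpow_of_nonpos hm0 (by linarith) (neg_nonpos.2 hp)) hmp0.le
      _ = m^p * m^(-p) * (m+p) := by ring
      _ = m + p := by rw [← Real.rpow_add hm0, add_neg_cancel, Real.rpow_zero, one_mul]
      _ ≤ 1 * (m * (1+p)) := by nlinarith
  have hBlo : m^p/(m*(1+p)) ≤ B := hBlo2.trans hBlo1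
  -- rewrite the integrand
  have hint : A * B / (Real.Gamma (1-p) * Real.Gamma (1+p)) = A * B * phi p := by
    rw [div_eq_mul_inv]; rfl
  have hw1 : 0 ≤ m^p/(m*(1+p)) := div_nonneg (Real.rpow_nonneg hm0.le p) (by nlinarith)
  have hABlo : (c^(-p)/c) * (m^p/(m*(1+p))) ≤ A * B :=
    mul_le_mul hAlo hBlo hw1 hApos.le
  have hABup : A * B ≤ ((c-1)^(-p)/c) * (m^p/m) :=
    mul_le_mul hAup hBup hBpos.le
      (div_nonneg (Real.rpow_nonneg (by linarith : (0:ℝ) ≤ c - 1) (-p)) hc0.le)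
  constructor
  · rw [hint]
    have h6 : (c*m)⁻¹ * (phi p / (1+p) * (m/c)^p)
        = ((c^(-p)/c) * (m^p/(m*(1+p)))) * phi p := by
      rw [Real.div_rpow hm0.le hc0.le, Real.rpow_neg hc0.le]
      field_simp
    rw [h6]
    exact mul_le_mul_of_nonneg_right hABlo hphi
  · rw [hint]
    have h7 : (c*m)⁻¹ * (phi p * (m/(c-1))^p)
        = (((c-1)^(-p)/c) * (m^p/m)) * phi p := by
      rw [Real.div_rpow hm0.le (by linarith : (0:ℝ) ≤ c - 1), Real.rpow_neg (by linarith : (0:ℝ) ≤ c - 1)]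
      field_simp
    rw [h7]
    exact mul_le_mul_of_nonneg_right hABup hphi


lemma continuous_rpow_const {x : ℝ} (hx : 0 < x) : Continuous (fun p : ℝ => x ^ p) := by
  have he : (fun p : ℝ => x ^ p) = fun p => Real.exp (Real.log x * p) :=
    funext fun p => Real.rpow_def_of_pos hx p
  rw [he]; exact Real.continuous_exp.comp (continuous_const.mul continuous_id)

lemma continuousOn_I {m c : ℝ} (hm : 1 ≤ m) (hc : 2 ≤ c) :
    ContinuousOn (fun p : ℝ => Real.Gamma (c - p) / Real.Gamma (c+1) *
      (Real.Gamma (m+p) / Real.Gamma (m+1)) / (Real.Gamma (1-p) * Real.Gamma (1+p)))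
      (Set.Icc 0 1) := by
  have h1 : ContinuousOn (fun p : ℝ => Real.Gamma (c - p)) (Set.Icc 0 1) := by
    intro p hp
    have hsub : ContinuousAt (fun p : ℝ => c - p) p := (by fun_prop : Continuous fun p : ℝ => c - p).continuousAt
    exact ((continuousAt_Gamma' (by linarith [hp.2] : (0:ℝ) < c - p)).comp hsub).continuousWithinAt
  have h2 : ContinuousOn (fun p : ℝ => Real.Gamma (m + p)) (Set.Icc 0 1) := by
    intro p hp
    have hadd : ContinuousAt (fun p : ℝ => m + p) p := (by fun_prop : Continuous fun p : ℝ => m + p).continuousAt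
    exact ((continuousAt_Gamma' (by linarith [hp.1] : (0:ℝ) < m + p)).comp hadd).continuousWithinAt
  have key : (fun p : ℝ => Real.Gamma (c - p) / Real.Gamma (c+1) *
      (Real.Gamma (m+p) / Real.Gamma (m+1)) / (Real.Gamma (1-p) * Real.Gamma (1+p)))
      = fun p => (Real.Gamma (c - p) / Real.Gamma (c+1)) *
        (Real.Gamma (m+p) / Real.Gamma (m+1)) * phi p :=
    funext fun p => by rw [div_eq_mul_inv]; rfl
  rw [key]
  exact ((h1.div_const _).mul (h2.div_const _)).mul continuousOn_phi

lemma L1_bounds_s12 {n bn : ℕ} (hbn : 2 ≤ (bn:ℝ)) (hM : 1 ≤ (n:ℝ) - (bn:ℝ)) :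
    ((bn:ℝ) * ((n:ℝ)-(bn:ℝ)))⁻¹ *
        (∫ p in (0:ℝ)..1, phi p / (1+p) * (((n:ℝ)-(bn:ℝ))/(bn:ℝ))^p)
      ≤ L1 n bn
  ∧ L1 n bn ≤ ((bn:ℝ) * ((n:ℝ)-(bn:ℝ)))⁻¹ *
        (∫ p in (0:ℝ)..1, phi p * (((n:ℝ)-(bn:ℝ))/((bn:ℝ)-1))^p) := by
  set c : ℝ := (bn:ℝ) with hcdef
  set m : ℝ := (n:ℝ) - (bn:ℝ) with hmdef
  have hm0 : (0:ℝ) < m := by linarith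
  have hc0 : (0:ℝ) < c := by linarith
  have hc10 : (0:ℝ) < c - 1 := by linarith
  have hx0 : (0:ℝ) < m / c := by positivity
  have hy0 : (0:ℝ) < m / (c-1) := by positivity
  have hg1 : ContinuousOn (fun p : ℝ => phi p / (1+p)) (Set.Icc 0 1) := by
    apply ContinuousOn.div continuousOn_phi (by fun_prop : Continuous fun p : ℝ => 1 + p).continuousOn
    intro p hp; nlinarith [hp.1]
  have hcontlo : ContinuousOn (fun p : ℝ => (c*m)⁻¹ * (phi p / (1+p) * (m/c)^p)) (Set.Icc 0 1) :=
    continuousOn_const.mul (hg1.mul (continuous_rpow_const hx0).continuousOn)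
  have hcontup : ContinuousOn (fun p : ℝ => (c*m)⁻¹ * (phi p * (m/(c-1))^p)) (Set.Icc 0 1) :=
    continuousOn_const.mul (continuousOn_phi.mul (continuous_rpow_const hy0).continuousOn)
  have hcontI := continuousOn_I hM hbn
  have hintlo : IntervalIntegrable (fun p : ℝ => (c*m)⁻¹ * (phi p / (1+p) * (m/c)^p))
      MeasureTheory.volume 0 1 := by
    apply ContinuousOn.intervalIntegrable; rwa [Set.uIcc_of_le zero_le_one]
  have hintup : IntervalIntegrable (fun p : ℝ => (c*m)⁻¹ * (phi p * (m/(c-1))^p))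
      MeasureTheory.volume 0 1 := by
    apply ContinuousOn.intervalIntegrable; rwa [Set.uIcc_of_le zero_le_one]
  have hintI : IntervalIntegrable (fun p : ℝ => Real.Gamma (c - p) / Real.Gamma (c+1) *
      (Real.Gamma (m+p) / Real.Gamma (m+1)) / (Real.Gamma (1-p) * Real.Gamma (1+p)))
      MeasureTheory.volume 0 1 := by
    apply ContinuousOn.intervalIntegrable; rwa [Set.uIcc_of_le zero_le_one]
  have hL1 : L1 n bn = ∫ p in (0:ℝ)..1, Real.Gamma (c - p) / Real.Gamma (c+1) *
      (Real.Gamma (m+p) / Real.Gamma (m+1)) / (Real.Gamma (1-p) * Real.Gamma (1+p)) := rfl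
  constructor
  · rw [hL1, ← intervalIntegral.integral_const_mul]
    apply intervalIntegral.integral_mono_on zero_le_one hintlo hintI
    intro p hp
    exact (integrand_bounds hM hbn hp.1 hp.2).1
  · rw [hL1, ← intervalIntegral.integral_const_mul]
    apply intervalIntegral.integral_mono_on zero_le_one hintI hintup
    intro p hp
    exact (integrand_bounds hM hbn hp.1 hp.2).2

/-- If `1 ≤ b_n ≤ n-1` and `(n-b_n)/n → 0`, then
`(n-b_n) log(n/(n-b_n)) · n L₁(n, b_n) → 1`; equivalently, with
`E[SFS_{n,b}] = θ n L₁(n,b)`, `(n-b) log(n/(n-b)) · E[SFS_{n,b}] → θ`. -/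
theorem stmt12 (θ : ℝ) (b : ℕ → ℕ)
    (hb : ∀ᶠ n : ℕ in Filter.atTop, 1 ≤ b n ∧ b n ≤ n - 1)
    (h0 : Filter.Tendsto (fun n : ℕ => ((n : ℝ) - (b n : ℝ)) / (n : ℝ))
      Filter.atTop (nhds 0)) :
    Filter.Tendsto (fun n : ℕ =>
        ((n : ℝ) - (b n : ℝ)) * Real.log ((n : ℝ) / ((n : ℝ) - (b n : ℝ))) *
          ((n : ℝ) * L1 n (b n)))
      Filter.atTop (nhds 1) ∧
    Filter.Tendsto (fun n : ℕ =>
        ((n : ℝ) - (b n : ℝ)) * Real.log ((n : ℝ) / ((n : ℝ) - (b n : ℝ))) *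
          (θ * (n : ℝ) * L1 n (b n)))
      Filter.atTop (nhds θ) := by
  -- g₁ properties
  have g1cont : ContinuousOn (fun p : ℝ => phi p / (1+p)) (Set.Icc 0 1) := by
    apply ContinuousOn.div continuousOn_phi
      (by fun_prop : Continuous fun p : ℝ => 1 + p).continuousOn
    intro p hp; nlinarith [hp.1]
  have g1ge : ∀ p ∈ Set.Icc (0:ℝ) 1, 0 ≤ phi p / (1+p) := fun p hp =>
    div_nonneg (phi_nonneg hp.1 hp.2) (by nlinarith [hp.1])
  have g1le : ∀ p ∈ Set.Icc (0:ℝ) 1, phi p / (1+p) ≤ 1 := fun p hp => by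
    rw [div_le_one (by nlinarith [hp.1] : (0:ℝ) < 1 + p)]
    nlinarith [phi_le_one hp.1 hp.2, hp.1]
  have g1zero : phi 0 / (1+0) = 1 := by rw [phi_zero]; norm_num
  have K1filter := key_limit (fun p => phi p / (1+p)) g1cont g1ge g1le g1zero
  have K2filter := key_limit phi continuousOn_phi (fun p hp => phi_nonneg hp.1 hp.2)
    (fun p hp => phi_le_one hp.1 hp.2) phi_zero
  -- eventual ℕ facts
  have hMB : ∀ᶠ n : ℕ in atTop, 1 ≤ (n:ℝ) - (b n:ℝ) ∧ (0:ℝ) < n ∧ (1:ℝ) ≤ (b n:ℝ) := by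
    filter_upwards [hb] with n hn
    have h1 : b n + 1 ≤ n := by omega
    have h2 : 1 ≤ b n := hn.1
    refine ⟨?_, ?_, ?_⟩
    · have : ((b n:ℕ):ℝ) + 1 ≤ (n:ℝ) := by exact_mod_cast h1
      linarith
    · have : (1:ℕ) ≤ n := by omega
      exact_mod_cast Nat.lt_of_lt_of_le Nat.zero_lt_one this
    · exact_mod_cast h2
  -- Bb/n → 1
  have hBn : Tendsto (fun n : ℕ => (b n:ℝ)/(n:ℝ)) atTop (nhds 1) := by
    have h := h0.const_sub 1
    rw [sub_zero] at h
    apply h.congr'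
    filter_upwards [hMB] with n hn
    have hne : (n:ℝ) ≠ 0 := ne_of_gt hn.2.1
    field_simp
    ring
  have hnB : Tendsto (fun n : ℕ => (n:ℝ)/(b n:ℝ)) atTop (nhds 1) := by
    have h := hBn.inv₀ one_ne_zero
    rw [inv_one] at h
    exact h.congr (fun n => inv_div _ _)
  have hBtop : Tendsto (fun n : ℕ => (b n:ℝ)) atTop atTop := by
    apply tendsto_atTop_mono' atTop ?_
      ((tendsto_natCast_atTop_atTop (R := ℝ)).atTop_div_const two_pos)
    filter_upwards [hBn.eventually (eventually_ge_nhds (by norm_num : (1:ℝ)/2 < 1)), hMB]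
      with n hn hn2
    have hne : (0:ℝ) < (n:ℝ) := hn2.2.1
    have h2 := (le_div_iff₀ hne).1 hn
    calc (n:ℝ)/2 = (1/2) * n := by ring
      _ ≤ (b n:ℝ) := by linarith [h2]
  have hB2ev : ∀ᶠ n : ℕ in atTop, (2:ℝ) ≤ (b n:ℝ) := hBtop.eventually_ge_atTop 2
  -- x → 0 within Ioi
  have hx0 : Tendsto (fun n : ℕ => ((n:ℝ)-(b n:ℝ))/(b n:ℝ)) atTop (nhds 0) := by
    have h := h0.mul hnB
    rw [zero_mul] at h
    apply h.congr'
    filter_upwards [hMB] with n hn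
    have h1 : (n:ℝ) ≠ 0 := ne_of_gt hn.2.1
    have h2 : (b n:ℝ) ≠ 0 := by linarith [hn.2.2]
    field_simp
  have hxpos : ∀ᶠ n : ℕ in atTop, ((n:ℝ)-(b n:ℝ))/(b n:ℝ) ∈ Set.Ioi (0:ℝ) := by
    filter_upwards [hMB] with n hn
    have : (0:ℝ) < (b n:ℝ) := by linarith [hn.2.2]
    exact Set.mem_Ioi.2 (div_pos (by linarith [hn.1]) this)
  have hxIoi : Tendsto (fun n : ℕ => ((n:ℝ)-(b n:ℝ))/(b n:ℝ)) atTop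
      (nhdsWithin 0 (Set.Ioi 0)) := tendsto_nhdsWithin_iff.mpr ⟨hx0, hxpos⟩
  -- Bb/(Bb-1) → 1
  have hB1top : Tendsto (fun n : ℕ => (b n:ℝ) - 1) atTop atTop :=
    (tendsto_atTop_add_const_right atTop (-1 : ℝ) hBtop).congr (fun n => by ring)
  have hq : Tendsto (fun n : ℕ => (b n:ℝ)/((b n:ℝ)-1)) atTop (nhds 1) := by
    have h := hB1top.inv_tendsto_atTop.const_add 1
    rw [add_zero] at h
    apply h.congr'
    filter_upwards [hB1top.eventually_ge_atTop 1] with n hn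
    have hne : (b n:ℝ) - 1 ≠ 0 := by linarith
    simp only [Pi.inv_apply]
    field_simp
    ring
  have hy0 : Tendsto (fun n : ℕ => ((n:ℝ)-(b n:ℝ))/((b n:ℝ)-1)) atTop (nhds 0) := by
    have h := hx0.mul hq
    rw [zero_mul] at h
    apply h.congr'
    filter_upwards [hB1top.eventually_ge_atTop 1, hMB] with n hn hn2
    have h2 : (b n:ℝ) ≠ 0 := by linarith [hn2.2.2]
    have h3 : (b n:ℝ) - 1 ≠ 0 := by linarith
    field_simp
  have hypos : ∀ᶠ n : ℕ in atTop, ((n:ℝ)-(b n:ℝ))/((b n:ℝ)-1) ∈ Set.Ioi (0:ℝ) := by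
    filter_upwards [hB1top.eventually_ge_atTop 1, hMB] with n hn hn2
    exact Set.mem_Ioi.2 (div_pos (by linarith [hn2.1]) (by linarith))
  have hyIoi : Tendsto (fun n : ℕ => ((n:ℝ)-(b n:ℝ))/((b n:ℝ)-1)) atTop
      (nhdsWithin 0 (Set.Ioi 0)) := tendsto_nhdsWithin_iff.mpr ⟨hy0, hypos⟩
  have hny : Tendsto (fun n : ℕ => (n:ℝ)/((b n:ℝ)-1)) atTop (nhds 1) := by
    have h := hnB.mul hq
    rw [mul_one] at h
    apply h.congr'
    filter_upwards [hB1top.eventually_ge_atTop 1, hMB] with n hn hn2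
    have h2 : (b n:ℝ) ≠ 0 := by linarith [hn2.2.2]
    have h3 : (b n:ℝ) - 1 ≠ 0 := by linarith
    field_simp
  -- log facts
  have hlogBM : Tendsto (fun n : ℕ => Real.log ((b n:ℝ)/((n:ℝ)-(b n:ℝ)))) atTop atTop := by
    have h := Real.tendsto_log_atTop.comp (tendsto_inv_nhdsGT_zero.comp hxIoi)
    apply h.congr
    intro n
    simp only [Function.comp_apply, inv_div]
  have hlogB1M : Tendsto (fun n : ℕ => Real.log (((b n:ℝ)-1)/((n:ℝ)-(b n:ℝ)))) atTop atTop := by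
    have h := Real.tendsto_log_atTop.comp (tendsto_inv_nhdsGT_zero.comp hyIoi)
    apply h.congr
    intro n
    simp only [Function.comp_apply, inv_div]
  have hlognB : Tendsto (fun n : ℕ => Real.log ((n:ℝ)/(b n:ℝ))) atTop (nhds 0) := by
    have h := (Real.continuousAt_log one_ne_zero).tendsto.comp hnB
    rwa [Real.log_one] at h
  have hlognB1 : Tendsto (fun n : ℕ => Real.log ((n:ℝ)/((b n:ℝ)-1))) atTop (nhds 0) := by
    have h := (Real.continuousAt_log one_ne_zero).tendsto.comp hny
    rwa [Real.log_one] at h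
  have hr1 : Tendsto (fun n : ℕ => Real.log ((n:ℝ)/(b n:ℝ)) /
      Real.log ((b n:ℝ)/((n:ℝ)-(b n:ℝ))) + 1) atTop (nhds 1) := by
    have h := (hlognB.div_atTop hlogBM).add (tendsto_const_nhds (x := (1:ℝ)))
    rwa [zero_add] at h
  have hr2 : Tendsto (fun n : ℕ => Real.log ((n:ℝ)/((b n:ℝ)-1)) /
      Real.log (((b n:ℝ)-1)/((n:ℝ)-(b n:ℝ))) + 1) atTop (nhds 1) := by
    have h := (hlognB1.div_atTop hlogB1M).add (tendsto_const_nhds (x := (1:ℝ)))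
    rwa [zero_add] at h
  have K1n : Tendsto (fun n : ℕ => Real.log ((b n:ℝ)/((n:ℝ)-(b n:ℝ))) *
      ∫ p in (0:ℝ)..1, phi p / (1+p) * ((((n:ℝ)-(b n:ℝ))/(b n:ℝ)))^p) atTop (nhds 1) := by
    have h : Tendsto (fun n : ℕ => Real.log ((((n:ℝ)-(b n:ℝ))/(b n:ℝ))⁻¹) *
        ∫ p in (0:ℝ)..1, phi p / (1+p) * ((((n:ℝ)-(b n:ℝ))/(b n:ℝ)))^p) atTop (nhds 1) :=
      K1filter.comp hxIoi
    exact h.congr (fun n => by rw [inv_div])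
  have K2n : Tendsto (fun n : ℕ => Real.log (((b n:ℝ)-1)/((n:ℝ)-(b n:ℝ))) *
      ∫ p in (0:ℝ)..1, phi p * ((((n:ℝ)-(b n:ℝ))/((b n:ℝ)-1)))^p) atTop (nhds 1) := by
    have h : Tendsto (fun n : ℕ => Real.log ((((n:ℝ)-(b n:ℝ))/((b n:ℝ)-1))⁻¹) *
        ∫ p in (0:ℝ)..1, phi p * ((((n:ℝ)-(b n:ℝ))/((b n:ℝ)-1)))^p) atTop (nhds 1) :=
      K2filter.comp hyIoi
    exact h.congr (fun n => by rw [inv_div])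
  -- the two bounding sequences
  have hLo : Tendsto (fun n : ℕ => ((n:ℝ)/(b n:ℝ)) *
      ((Real.log ((n:ℝ)/(b n:ℝ)) / Real.log ((b n:ℝ)/((n:ℝ)-(b n:ℝ))) + 1) *
        (Real.log ((b n:ℝ)/((n:ℝ)-(b n:ℝ))) *
          ∫ p in (0:ℝ)..1, phi p / (1+p) * ((((n:ℝ)-(b n:ℝ))/(b n:ℝ)))^p)))
      atTop (nhds 1) := by
    have h := hnB.mul (hr1.mul K1n)
    rw [show (1:ℝ)*(1*1) = 1 by norm_num] at h
    exact h
  have hUp : Tendsto (fun n : ℕ => ((n:ℝ)/((b n:ℝ)-1)) *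
      ((Real.log ((n:ℝ)/((b n:ℝ)-1)) / Real.log (((b n:ℝ)-1)/((n:ℝ)-(b n:ℝ))) + 1) *
        (Real.log (((b n:ℝ)-1)/((n:ℝ)-(b n:ℝ))) *
          ∫ p in (0:ℝ)..1, phi p * ((((n:ℝ)-(b n:ℝ))/((b n:ℝ)-1)))^p)))
      atTop (nhds 1) := by
    have h := hny.mul (hr2.mul K2n)
    rw [show (1:ℝ)*(1*1) = 1 by norm_num] at h
    exact h
  have main : Tendsto (fun n : ℕ =>
      ((n : ℝ) - (b n : ℝ)) * Real.log ((n : ℝ) / ((n : ℝ) - (b n : ℝ))) *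
        ((n : ℝ) * L1 n (b n))) atTop (nhds 1) := by
    apply tendsto_of_tendsto_of_tendsto_of_le_of_le' hLo hUp
    · -- lower bound
      filter_upwards [hMB, hB2ev, hlogBM.eventually_ge_atTop 1] with n hn hB2 hl1
      set m : ℝ := (n:ℝ) - (b n:ℝ) with hmdef
      set c : ℝ := (b n:ℝ) with hcdef
      have hm1 : 1 ≤ m := hn.1
      have hm0 : (0:ℝ) < m := by linarith
      have hc0 : (0:ℝ) < c := by linarith
      have hn0 : (0:ℝ) < (n:ℝ) := hn.2.1
      have hLne : Real.log (c/m) ≠ 0 := by linarith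
      have hlog_eq : Real.log ((n:ℝ)/c) + Real.log (c/m) = Real.log ((n:ℝ)/m) := by
        rw [← Real.log_mul (by positivity) (by positivity)]
        congr 1
        field_simp
      have hlognonneg : 0 ≤ Real.log ((n:ℝ)/m) := by
        apply Real.log_nonneg
        rw [le_div_iff₀ hm0]
        have : c + 1 ≤ (n:ℝ) + c := by linarith
        linarith [hB2]
      have hC : 0 ≤ m * Real.log ((n:ℝ)/m) * (n:ℝ) := by positivity
      have hL := (L1_bounds_s12 hB2 hm1).1
      set J1 : ℝ := ∫ p in (0:ℝ)..1, phi p / (1+p) * (m/c)^p with hJ1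
      calc ((n:ℝ)/c) * ((Real.log ((n:ℝ)/c) / Real.log (c/m) + 1) *
            (Real.log (c/m) * J1))
          = (m * Real.log ((n:ℝ)/m) * (n:ℝ)) * ((c*m)⁻¹ * J1) := by
            rw [← hlog_eq]
            set a := Real.log ((n:ℝ)/c) with hadef
            set L := Real.log (c/m) with hLdef
            field_simp
        _ ≤ (m * Real.log ((n:ℝ)/m) * (n:ℝ)) * L1 n (b n) :=
            mul_le_mul_of_nonneg_left hL hC
        _ = m * Real.log ((n:ℝ)/m) * ((n:ℝ) * L1 n (b n)) := by ring
    · -- upper bound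
      filter_upwards [hMB, hB2ev, hlogB1M.eventually_ge_atTop 1] with n hn hB2 hl1
      set m : ℝ := (n:ℝ) - (b n:ℝ) with hmdef
      set c : ℝ := (b n:ℝ) with hcdef
      have hm1 : 1 ≤ m := hn.1
      have hm0 : (0:ℝ) < m := by linarith
      have hc0 : (0:ℝ) < c := by linarith
      have hc10 : (0:ℝ) < c - 1 := by linarith
      have hn0 : (0:ℝ) < (n:ℝ) := hn.2.1
      have hLne : Real.log ((c-1)/m) ≠ 0 := by linarith
      have hlog_eq : Real.log ((n:ℝ)/(c-1)) + Real.log ((c-1)/m) = Real.log ((n:ℝ)/m) := by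
        rw [← Real.log_mul (by positivity) (by positivity)]
        congr 1
        field_simp
      have hlognonneg : 0 ≤ Real.log ((n:ℝ)/m) := by
        apply Real.log_nonneg
        rw [le_div_iff₀ hm0]
        linarith [hB2]
      have hC : 0 ≤ m * Real.log ((n:ℝ)/m) * (n:ℝ) := by positivity
      have hL := (L1_bounds_s12 hB2 hm1).2
      set J2 : ℝ := ∫ p in (0:ℝ)..1, phi p * (m/(c-1))^p with hJ2
      have hJ2nonneg : 0 ≤ J2 := by
        rw [hJ2]
        apply intervalIntegral.integral_nonneg zero_le_one
        intro u hu
        exact mul_nonneg (phi_nonneg hu.1 hu.2) (Real.rpow_nonneg (by positivity) u)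
      calc m * Real.log ((n:ℝ)/m) * ((n:ℝ) * L1 n (b n))
          = (m * Real.log ((n:ℝ)/m) * (n:ℝ)) * L1 n (b n) := by ring
        _ ≤ (m * Real.log ((n:ℝ)/m) * (n:ℝ)) * ((c*m)⁻¹ * J2) :=
            mul_le_mul_of_nonneg_left hL hC
        _ = ((n:ℝ)/c) * (Real.log ((n:ℝ)/m) * J2) := by
            set lg := Real.log ((n:ℝ)/m) with hlgdef
            field_simp
        _ ≤ ((n:ℝ)/(c-1)) * (Real.log ((n:ℝ)/m) * J2) := by
            apply mul_le_mul_of_nonneg_right _ (mul_nonneg hlognonneg hJ2nonneg)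
            exact div_le_div_of_nonneg_left hn0.le hc10 (by linarith)
        _ = ((n:ℝ)/(c-1)) * ((Real.log ((n:ℝ)/(c-1)) / Real.log ((c-1)/m) + 1) *
            (Real.log ((c-1)/m) * J2)) := by
            rw [← hlog_eq]
            set a := Real.log ((n:ℝ)/(c-1)) with hadef
            set L := Real.log ((c-1)/m) with hLdef
            field_simp
  refine ⟨main, ?_⟩
  have h := main.const_mul θ
  rw [mul_one] at h
  apply h.congr
  intro n
  ring
end
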